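/- arXiv:1708.07713 — 10 statements merged into one kernel-verified Lean document; each statement's English description precedes it below -/
import Mathlib

section
/- Let α ∈ ℝ, let G ⊆ H be an isometry-invariant open set with 0 ∉ G, and let ρ : G × H → ℝ satisfy ρ_g(r·h) = |r|^α·ρ_g(h) for every g ∈ G, h ∈ H and every nonzero r ∈ 𝔽. Then ρ is isometry-invariant if and only if there exists a function λ : (0,∞) × ℝ × ℝ → ℝ, written λ_r(p,q), such that: (1) λ_r(t·p, t·q) = t^α·λ_r(p,q) for all r > 0, p,q ∈ ℝ, t > 0; (2) λ_r(−p, q) = λ_r(p, −q) = λ_r(p, q) for all r > 0, p,q ∈ ℝ; and (3) ρ_g(h) = λ_{‖g‖}(|⟨h,g⟩|, √(‖h‖²·‖g‖² − |⟨h,g⟩|²)) for every g ∈ G and h ∈ H. -/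
open Submodule Module

section Aux

variable {𝕜 H : Type*} [RCLike 𝕜] [NormedAddCommGroup H] [InnerProductSpace 𝕜 H]

theorem aux_extend (W : Submodule 𝕜 H) [FiniteDimensional 𝕜 W] (T₀ : W ≃ₗᵢ[𝕜] W) :
    ∃ T : H →ₗᵢ[𝕜] H, ∀ x : W, T x = T₀ x := by
  haveI : CompleteSpace W := FiniteDimensional.complete 𝕜 W
  let P : H →ₗ[𝕜] W := (orthogonalProjection W : H →L[𝕜] W)
  let M : H →ₗ[𝕜] H := W.subtype ∘ₗ (T₀ : W →ₗ[𝕜] W) ∘ₗ P + (LinearMap.id - W.subtype ∘ₗ P)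
  have hM : ∀ x : H, M x = ↑(T₀ (P x)) + (x - ↑(P x)) := by
    intro x; simp [M, P]
  have hnorm : ∀ x : H, ‖M x‖ = ‖x‖ := by
    intro x
    have h2 : x - ↑(P x) ∈ Wᗮ := Submodule.sub_starProjection_mem_orthogonal (K := W) x
    have e1 : ‖M x‖ ^ 2 = ‖T₀ (P x)‖ ^ 2 + ‖x - ↑(P x)‖ ^ 2 := by
      rw [hM]
      simp only [pow_two]
      rw [norm_add_sq_eq_norm_sq_add_norm_sq_of_inner_eq_zero (𝕜 := 𝕜)]
      · rw [Submodule.norm_coe]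
      · exact Submodule.inner_right_of_mem_orthogonal (T₀ (P x)).2 h2
    have e2 : ‖x‖ ^ 2 = ‖(P x : H)‖ ^ 2 + ‖x - ↑(P x)‖ ^ 2 := by
      nth_rewrite 1 [show x = ↑(P x) + (x - ↑(P x)) by abel]
      simp only [pow_two]
      rw [norm_add_sq_eq_norm_sq_add_norm_sq_of_inner_eq_zero (𝕜 := 𝕜)]
      exact Submodule.inner_right_of_mem_orthogonal (P x).2 h2
    rw [← sq_eq_sq₀ (norm_nonneg _) (norm_nonneg _)]
    rw [e1, e2, T₀.norm_map, Submodule.norm_coe]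
  refine ⟨⟨M, hnorm⟩, fun w => ?_⟩
  have : P (w : H) = w := by simp [P]
  simp [LinearIsometry.coe_mk, hM, this]

theorem aux_onmap {k : ℕ} {v w : Fin k → H} (hv : Orthonormal 𝕜 v) (hw : Orthonormal 𝕜 w) :
    ∃ T : H →ₗᵢ[𝕜] H, ∀ i, T (v i) = w i := by
  classical
  set W : Submodule 𝕜 H := span 𝕜 (Set.range v ∪ Set.range w) with hW
  haveI : FiniteDimensional 𝕜 W :=
    FiniteDimensional.span_of_finite 𝕜 ((Set.finite_range v).union (Set.finite_range w))
  have hvW : ∀ i, v i ∈ W := fun i => subset_span (Or.inl ⟨i, rfl⟩)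
  have hwW : ∀ i, w i ∈ W := fun i => subset_span (Or.inr ⟨i, rfl⟩)
  set v' : Fin k → W := fun i => ⟨v i, hvW i⟩ with hv'def
  set w' : Fin k → W := fun i => ⟨w i, hwW i⟩ with hw'def
  have hv' : Orthonormal 𝕜 v' := by
    constructor
    · intro i; have := hv.1 i; simpa [v', Submodule.norm_coe] using this
    · intro i j hij; have := hv.2 hij; simpa [v', Submodule.coe_inner] using this
  have hw' : Orthonormal 𝕜 w' := by
    constructor
    · intro i; have := hw.1 i; simpa [w', Submodule.norm_coe] using this
    · intro i j hij; have := hw.2 hij; simpa [w', Submodule.coe_inner] using this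
  set n := finrank 𝕜 W with hn
  have hkn : k ≤ n := by
    simpa using hv'.linearIndependent.fintype_card_le_finrank
  set s : Set (Fin n) := {i | (i : ℕ) < k} with hs
  set v'' : Fin n → W := fun i => if h : (i : ℕ) < k then v' ⟨i, h⟩ else 0 with hv''def
  set w'' : Fin n → W := fun i => if h : (i : ℕ) < k then w' ⟨i, h⟩ else 0 with hw''def
  have hv'' : Orthonormal 𝕜 (s.restrict v'') := by
    have : s.restrict v'' = v' ∘ (fun i : s => (⟨(i : Fin n), i.2⟩ : Fin k)) := by
      funext i; exact dif_pos i.2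
    rw [this]
    exact hv'.comp _ (fun a b hab => by
      simpa [Subtype.ext_iff, Fin.ext_iff] using hab)
  have hw'' : Orthonormal 𝕜 (s.restrict w'') := by
    have : s.restrict w'' = w' ∘ (fun i : s => (⟨(i : Fin n), i.2⟩ : Fin k)) := by
      funext i; exact dif_pos i.2
    rw [this]
    exact hw'.comp _ (fun a b hab => by
      simpa [Subtype.ext_iff, Fin.ext_iff] using hab)
  obtain ⟨b, hb⟩ := hv''.exists_orthonormalBasis_extension_of_card_eq (by simp [hn])
  obtain ⟨c, hc⟩ := hw''.exists_orthonormalBasis_extension_of_card_eq (by simp [hn])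
  set T₀ : W ≃ₗᵢ[𝕜] W := b.repr.trans c.repr.symm with hT₀
  have hT₀b : ∀ i, T₀ (b i) = c i := by
    intro i
    simp [hT₀, b.repr_self, c.repr_symm_single]
  obtain ⟨T, hT⟩ := aux_extend W T₀
  refine ⟨T, fun i => ?_⟩
  have hi : (⟨(i : ℕ), lt_of_lt_of_le i.2 hkn⟩ : Fin n) ∈ s := by simpa [hs] using i.2
  have h1 : b ⟨(i : ℕ), lt_of_lt_of_le i.2 hkn⟩ = v' i := by
    rw [hb _ hi]; simp [v'', dif_pos i.2]
  have h2 : c ⟨(i : ℕ), lt_of_lt_of_le i.2 hkn⟩ = w' i := by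
    rw [hc _ hi]; simp [w'', dif_pos i.2]
  have := hT₀b ⟨(i : ℕ), lt_of_lt_of_le i.2 hkn⟩
  rw [h1, h2] at this
  have h3 := hT (v' i)
  rw [this] at h3
  simpa [v', w'] using h3

theorem aux_pair {g g' m m' : H} (hg0 : g ≠ 0) (hgn : ‖g'‖ = ‖g‖) (hmn : ‖m'‖ = ‖m‖)
    (hgm : (inner 𝕜 g m : 𝕜) = 0) (hgm' : (inner 𝕜 g' m' : 𝕜) = 0) :
    ∃ T : H →ₗᵢ[𝕜] H, T g = g' ∧ T m = m' := by
  have hr : (0:ℝ) < ‖g‖ := norm_pos_iff.mpr hg0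
  have hrk : ((‖g‖ : ℝ) : 𝕜) ≠ 0 := by simpa using hr.ne'
  have n1 : ‖((‖g‖ : ℝ) : 𝕜)⁻¹ • g‖ = 1 := by
    rw [norm_smul, norm_inv, RCLike.norm_ofReal, abs_of_pos hr, inv_mul_cancel₀ hr.ne']
  have n1' : ‖((‖g‖ : ℝ) : 𝕜)⁻¹ • g'‖ = 1 := by
    rw [norm_smul, norm_inv, RCLike.norm_ofReal, abs_of_pos hr, hgn, inv_mul_cancel₀ hr.ne']
  by_cases hm : m = 0
  · have hm' : m' = 0 := by
      rw [← norm_eq_zero, hmn, hm, norm_zero]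
    have hvo : Orthonormal 𝕜 (fun _ : Fin 1 => ((‖g‖ : ℝ) : 𝕜)⁻¹ • g) :=
      ⟨fun _ => n1, fun i j hij => absurd (Subsingleton.elim i j) hij⟩
    have hwo : Orthonormal 𝕜 (fun _ : Fin 1 => ((‖g‖ : ℝ) : 𝕜)⁻¹ • g') :=
      ⟨fun _ => n1', fun i j hij => absurd (Subsingleton.elim i j) hij⟩
    obtain ⟨T, hT⟩ := aux_onmap hvo hwo
    refine ⟨T, ?_, by simp [hm, hm']⟩
    have := hT 0
    simp only [map_smul] at this
    have h2 := congrArg (fun x => ((‖g‖ : ℝ) : 𝕜) • x) this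
    simpa [smul_smul, mul_inv_cancel₀ hrk] using h2
  · have hmr : (0:ℝ) < ‖m‖ := norm_pos_iff.mpr hm
    have hmk : ((‖m‖ : ℝ) : 𝕜) ≠ 0 := by simpa using hmr.ne'
    have n2 : ‖((‖m‖ : ℝ) : 𝕜)⁻¹ • m‖ = 1 := by
      rw [norm_smul, norm_inv, RCLike.norm_ofReal, abs_of_pos hmr, inv_mul_cancel₀ hmr.ne']
    have n2' : ‖((‖m‖ : ℝ) : 𝕜)⁻¹ • m'‖ = 1 := by
      rw [norm_smul, norm_inv, RCLike.norm_ofReal, abs_of_pos hmr, hmn, inv_mul_cancel₀ hmr.ne']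
    have hmg' : (inner 𝕜 m' g' : 𝕜) = 0 := by
      rw [← inner_conj_symm, hgm', map_zero]
    have hmg : (inner 𝕜 m g : 𝕜) = 0 := by
      rw [← inner_conj_symm, hgm, map_zero]
    set v : Fin 2 → H := ![((‖g‖ : ℝ) : 𝕜)⁻¹ • g, ((‖m‖ : ℝ) : 𝕜)⁻¹ • m] with hv
    set w : Fin 2 → H := ![((‖g‖ : ℝ) : 𝕜)⁻¹ • g', ((‖m‖ : ℝ) : 𝕜)⁻¹ • m'] with hw
    have hvo : Orthonormal 𝕜 v := by
      constructor
      · intro i; fin_cases i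
        · exact n1
        · exact n2
      · intro i j hij
        fin_cases i <;> fin_cases j <;>
          simp_all [v, inner_smul_left, inner_smul_right, hgm, hmg]
    have hwo : Orthonormal 𝕜 w := by
      constructor
      · intro i; fin_cases i
        · exact n1'
        · exact n2'
      · intro i j hij
        fin_cases i <;> fin_cases j <;>
          simp_all [w, inner_smul_left, inner_smul_right, hgm', hmg']
    obtain ⟨T, hT⟩ := aux_onmap hvo hwo
    refine ⟨T, ?_, ?_⟩
    · have := hT 0
      simp only [hv, hw, Matrix.cons_val_zero, map_smul] at this
      have h2 := congrArg (fun x => ((‖g‖ : ℝ) : 𝕜) • x) this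
      simpa [smul_smul, mul_inv_cancel₀ hrk] using h2
    · have := hT 1
      simp only [hv, hw, Matrix.cons_val_one, Matrix.head_cons, map_smul] at this
      have h2 := congrArg (fun x => ((‖m‖ : ℝ) : 𝕜) • x) this
      simpa [smul_smul, mul_inv_cancel₀ hmk] using h2

theorem aux_key {g g' h h' : H} {p : ℝ} (hg0 : g ≠ 0) (hgn : ‖g'‖ = ‖g‖) (hhn : ‖h'‖ = ‖h‖)
    (hp : (inner 𝕜 g h : 𝕜) = (p : 𝕜)) (hp' : (inner 𝕜 g' h' : 𝕜) = (p : 𝕜)) :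
    ∃ T : H →ₗᵢ[𝕜] H, T g = g' ∧ T h = h' := by
  have hr : (0:ℝ) < ‖g‖ := norm_pos_iff.mpr hg0
  have hrk : ((‖g‖ : ℝ) : 𝕜) ≠ 0 := by simpa using hr.ne'
  set a : ℝ := p / ‖g‖ ^ 2 with ha
  set m : H := h - ((a : ℝ) : 𝕜) • g with hm
  set m' : H := h' - ((a : ℝ) : 𝕜) • g' with hm'
  have hgm : (inner 𝕜 g m : 𝕜) = 0 := by
    rw [hm, inner_sub_right, inner_smul_right, inner_self_eq_norm_sq_to_K, hp, ha]
    push_cast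
    field_simp [hrk]
    simp
  have hgm' : (inner 𝕜 g' m' : 𝕜) = 0 := by
    rw [hm', inner_sub_right, inner_smul_right, inner_self_eq_norm_sq_to_K, hp', ha, hgn]
    push_cast
    field_simp [hrk]
    simp
  have hmnorm : ∀ (x y : H), (inner 𝕜 x y : 𝕜) = 0 → ‖x + y‖ ^ 2 = ‖x‖ ^ 2 + ‖y‖ ^ 2 := by
    intro x y hx
    simp only [pow_two]
    exact norm_add_sq_eq_norm_sq_add_norm_sq_of_inner_eq_zero x y hx
  have e1 : ‖h‖ ^ 2 = ‖((a : ℝ) : 𝕜) • g‖ ^ 2 + ‖m‖ ^ 2 := by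
    have : h = ((a : ℝ) : 𝕜) • g + m := by rw [hm]; abel
    rw [this]
    exact hmnorm _ _ (by rw [inner_smul_left, hgm, mul_zero])
  have e2 : ‖h'‖ ^ 2 = ‖((a : ℝ) : 𝕜) • g'‖ ^ 2 + ‖m'‖ ^ 2 := by
    have : h' = ((a : ℝ) : 𝕜) • g' + m' := by rw [hm']; abel
    rw [this]
    exact hmnorm _ _ (by rw [inner_smul_left, hgm', mul_zero])
  have hmn : ‖m'‖ = ‖m‖ := by
    have h1 : ‖((a : ℝ) : 𝕜) • g'‖ = ‖((a : ℝ) : 𝕜) • g‖ := by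
      rw [norm_smul, norm_smul, hgn]
    rw [hhn, h1] at e2
    have hsq : ‖m'‖ ^ 2 = ‖m‖ ^ 2 := by linarith
    rw [← Real.sqrt_sq (norm_nonneg m'), ← Real.sqrt_sq (norm_nonneg m), hsq]
  obtain ⟨T, hTg, hTm⟩ := aux_pair hg0 hgn hmn hgm hgm'
  refine ⟨T, hTg, ?_⟩
  have : h = ((a : ℝ) : 𝕜) • g + m := by rw [hm]; abel
  rw [this, map_add, map_smul, hTg, hTm, hm']
  abel

/-- phase adjustment -/
theorem aux_phase (x y : H) :
    ∃ c : 𝕜, ‖c‖ = 1 ∧ (inner 𝕜 x (c • y) : 𝕜) = ((‖(inner 𝕜 x y : 𝕜)‖ : ℝ) : 𝕜) := by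
  set z : 𝕜 := inner 𝕜 x y with hz
  by_cases h0 : z = 0
  · exact ⟨1, by simp, by rw [inner_smul_right, ← hz, h0]; simp⟩
  · refine ⟨(‖z‖ : 𝕜) / z, ?_, ?_⟩
    · rw [norm_div, RCLike.norm_ofReal, abs_of_nonneg (norm_nonneg z),
        div_self (norm_ne_zero_iff.mpr h0)]
    · rw [inner_smul_right, ← hz, div_mul_cancel₀ _ h0]

theorem aux_rho {α : ℝ} {G : Set H} (h0G : (0 : H) ∉ G) {ρ : H → H → ℝ}
    (hρ : ∀ g ∈ G, ∀ h : H, ∀ r : 𝕜, r ≠ 0 → ρ g (r • h) = ‖r‖ ^ α * ρ g h)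
    (hinv : ∀ T : H →ₗᵢ[𝕜] H, ∀ g ∈ G, ∀ h : H, ρ (T g) (T h) = ρ g h)
    {g g' h h' : H} (hg : g ∈ G) (hg' : g' ∈ G)
    (hgn : ‖g'‖ = ‖g‖) (hhn : ‖h'‖ = ‖h‖)
    (hin : ‖(inner 𝕜 g' h' : 𝕜)‖ = ‖(inner 𝕜 g h : 𝕜)‖) :
    ρ g' h' = ρ g h := by
  have hg0 : g ≠ 0 := fun hgg => h0G (hgg ▸ hg)
  obtain ⟨c, hc1, hc2⟩ := aux_phase (𝕜 := 𝕜) g h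
  obtain ⟨c', hc1', hc2'⟩ := aux_phase (𝕜 := 𝕜) g' h'
  rw [hin] at hc2'
  have hc0 : c ≠ 0 := by intro hh; rw [hh, norm_zero] at hc1; norm_num at hc1
  have hc0' : c' ≠ 0 := by intro hh; rw [hh, norm_zero] at hc1'; norm_num at hc1'
  obtain ⟨T, hTg, hTh⟩ := aux_key (𝕜 := 𝕜) hg0 hgn
    (show ‖c' • h'‖ = ‖c • h‖ by rw [norm_smul, norm_smul, hc1, hc1', hhn]) hc2 hc2'
  have k1 : ρ g' (c' • h') = ρ g' h' := by
    rw [hρ g' hg' h' c' hc0', hc1', Real.one_rpow, one_mul]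
  have k2 : ρ g (c • h) = ρ g h := by
    rw [hρ g hg h c hc0, hc1, Real.one_rpow, one_mul]
  have k3 : ρ (T g) (T (c • h)) = ρ g (c • h) := hinv T g hg (c • h)
  rw [hTg, hTh] at k3
  rw [← k1, k3, k2]

end Aux
/-- `G` is an isometry-invariant open set in `H`: `G = {x : ‖x‖ ∈ R}` for some open
subset `R` of `[0,∞)`. -/
def IsInvariantOpen {H : Type*} [NormedAddCommGroup H] (G : Set H) : Prop :=
  ∃ R : Set ℝ, IsOpen {r : Set.Ici (0 : ℝ) | (r : ℝ) ∈ R} ∧ G = {x : H | ‖x‖ ∈ R}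

/-- for `α ∈ ℝ`, `0 ∉ G` and `ρ` with `ρ_g(r h) = |r|^α ρ_g(h)` for nonzero
scalars `r`, `ρ` is isometry-invariant iff there is `λ : (0,∞) × ℝ² → ℝ` which is
`α`-positively-homogeneous, even in each of the last two variables, and such that
`ρ_g(h) = λ_{‖g‖}(|⟨h,g⟩|, √(‖h‖²‖g‖² − |⟨h,g⟩|²))`. -/
theorem stmt1 {𝕜 H : Type*} [RCLike 𝕜] [NormedAddCommGroup H] [InnerProductSpace 𝕜 H]
    (α : ℝ) (G : Set H) (hG : IsInvariantOpen G) (h0G : (0 : H) ∉ G)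
    (ρ : H → H → ℝ)
    (hρ : ∀ g ∈ G, ∀ h : H, ∀ r : 𝕜, r ≠ 0 → ρ g (r • h) = ‖r‖ ^ α * ρ g h) :
    (∀ T : H →ₗᵢ[𝕜] H, ∀ g ∈ G, ∀ h : H, ρ (T g) (T h) = ρ g h) ↔
      ∃ lam : ℝ → ℝ → ℝ → ℝ,
        (∀ r > (0 : ℝ), ∀ p q : ℝ, ∀ t > (0 : ℝ),
          lam r (t * p) (t * q) = t ^ α * lam r p q) ∧
        (∀ r > (0 : ℝ), ∀ p q : ℝ, lam r (-p) q = lam r p q ∧ lam r p (-q) = lam r p q) ∧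
        (∀ g ∈ G, ∀ h : H,
          ρ g h = lam ‖g‖ ‖(inner 𝕜 g h : 𝕜)‖
            (Real.sqrt (‖h‖ ^ 2 * ‖g‖ ^ 2 - ‖(inner 𝕜 g h : 𝕜)‖ ^ 2))) := by
  classical
  constructor
  · intro hinv
    set Q : ℝ → ℝ → ℝ → Prop := fun r p q => ∃ g h : H, g ∈ G ∧ ‖g‖ = r ∧
      ‖(inner 𝕜 g h : 𝕜)‖ = |p| ∧ ‖h‖ = Real.sqrt (p ^ 2 + q ^ 2) / r with hQ
    set lam : ℝ → ℝ → ℝ → ℝ := fun r p q =>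
      if hx : Q r p q then ρ hx.choose hx.choose_spec.choose else 0 with hlam
    -- value at any witness
    have lam_eq : ∀ (r p q : ℝ) (g h : H), g ∈ G → ‖g‖ = r →
        ‖(inner 𝕜 g h : 𝕜)‖ = |p| → ‖h‖ = Real.sqrt (p ^ 2 + q ^ 2) / r →
        lam r p q = ρ g h := by
      intro r p q g h hg h1 h2 h3
      have hx : Q r p q := ⟨g, h, hg, h1, h2, h3⟩
      have hval : lam r p q = ρ hx.choose hx.choose_spec.choose := by
        rw [hlam]; exact dif_pos hx
      obtain ⟨hg', h1', h2', h3'⟩ := hx.choose_spec.choose_spec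
      rw [hval]
      exact aux_rho h0G hρ hinv hg hg' (by rw [h1', h1]) (by rw [h3', h3])
        (by rw [h2', h2])
    -- scaling of the predicate
    have Qscale : ∀ (r p q t : ℝ), 0 < t → Q r p q → Q r (t * p) (t * q) := by
      intro r p q t ht ⟨g, h, hg, h1, h2, h3⟩
      refine ⟨g, ((t : ℝ) : 𝕜) • h, hg, h1, ?_, ?_⟩
      · rw [inner_smul_right, norm_mul, RCLike.norm_ofReal, abs_of_pos ht, h2, abs_mul,
          abs_of_pos ht]
      · rw [norm_smul, RCLike.norm_ofReal, abs_of_pos ht, h3,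
          show (t * p) ^ 2 + (t * q) ^ 2 = t ^ 2 * (p ^ 2 + q ^ 2) by ring,
          Real.sqrt_mul (sq_nonneg t), Real.sqrt_sq ht.le, mul_div_assoc]
    have Qiff : ∀ (r p q t : ℝ), 0 < t → (Q r (t * p) (t * q) ↔ Q r p q) := by
      intro r p q t ht
      constructor
      · intro hx
        have := Qscale r (t * p) (t * q) t⁻¹ (inv_pos.mpr ht) hx
        rwa [← mul_assoc, ← mul_assoc, inv_mul_cancel₀ ht.ne', one_mul, one_mul] at this
      · exact Qscale r p q t ht
    refine ⟨lam, ?_, ?_, ?_⟩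
    · -- homogeneity
      intro r hr p q t ht
      by_cases hx : Q r p q
      · obtain ⟨g, h, hg, h1, h2, h3⟩ := hx
        have hg0 : g ≠ 0 := fun hgg => h0G (hgg ▸ hg)
        have l1 : lam r p q = ρ g h := lam_eq r p q g h hg h1 h2 h3
        have l2 : lam r (t * p) (t * q) = ρ g (((t : ℝ) : 𝕜) • h) := by
          apply lam_eq r (t * p) (t * q) g (((t : ℝ) : 𝕜) • h) hg h1
          · rw [inner_smul_right, norm_mul, RCLike.norm_ofReal, abs_of_pos ht, h2, abs_mul,
              abs_of_pos ht]
          · rw [norm_smul, RCLike.norm_ofReal, abs_of_pos ht, h3,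
              show (t * p) ^ 2 + (t * q) ^ 2 = t ^ 2 * (p ^ 2 + q ^ 2) by ring,
              Real.sqrt_mul (sq_nonneg t), Real.sqrt_sq ht.le, mul_div_assoc]
        rw [l1, l2, hρ g hg h ((t : ℝ) : 𝕜) (by simpa using ht.ne'),
          RCLike.norm_ofReal, abs_of_pos ht]
      · have hx' : ¬ Q r (t * p) (t * q) := fun hc => hx ((Qiff r p q t ht).mp hc)
        rw [hlam]
        simp only [dif_neg hx, dif_neg hx', mul_zero]
    · -- evenness
      intro r hr p q
      have habs : ∀ p' q' : ℝ, |p'| = |p| → p' ^ 2 + q' ^ 2 = p ^ 2 + q ^ 2 →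
          lam r p' q' = lam r p q := by
        intro p' q' hpp hqq
        by_cases hx : Q r p q
        · obtain ⟨g, h, hg, h1, h2, h3⟩ := hx
          rw [lam_eq r p q g h hg h1 h2 h3,
            lam_eq r p' q' g h hg h1 (by rw [h2, hpp]) (by rw [h3, hqq])]
        · have hx' : ¬ Q r p' q' := by
            intro ⟨g, h, hg, h1, h2, h3⟩
            exact hx ⟨g, h, hg, h1, by rw [h2, hpp], by rw [h3, hqq]⟩
          rw [hlam]
          simp only [dif_neg hx, dif_neg hx']
      exact ⟨habs (-p) q (abs_neg p) (by ring), habs p (-q) rfl (by ring)⟩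
    · -- the representation
      intro g hg h
      have hg0 : g ≠ 0 := fun hgg => h0G (hgg ▸ hg)
      have hr : (0:ℝ) < ‖g‖ := norm_pos_iff.mpr hg0
      set z : ℝ := ‖(inner 𝕜 g h : 𝕜)‖ with hz
      set q : ℝ := Real.sqrt (‖h‖ ^ 2 * ‖g‖ ^ 2 - z ^ 2) with hq
      have hCS : z ≤ ‖g‖ * ‖h‖ := norm_inner_le_norm g h
      have harg : (0:ℝ) ≤ ‖h‖ ^ 2 * ‖g‖ ^ 2 - z ^ 2 := by
        nlinarith [norm_nonneg (inner 𝕜 g h : 𝕜), norm_nonneg g, norm_nonneg h]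
      have hq2 : z ^ 2 + q ^ 2 = ‖h‖ ^ 2 * ‖g‖ ^ 2 := by
        rw [hq, Real.sq_sqrt harg]; ring
      refine (lam_eq ‖g‖ z q g h hg rfl (abs_of_nonneg (norm_nonneg _)).symm ?_).symm
      rw [hq2, show ‖h‖ ^ 2 * ‖g‖ ^ 2 = (‖h‖ * ‖g‖) ^ 2 by ring,
        Real.sqrt_sq (by positivity), mul_div_assoc, div_self hr.ne', mul_one]
  · rintro ⟨lam, h1, h2, h3⟩ T g hg h
    obtain ⟨R, -, hGR⟩ := hG
    have hTgG : T g ∈ G := by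
      rw [hGR]
      rw [hGR] at hg
      simpa [T.norm_map] using hg
    rw [h3 (T g) hTgG (T h), h3 g hg h, T.norm_map, T.norm_map,
      T.inner_map_map]
end

section
/- Let ρ be a Finsler metric on an isometry-invariant open set G ⊆ H with 0 ∉ G. Then ρ is isometry-invariant if and only if there exists a function λ : (0,∞) × ℝ × ℝ → ℝ, written λ_r(p,q), such that: (1) λ_r(t·p, t·q) = t·λ_r(p,q) for all r > 0, p,q ∈ ℝ, t ≥ 0; (2) λ_r(−p, q) = λ_r(p, −q) = λ_r(p, q) for all r > 0, p,q ∈ ℝ; and (3) ρ_g(h) = λ_{‖g‖}(|⟨h,g⟩|, √(‖h‖²·‖g‖² − |⟨h,g⟩|²)) for every g ∈ G and h ∈ H. -/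
open scoped InnerProductSpace

section Helpers

variable {𝕜 H : Type*} [RCLike 𝕜] [NormedAddCommGroup H] [InnerProductSpace 𝕜 H]

/-- A linear map `(a,b) ↦ a • x + b • y`. -/
def pairMap {M : Type*} [AddCommGroup M] [Module 𝕜 M] (x y : M) : (𝕜 × 𝕜) →ₗ[𝕜] M where
  toFun v := v.1 • x + v.2 • y
  map_add' u v := by simp [add_smul]; abel
  map_smul' c v := by simp [smul_smul, smul_add]

@[simp] theorem pairMap_apply {M : Type*} [AddCommGroup M] [Module 𝕜 M] (x y : M) (v : 𝕜 × 𝕜) :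
    pairMap x y v = v.1 • x + v.2 • y := rfl

theorem exists_isometry_of_gram (g h g' h' : H) (hgn : ‖g‖ = ‖g'‖) (hhn : ‖h‖ = ‖h'‖)
    (hi : (inner 𝕜 g h : 𝕜) = inner 𝕜 g' h') :
    ∃ T : H →ₗᵢ[𝕜] H, T g = g' ∧ T h = h' := by
  classical
  -- the key norm identity
  have key : ∀ a b : 𝕜, ‖a • g + b • h‖ = ‖a • g' + b • h'‖ := by
    intro a b
    have e1 : (inner 𝕜 g g : 𝕜) = inner 𝕜 g' g' := by
      rw [inner_self_eq_norm_sq_to_K, inner_self_eq_norm_sq_to_K, hgn]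
    have e2 : (inner 𝕜 h h : 𝕜) = inner 𝕜 h' h' := by
      rw [inner_self_eq_norm_sq_to_K, inner_self_eq_norm_sq_to_K, hhn]
    have e3 : (inner 𝕜 h g : 𝕜) = inner 𝕜 h' g' := by
      rw [← inner_conj_symm h g, ← inner_conj_symm h' g', hi]
    have hsame : (inner 𝕜 (a • g + b • h) (a • g + b • h) : 𝕜)
        = inner 𝕜 (a • g' + b • h') (a • g' + b • h') := by
      simp only [inner_add_left, inner_add_right, inner_smul_left, inner_smul_right,
        e1, e2, e3, hi]
    rw [norm_eq_sqrt_re_inner (𝕜 := 𝕜), norm_eq_sqrt_re_inner (𝕜 := 𝕜), hsame]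
  -- the ambient finite-dimensional subspace
  set F : Submodule 𝕜 H := Submodule.span 𝕜 {g, h, g', h'} with hF
  haveI : FiniteDimensional 𝕜 F :=
    FiniteDimensional.span_of_finite 𝕜 (Set.toFinite _)
  have hgF : g ∈ F := Submodule.subset_span (by simp)
  have hhF : h ∈ F := Submodule.subset_span (by simp)
  have hg'F : g' ∈ F := Submodule.subset_span (by simp)
  have hh'F : h' ∈ F := Submodule.subset_span (by simp)
  set gt : F := ⟨g, hgF⟩
  set ht : F := ⟨h, hhF⟩
  set gt' : F := ⟨g', hg'F⟩
  set ht' : F := ⟨h', hh'F⟩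
  set ℓ : (𝕜 × 𝕜) →ₗ[𝕜] F := pairMap gt ht with hℓ
  set ℓ' : (𝕜 × 𝕜) →ₗ[𝕜] F := pairMap gt' ht' with hℓ'
  have keyF : ∀ v : 𝕜 × 𝕜, ‖ℓ' v‖ = ‖ℓ v‖ := by
    intro v
    have h1 : ((ℓ v : F) : H) = v.1 • g + v.2 • h := by simp [hℓ, gt, ht]
    have h2 : ((ℓ' v : F) : H) = v.1 • g' + v.2 • h' := by simp [hℓ', gt', ht']
    rw [← Submodule.norm_coe, ← Submodule.norm_coe, h1, h2, key]
  have hker : LinearMap.ker ℓ ≤ LinearMap.ker ℓ' := by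
    intro v hv
    rw [LinearMap.mem_ker] at hv ⊢
    have := keyF v
    rw [hv, norm_zero, norm_eq_zero] at this
    exact this
  -- the isometry on S = range ℓ
  set S : Submodule 𝕜 F := LinearMap.range ℓ with hS
  set uLin : S →ₗ[𝕜] F :=
    ((LinearMap.ker ℓ).liftQ ℓ' hker).comp (ℓ.quotKerEquivRange.symm : S ≃ₗ[𝕜] _).toLinearMap
    with huLin
  have huLin_apply : ∀ v : 𝕜 × 𝕜, uLin ⟨ℓ v, LinearMap.mem_range_self ℓ v⟩ = ℓ' v := by
    intro v
    simp only [huLin, LinearMap.coe_comp, Function.comp_apply, LinearEquiv.coe_coe]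
    rw [LinearMap.quotKerEquivRange_symm_apply_image]
    exact Submodule.liftQ_apply _ _ _
  set u : S →ₗᵢ[𝕜] F :=
    { toLinearMap := uLin
      norm_map' := by
        rintro ⟨s, hs⟩
        rcases hs with ⟨v, rfl⟩
        rw [huLin_apply v]
        rw [keyF v]
        rfl } with hu
  set U : F →ₗᵢ[𝕜] F := u.extend with hU
  haveI : CompleteSpace F := FiniteDimensional.complete 𝕜 F
  -- global map
  set P := F.orthogonalProjectionOnto
  set Tlin : H →ₗ[𝕜] H :=
    F.subtype ∘ₗ U.toLinearMap ∘ₗ P.toLinearMap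
      + (LinearMap.id - F.subtype ∘ₗ P.toLinearMap) with hTlin
  have hT_apply : ∀ x : H, Tlin x = (U (P x) : H) + (x - (P x : H)) := fun x => rfl
  have hnorm : ∀ x : H, ‖Tlin x‖ = ‖x‖ := by
    intro x
    have horth1 : (inner 𝕜 ((U (P x) : H)) (x - (P x : H)) : 𝕜) = 0 :=
      Submodule.inner_right_of_mem_orthogonal (U (P x)).2
        (Submodule.sub_starProjection_mem_orthogonal (K := F) x)
    have horth2 : (inner 𝕜 ((P x : H)) (x - (P x : H)) : 𝕜) = 0 :=
      Submodule.inner_right_of_mem_orthogonal (P x).2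
        (Submodule.sub_starProjection_mem_orthogonal (K := F) x)
    have e1 : ‖(U (P x) : H) + (x - (P x : H))‖ ^ 2 = ‖(U (P x) : H)‖ ^ 2 + ‖x - (P x : H)‖ ^ 2 := by
      rw [pow_two, pow_two, pow_two]
      exact norm_add_sq_eq_norm_sq_add_norm_sq_of_inner_eq_zero _ _ horth1
    have e2 : ‖x‖ ^ 2 = ‖(P x : H)‖ ^ 2 + ‖x - (P x : H)‖ ^ 2 := by
      rw [pow_two, pow_two, pow_two]
      have := norm_add_sq_eq_norm_sq_add_norm_sq_of_inner_eq_zero _ _ horth2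
      rwa [add_sub_cancel] at this
    have e3 : ‖(U (P x) : H)‖ = ‖(P x : H)‖ := by
      rw [Submodule.norm_coe, Submodule.norm_coe, U.norm_map]
    have : ‖Tlin x‖ ^ 2 = ‖x‖ ^ 2 := by rw [hT_apply, e1, e3, e2]
    have h4 := congrArg Real.sqrt this
    rwa [Real.sqrt_sq (norm_nonneg _), Real.sqrt_sq (norm_nonneg _)] at h4
  refine ⟨⟨Tlin, hnorm⟩, ?_, ?_⟩
  · show Tlin g = g'
    have hPg : P g = gt := Submodule.orthogonalProjectionOnto_mem_subspace_eq_self gt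
    have hgS : gt ∈ S := ⟨(1, 0), by simp [hℓ, gt]⟩
    have : U gt = gt' := by
      have h1 : U gt = u ⟨gt, hgS⟩ := by
        have := LinearIsometry.extend_apply u ⟨gt, hgS⟩
        simpa using this
      have h2 : u ⟨gt, hgS⟩ = gt' := by
        have h3 : (⟨gt, hgS⟩ : S) = ⟨ℓ (1, 0), LinearMap.mem_range_self ℓ _⟩ := by
          ext; simp [hℓ, gt]
        rw [hu]
        show uLin ⟨gt, hgS⟩ = gt'
        rw [h3, huLin_apply]
        simp [hℓ', gt']
      rw [h1, h2]
    rw [hT_apply, hPg, this]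
    simp [gt, gt']
  · show Tlin h = h'
    have hPh : P h = ht := Submodule.orthogonalProjectionOnto_mem_subspace_eq_self ht
    have hhS : ht ∈ S := ⟨(0, 1), by simp [hℓ, ht]⟩
    have : U ht = ht' := by
      have h1 : U ht = u ⟨ht, hhS⟩ := by
        have := LinearIsometry.extend_apply u ⟨ht, hhS⟩
        simpa using this
      have h2 : u ⟨ht, hhS⟩ = ht' := by
        have h3 : (⟨ht, hhS⟩ : S) = ⟨ℓ (0, 1), LinearMap.mem_range_self ℓ _⟩ := by
          ext; simp [hℓ, ht]
        rw [hu]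
        show uLin ⟨ht, hhS⟩ = ht'
        rw [h3, huLin_apply]
        simp [hℓ', ht']
      rw [h1, h2]
    rw [hT_apply, hPh, this]
    simp [ht, ht']


theorem rho_eq_of_data (G : Set H) (ρ : H → H → ℝ)
    (hFinsler : ∀ g ∈ G, ∀ h : H, ∀ r : 𝕜, ρ g (r • h) = ‖r‖ * ρ g h)
    (hinv : ∀ T : H →ₗᵢ[𝕜] H, ∀ g ∈ G, ∀ h : H, ρ (T g) (T h) = ρ g h)
    {g g' h h' : H} (hg : g ∈ G) (hgn : ‖g‖ = ‖g'‖) (hhn : ‖h‖ = ‖h'‖)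
    (hin : ‖(inner 𝕜 g h : 𝕜)‖ = ‖(inner 𝕜 g' h' : 𝕜)‖) : ρ g h = ρ g' h' := by
  by_cases hz : (inner 𝕜 g h : 𝕜) = 0
  · have hz' : (inner 𝕜 g' h' : 𝕜) = 0 := by
      rw [hz, norm_zero] at hin; exact norm_eq_zero.mp hin.symm
    obtain ⟨T, hTg, hTh⟩ := exists_isometry_of_gram g h g' h' hgn hhn (by rw [hz, hz'])
    rw [← hTg, ← hTh, hinv T g hg h]
  · set c : 𝕜 := (inner 𝕜 g' h' : 𝕜) / (inner 𝕜 g h : 𝕜) with hcdef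
    have hc : ‖c‖ = 1 := by
      rw [hcdef, norm_div, ← hin, div_self (norm_ne_zero_iff.mpr hz)]
    have h1 : (inner 𝕜 g (c • h) : 𝕜) = inner 𝕜 g' h' := by
      rw [inner_smul_right, hcdef, div_mul_cancel₀ _ hz]
    have h2 : ‖c • h‖ = ‖h'‖ := by rw [norm_smul, hc, one_mul, hhn]
    obtain ⟨T, hTg, hTh⟩ := exists_isometry_of_gram g (c • h) g' h' hgn h2 h1
    calc ρ g h = ρ g (c • h) := by rw [hFinsler g hg h c, hc, one_mul]
      _ = ρ (T g) (T (c • h)) := (hinv T g hg (c • h)).symm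
      _ = ρ g' h' := by rw [hTg, hTh]

open Classical in
/-- Auxiliary function used to define `lam`. -/
noncomputable def auxL (𝕜 : Type*) {H : Type*} [RCLike 𝕜] [NormedAddCommGroup H]
    [InnerProductSpace 𝕜 H] (G : Set H) (ρ : H → H → ℝ) (r p s : ℝ) : ℝ :=
  if hc : ∃ gh : H × H, gh.1 ∈ G ∧ ‖gh.1‖ = r ∧ ‖(inner 𝕜 gh.1 gh.2 : 𝕜)‖ = p ∧
      ‖gh.2‖ * r = Real.sqrt s
  then ρ hc.choose.1 hc.choose.2 else 0

theorem auxL_spec (G : Set H) (h0G : (0 : H) ∉ G) (ρ : H → H → ℝ)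
    (wd : ∀ g₁ ∈ G, ∀ g₂ ∈ G, ∀ h₁ h₂ : H, ‖g₁‖ = ‖g₂‖ → ‖h₁‖ = ‖h₂‖ →
      ‖(inner 𝕜 g₁ h₁ : 𝕜)‖ = ‖(inner 𝕜 g₂ h₂ : 𝕜)‖ → ρ g₁ h₁ = ρ g₂ h₂)
    {r p s : ℝ} {g h : H} (hg : g ∈ G) (hr : ‖g‖ = r)
    (hp : ‖(inner 𝕜 g h : 𝕜)‖ = p) (hs : ‖h‖ * r = Real.sqrt s) :
    auxL 𝕜 G ρ r p s = ρ g h := by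
  have hc : ∃ gh : H × H, gh.1 ∈ G ∧ ‖gh.1‖ = r ∧ ‖(inner 𝕜 gh.1 gh.2 : 𝕜)‖ = p ∧
      ‖gh.2‖ * r = Real.sqrt s := ⟨(g, h), hg, hr, hp, hs⟩
  rw [auxL, dif_pos hc]
  obtain ⟨hg₀, hr₀, hp₀, hs₀⟩ := hc.choose_spec
  have hrpos : 0 < r := by
    rw [← hr]; exact norm_pos_iff.mpr (ne_of_mem_of_not_mem hg h0G)
  have hnh : ‖hc.choose.2‖ = ‖h‖ := by
    have : ‖hc.choose.2‖ * r = ‖h‖ * r := by rw [hs₀, hs]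
    exact mul_right_cancel₀ hrpos.ne' this
  exact wd hc.choose.1 hg₀ g hg hc.choose.2 h (by rw [hr₀, hr]) hnh (by rw [hp₀, hp])

theorem auxL_zero (G : Set H) (h0G : (0 : H) ∉ G) (ρ : H → H → ℝ)
    (hFinsler : ∀ g ∈ G, ∀ h : H, ∀ r : 𝕜, ρ g (r • h) = ‖r‖ * ρ g h) (r : ℝ) :
    auxL 𝕜 G ρ r 0 0 = 0 := by
  rw [auxL]
  split_ifs with hc
  · obtain ⟨hg₀, hr₀, hp₀, hs₀⟩ := hc.choose_spec
    have hrpos : 0 < r := by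
      rw [← hr₀]; exact norm_pos_iff.mpr (ne_of_mem_of_not_mem hg₀ h0G)
    have hs0 : ‖hc.choose.2‖ * r = 0 := by simpa using hs₀
    have hh0 : hc.choose.2 = 0 := by
      have := mul_eq_zero.mp hs0
      rcases this with h | h
      · exact norm_eq_zero.mp h
      · exact absurd h hrpos.ne'
    have := hFinsler hc.choose.1 hg₀ 0 (0 : 𝕜)
    rw [hh0]
    simpa using this
  · rfl


end Helpers

/-- a Finsler metric `ρ` on an isometry-invariant open set `G` with `0 ∉ G`
is isometry-invariant iff there is `λ : (0,∞) × ℝ² → ℝ` which is positively homogeneous,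
even in each of the last two variables, and such that
`ρ_g(h) = λ_{‖g‖}(|⟨h,g⟩|, √(‖h‖²‖g‖² − |⟨h,g⟩|²))`. -/
theorem stmt2 {𝕜 H : Type*} [RCLike 𝕜] [NormedAddCommGroup H] [InnerProductSpace 𝕜 H]
    (G : Set H) (hG : IsInvariantOpen G) (h0G : (0 : H) ∉ G)
    (ρ : H → H → ℝ)
    (hFinsler : ∀ g ∈ G, ∀ h : H, ∀ r : 𝕜, ρ g (r • h) = ‖r‖ * ρ g h) :
    (∀ T : H →ₗᵢ[𝕜] H, ∀ g ∈ G, ∀ h : H, ρ (T g) (T h) = ρ g h) ↔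
      ∃ lam : ℝ → ℝ → ℝ → ℝ,
        (∀ r > (0 : ℝ), ∀ p q : ℝ, ∀ t : ℝ, 0 ≤ t →
          lam r (t * p) (t * q) = t * lam r p q) ∧
        (∀ r > (0 : ℝ), ∀ p q : ℝ, lam r (-p) q = lam r p q ∧ lam r p (-q) = lam r p q) ∧
        (∀ g ∈ G, ∀ h : H,
          ρ g h = lam ‖g‖ ‖(inner 𝕜 g h : 𝕜)‖
            (Real.sqrt (‖h‖ ^ 2 * ‖g‖ ^ 2 - ‖(inner 𝕜 g h : 𝕜)‖ ^ 2))) := by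
  constructor
  · intro hinv
    have wd : ∀ g₁ ∈ G, ∀ g₂ ∈ G, ∀ h₁ h₂ : H, ‖g₁‖ = ‖g₂‖ → ‖h₁‖ = ‖h₂‖ →
        ‖(inner 𝕜 g₁ h₁ : 𝕜)‖ = ‖(inner 𝕜 g₂ h₂ : 𝕜)‖ → ρ g₁ h₁ = ρ g₂ h₂ :=
      fun g₁ hg₁ g₂ _ h₁ h₂ hn hh hi => rho_eq_of_data G ρ hFinsler hinv hg₁ hn hh hi
    refine ⟨fun r p q => auxL 𝕜 G ρ r |p| (p ^ 2 + q ^ 2), ?_, ?_, ?_⟩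
    · intro r hr p q t ht
      dsimp only
      rcases eq_or_lt_of_le ht with h0 | htpos
      · rw [← h0]
        simp only [zero_mul, abs_zero]
        rw [show (0 : ℝ) ^ 2 + (0 : ℝ) ^ 2 = 0 by norm_num]
        exact auxL_zero G h0G ρ hFinsler r
      · have habs : |t * p| = t * |p| := by rw [abs_mul, abs_of_pos htpos]
        have hsq : (t * p) ^ 2 + (t * q) ^ 2 = t ^ 2 * (p ^ 2 + q ^ 2) := by ring
        rw [habs, hsq]
        set p₀ := |p| with hp₀def
        set s₀ := p ^ 2 + q ^ 2 with hs₀def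
        by_cases hc : ∃ gh : H × H, gh.1 ∈ G ∧ ‖gh.1‖ = r ∧
            ‖(inner 𝕜 gh.1 gh.2 : 𝕜)‖ = p₀ ∧ ‖gh.2‖ * r = Real.sqrt s₀
        · obtain ⟨⟨g, h⟩, hg, hrg, hpg, hsg⟩ := hc
          have base : auxL 𝕜 G ρ r p₀ s₀ = ρ g h := auxL_spec G h0G ρ wd hg hrg hpg hsg
          have e1 : ‖(inner 𝕜 g (((t : 𝕜)) • h) : 𝕜)‖ = t * p₀ := by
            rw [inner_smul_right, norm_mul, RCLike.norm_ofReal, abs_of_pos htpos, hpg]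
          have e2 : ‖((t : 𝕜)) • h‖ * r = Real.sqrt (t ^ 2 * s₀) := by
            rw [norm_smul, RCLike.norm_ofReal, abs_of_pos htpos, Real.sqrt_mul (sq_nonneg t),
              Real.sqrt_sq ht, mul_assoc, hsg]
          have scaled : auxL 𝕜 G ρ r (t * p₀) (t ^ 2 * s₀) = ρ g (((t : 𝕜)) • h) :=
            auxL_spec G h0G ρ wd hg hrg e1 e2
          rw [scaled, base, hFinsler g hg h, RCLike.norm_ofReal, abs_of_pos htpos]
        · have hc2 : ¬ ∃ gh : H × H, gh.1 ∈ G ∧ ‖gh.1‖ = r ∧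
              ‖(inner 𝕜 gh.1 gh.2 : 𝕜)‖ = t * p₀ ∧ ‖gh.2‖ * r = Real.sqrt (t ^ 2 * s₀) := by
            rintro ⟨⟨g, h⟩, hg, hrg, hpg, hsg⟩
            refine hc ⟨(g, ((t : 𝕜))⁻¹ • h), hg, hrg, ?_, ?_⟩
            · rw [inner_smul_right, norm_mul, norm_inv, RCLike.norm_ofReal, abs_of_pos htpos,
                hpg]
              field_simp
            · rw [norm_smul, norm_inv, RCLike.norm_ofReal, abs_of_pos htpos, mul_assoc, hsg,
                Real.sqrt_mul (sq_nonneg t), Real.sqrt_sq ht]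
              field_simp
          rw [auxL, dif_neg hc2, auxL, dif_neg hc, mul_zero]
    · intro r hr p q
      constructor
      · dsimp only; rw [abs_neg, neg_sq]
      · dsimp only; rw [neg_sq]
    · intro g hg h
      dsimp only
      set p := ‖(inner 𝕜 g h : 𝕜)‖ with hpdef
      have hple : p ≤ ‖g‖ * ‖h‖ := norm_inner_le_norm g h
      have hpnn : 0 ≤ p := norm_nonneg _
      have hD : p ^ 2 ≤ ‖h‖ ^ 2 * ‖g‖ ^ 2 := by nlinarith [norm_nonneg g, norm_nonneg h]
      have hq : Real.sqrt (‖h‖ ^ 2 * ‖g‖ ^ 2 - p ^ 2) ^ 2 = ‖h‖ ^ 2 * ‖g‖ ^ 2 - p ^ 2 :=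
        Real.sq_sqrt (by linarith)
      rw [abs_of_nonneg hpnn]
      rw [show p ^ 2 + Real.sqrt (‖h‖ ^ 2 * ‖g‖ ^ 2 - p ^ 2) ^ 2 = ‖h‖ ^ 2 * ‖g‖ ^ 2 by
        rw [hq]; ring]
      symm
      refine auxL_spec G h0G ρ wd hg rfl rfl ?_
      rw [Real.sqrt_mul (sq_nonneg _), Real.sqrt_sq (norm_nonneg _), Real.sqrt_sq (norm_nonneg _)]
  · rintro ⟨lam, -, -, hrep⟩ T g hg h
    obtain ⟨R, -, hGR⟩ := hG
    have hTg : T g ∈ G := by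
      rw [hGR] at hg ⊢
      simpa [T.norm_map] using hg
    rw [hrep g hg h, hrep (T g) hTg (T h)]
    simp [T.norm_map, LinearIsometry.inner_map_map]
end

section
/- Let ρ be a Finsler metric on an isometry-invariant open set G ⊆ H. Then ρ is isometry-invariant if and only if ρ_{Ug}(Uh) = ρ_g(h) for every surjective isometry (unitary) U of H and all g ∈ G, h ∈ H. In other words, invariance with respect to all unitaries already implies invariance with respect to all (not necessarily surjective) isometries. -/
set_option maxHeartbeats 1000000

open Submodule

/-- Extend a unitary of a complete subspace to a unitary of the whole space,
acting as the identity on the orthogonal complement. -/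
lemma glue_exists {𝕜 H : Type*} [RCLike 𝕜] [NormedAddCommGroup H] [InnerProductSpace 𝕜 H]
    (W : Submodule 𝕜 H) [CompleteSpace W] (S : W ≃ₗᵢ[𝕜] W) :
    ∃ U : H →ₗᵢ[𝕜] H, Function.Surjective U ∧ ∀ w : W, U w = S w := by
  let P := orthogonalProjection W
  have hPmem : ∀ w : W, P (w : H) = w := fun w =>
    orthogonalProjection_mem_subspace_eq_self w
  have hPorth : ∀ x : H, x - (P x : H) ∈ Wᗮ := fun x =>
    sub_starProjection_mem_orthogonal (K := W) x
  have hnorm : ∀ (S' : W →ₗᵢ[𝕜] W) (x : H),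
      ‖(S' (P x) : H) + (x - (P x : H))‖ = ‖x‖ := by
    intro S' x
    have h1 := norm_add_sq_eq_norm_sq_add_norm_sq_of_inner_eq_zero (𝕜 := 𝕜)
      ((S' (P x) : H)) (x - (P x : H))
      (Submodule.inner_right_of_mem_orthogonal (S' (P x)).2 (hPorth x))
    have h2 := norm_add_sq_eq_norm_sq_add_norm_sq_of_inner_eq_zero (𝕜 := 𝕜)
      ((P x : H)) (x - (P x : H))
      (Submodule.inner_right_of_mem_orthogonal (P x).2 (hPorth x))
    rw [show (P x : H) + (x - (P x : H)) = x from by abel] at h2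
    have h3 : ‖(S' (P x) : H)‖ = ‖(P x : H)‖ := S'.norm_map (P x)
    rw [h3] at h1
    nlinarith [norm_nonneg ((S' (P x) : H) + (x - (P x : H))), norm_nonneg x]
  refine ⟨{ toFun := fun x => (S (P x) : H) + (x - (P x : H))
            map_add' := fun x y => by
              simp only [map_add, Submodule.coe_add]
              abel
            map_smul' := fun c x => by
              simp only [map_smul, Submodule.coe_smul, RingHom.id_apply, smul_sub, smul_add]
            norm_map' := hnorm S.toLinearIsometry }, ?_, ?_⟩
  · intro y
    refine ⟨(S.symm (P y) : H) + (y - (P y : H)), ?_⟩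
    have hP1 : P ((S.symm (P y) : H) + (y - (P y : H))) = S.symm (P y) := by
      rw [map_add, hPmem (S.symm (P y)),
        Submodule.orthogonalProjectionOnto_apply_of_mem_orthogonal (hPorth y), add_zero]
    show (S (P _) : H) + _ = y
    rw [hP1, S.apply_symm_apply]
    abel
  · intro w
    show (S (P w) : H) + ((w : H) - (P (w : H) : H)) = S w
    rw [hPmem w]
    simp

/-- Any linear isometry of an inner product space agrees with some surjective
linear isometry on any two given points. -/
lemma exists_unitary {𝕜 H : Type*} [RCLike 𝕜] [NormedAddCommGroup H] [InnerProductSpace 𝕜 H]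
    (T : H →ₗᵢ[𝕜] H) (g h : H) :
    ∃ U : H →ₗᵢ[𝕜] H, Function.Surjective U ∧ U g = T g ∧ U h = T h := by
  let W : Submodule 𝕜 H := span 𝕜 {g, h, T g, T h}
  haveI : FiniteDimensional 𝕜 W := FiniteDimensional.span_of_finite 𝕜 (Set.toFinite _)
  haveI : CompleteSpace W := FiniteDimensional.complete 𝕜 W
  have hgW : g ∈ W := subset_span (by simp)
  have hhW : h ∈ W := subset_span (by simp)
  have hTgW : T g ∈ W := subset_span (by simp)
  have hThW : T h ∈ W := subset_span (by simp)
  let gW : W := ⟨g, hgW⟩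
  let hW : W := ⟨h, hhW⟩
  let M : Submodule 𝕜 W := span 𝕜 {gW, hW}
  have key : ∀ m : M, T ((m : W) : H) ∈ W := by
    rintro ⟨m, hm⟩
    induction hm using Submodule.span_induction with
    | mem x hx =>
      rcases hx with hx | hx <;> subst hx <;> simpa using ‹_›
    | zero => simp
    | add x y _ _ hx hy => simpa using W.add_mem hx hy
    | smul c x _ hx => simpa using W.smul_mem c hx
  let L : M →ₗᵢ[𝕜] W :=
    { toLinearMap := LinearMap.codRestrict W
        (T.toLinearMap ∘ₗ W.subtype ∘ₗ M.subtype) (fun m => key m)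
      norm_map' := fun m => T.norm_map ((m : W) : H) }
  have hSsurj : Function.Surjective L.extend :=
    LinearMap.injective_iff_surjective.mp L.extend.injective
  let Se : W ≃ₗᵢ[𝕜] W := LinearIsometryEquiv.ofSurjective L.extend hSsurj
  have hSe : ∀ w : W, Se w = L.extend w := fun w =>
    congrFun (LinearIsometryEquiv.coe_ofSurjective L.extend hSsurj) w
  obtain ⟨U, hUsurj, hUeq⟩ := glue_exists W Se
  have hSM : ∀ (m : W) (hm : m ∈ M), (Se m : H) = T m := by
    intro m hm
    rw [hSe, L.extend_apply ⟨m, hm⟩]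
    rfl
  refine ⟨U, hUsurj, ?_, ?_⟩
  · have := hUeq gW
    rw [this, hSM gW (subset_span (by simp))]
  · have := hUeq hW
    rw [this, hSM hW (subset_span (by simp))]

/-- a Finsler metric `ρ` on an isometry-invariant open set `G` is
isometry-invariant iff it is invariant with respect to every surjective isometry
(unitary) of `H`. -/
theorem stmt4 {𝕜 H : Type*} [RCLike 𝕜] [NormedAddCommGroup H] [InnerProductSpace 𝕜 H]
    (G : Set H) (hG : IsInvariantOpen G)
    (ρ : H → H → ℝ)
    (hFinsler : ∀ g ∈ G, ∀ h : H, ∀ r : 𝕜, ρ g (r • h) = ‖r‖ * ρ g h) :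
    (∀ T : H →ₗᵢ[𝕜] H, ∀ g ∈ G, ∀ h : H, ρ (T g) (T h) = ρ g h) ↔
      (∀ U : H →ₗᵢ[𝕜] H, Function.Surjective U → ∀ g ∈ G, ∀ h : H,
        ρ (U g) (U h) = ρ g h) := by
  constructor
  · intro hall U _ g hg h; exact hall U g hg h
  · intro hU T g hg h
    obtain ⟨U, hsurj, hUg, hUh⟩ := exists_unitary T g h
    rw [← hUg, ← hUh]
    exact hU U hsurj g hg h
end

section
/- Let G ⊆ H be an isometry-invariant open set with 0 ∉ G and let σ be a sesquilinear field on G. Then σ is isometry-invariant if and only if there exist functions φ, ψ : (0,∞) → ℝ such that σ_g(f,h) = φ(‖g‖²)·⟨f,h⟩ + ψ(‖g‖²)·⟨f,g⟩·⟨g,h⟩ for every g ∈ G and all f, h ∈ H. -/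
/-- A sesquilinear field on `G`: for every `g ∈ G`, `σ_g` is linear in its first vector
argument, conjugate-linear in the second one, and conjugate-symmetric.  (The inner
product of the paper is linear in the first argument, so the paper's `⟨f,h⟩`
is Mathlib's `inner h f`.) -/
def IsSesquiField (𝕜 : Type*) {H : Type*} [RCLike 𝕜] [NormedAddCommGroup H]
    [InnerProductSpace 𝕜 H] (G : Set H) (σ : H → H → H → 𝕜) : Prop :=
  ∀ g ∈ G,
    (∀ f₁ f₂ h : H, σ g (f₁ + f₂) h = σ g f₁ h + σ g f₂ h) ∧
    (∀ (c : 𝕜) (f h : H), σ g (c • f) h = c * σ g f h) ∧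
    (∀ (f h₁ h₂ : H), σ g f (h₁ + h₂) = σ g f h₁ + σ g f h₂) ∧
    (∀ (c : 𝕜) (f h : H), σ g f (c • h) = starRingEnd 𝕜 c * σ g f h) ∧
    (∀ f h : H, σ g f h = starRingEnd 𝕜 (σ g h f))

open RCLike ComplexConjugate

section Aux
variable {𝕜 H : Type*} [RCLike 𝕜] [NormedAddCommGroup H] [InnerProductSpace 𝕜 H]

local notation "⟪" x ", " y "⟫" => @inner 𝕜 _ _ x y

noncomputable def reflL (n : H) : H →ₗ[𝕜] H where
  toFun x := x - (2 * ⟪n, x⟫ / (‖n‖ : 𝕜) ^ 2) • n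
  map_add' x y := by
    simp only [inner_add_right]; match_scalars <;> ring
  map_smul' c x := by
    simp only [inner_smul_right, RingHom.id_apply]; match_scalars <;> ring

theorem reflL_norm (n : H) (hn : n ≠ 0) (x : H) : ‖reflL (𝕜 := 𝕜) n x‖ = ‖x‖ := by
  have hN : (‖n‖ : 𝕜) ≠ 0 := by simpa using norm_ne_zero_iff.mpr hn
  have key : ⟪reflL (𝕜 := 𝕜) n x, reflL (𝕜 := 𝕜) n x⟫ = ⟪x, x⟫ := by
    simp only [reflL, LinearMap.coe_mk, AddHom.coe_mk, inner_sub_sub_self,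
      inner_smul_left, inner_smul_right, map_div₀, map_mul, map_ofNat, map_pow, conj_ofReal,
      inner_conj_symm]
    rw [inner_self_eq_norm_sq_to_K (𝕜 := 𝕜) n]
    field_simp; ring
  have h2 : ((‖reflL (𝕜 := 𝕜) n x‖ : 𝕜)) ^ 2 = (‖x‖ : 𝕜) ^ 2 := by
    rw [← inner_self_eq_norm_sq_to_K, ← inner_self_eq_norm_sq_to_K, key]
  have h3 : ‖reflL (𝕜 := 𝕜) n x‖ ^ 2 = ‖x‖ ^ 2 := by exact_mod_cast h2
  nlinarith [norm_nonneg (reflL (𝕜 := 𝕜) n x), norm_nonneg x]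

noncomputable def reflIso (n : H) (hn : n ≠ 0) : H →ₗᵢ[𝕜] H :=
  ⟨reflL n, reflL_norm n hn⟩

theorem reflIso_apply (n : H) (hn : n ≠ 0) (x : H) :
    reflIso (𝕜 := 𝕜) n hn x = x - (2 * ⟪n, x⟫ / (‖n‖ : 𝕜) ^ 2) • n := rfl

theorem reflIso_fix (n : H) (hn : n ≠ 0) (x : H) (h : ⟪n, x⟫ = 0) :
    reflIso (𝕜 := 𝕜) n hn x = x := by
  simp [reflIso_apply, h]

theorem reflIso_self (n : H) (hn : n ≠ 0) : reflIso (𝕜 := 𝕜) n hn n = -n := by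
  have hN : (‖n‖ : 𝕜) ≠ 0 := by simpa using norm_ne_zero_iff.mpr hn
  rw [reflIso_apply, inner_self_eq_norm_sq_to_K (𝕜 := 𝕜) n]
  rw [show (2 * (‖n‖ : 𝕜) ^ 2 / (‖n‖ : 𝕜) ^ 2) = 2 by field_simp]
  match_scalars <;> ring

theorem reflIso_invol (n : H) (hn : n ≠ 0) (x : H) :
    reflIso (𝕜 := 𝕜) n hn (reflIso (𝕜 := 𝕜) n hn x) = x := by
  have hN : (‖n‖ : 𝕜) ≠ 0 := by simpa using norm_ne_zero_iff.mpr hn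
  rw [reflIso_apply, reflIso_apply, inner_sub_right, inner_smul_right,
    inner_self_eq_norm_sq_to_K (𝕜 := 𝕜) n]
  have : (2 * (⟪n, x⟫ - 2 * ⟪n, x⟫ / (‖n‖ : 𝕜) ^ 2 * (‖n‖ : 𝕜) ^ 2) / (‖n‖ : 𝕜) ^ 2)
      = -(2 * ⟪n, x⟫ / (‖n‖ : 𝕜) ^ 2) := by
    field_simp; ring
  rw [this]
  match_scalars <;> ring

def phaseIso (c : 𝕜) (hc : ‖c‖ = 1) : H →ₗᵢ[𝕜] H :=
  ⟨c • LinearMap.id, fun x => by simp [norm_smul, hc]⟩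

theorem phaseIso_apply (c : 𝕜) (hc : ‖c‖ = 1) (x : H) : phaseIso c hc x = c • x := rfl

theorem exists_isometry_pair (g g' : H) (hg : g ≠ 0) (hnorm : ‖g‖ = ‖g'‖) :
    ∃ T S : H →ₗᵢ[𝕜] H, T g = g' ∧ S g' = g ∧ ∀ x, T (S x) = x := by
  classical
  by_cases hsc : ∃ μ : 𝕜, g' = μ • g
  · obtain ⟨μ, rfl⟩ := hsc
    have hng : ‖g‖ ≠ 0 := norm_ne_zero_iff.mpr hg
    have hμ : ‖μ‖ = 1 := by
      rw [norm_smul] at hnorm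
      field_simp at hnorm; linarith
    have hμc : ‖(starRingEnd 𝕜) μ‖ = 1 := by rwa [RCLike.norm_conj]
    refine ⟨phaseIso μ hμ, phaseIso ((starRingEnd 𝕜) μ) hμc, rfl, ?_, fun x => ?_⟩
    · rw [phaseIso_apply, smul_smul, RCLike.conj_mul, hμ]
      norm_num
    · rw [phaseIso_apply, phaseIso_apply, smul_smul, RCLike.mul_conj, hμ]
      norm_num
  · obtain ⟨s, hs⟩ : ∃ s : 𝕜, s = ⟪g, g'⟫ := ⟨_, rfl⟩
    obtain ⟨lam, hlam⟩ : ∃ lam : 𝕜, lam = (if s = 0 then 1 else (starRingEnd 𝕜) s / (‖s‖ : 𝕜)) :=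
      ⟨_, rfl⟩
    have hlam1 : ‖lam‖ = 1 := by
      rw [hlam]
      split_ifs with h
      · simp
      · have : (‖s‖ : ℝ) ≠ 0 := norm_ne_zero_iff.mpr h
        simp [norm_div, RCLike.norm_conj, this]
    have hls : lam * s = (‖s‖ : 𝕜) := by
      rw [hlam]
      split_ifs with h
      · simp [h]
      · have h' : (‖s‖ : 𝕜) ≠ 0 := by simpa using norm_ne_zero_iff.mpr h
        field_simp
        rw [mul_comm, RCLike.mul_conj]
    have hg'0 : g' ≠ 0 := by
      rintro rfl; exact hsc ⟨0, by simp⟩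
    obtain ⟨n, hn⟩ : ∃ n : H, n = g - lam • g' := ⟨_, rfl⟩
    have hn0 : n ≠ 0 := by
      intro h
      have hgl : g = lam • g' := by rwa [hn, sub_eq_zero] at h
      have hl0 : lam ≠ 0 := by intro h0; rw [h0, zero_smul] at hgl; exact hg hgl
      exact hsc ⟨lam⁻¹, by rw [hgl, smul_smul, inv_mul_cancel₀ hl0, one_smul]⟩
    have hconj_s : ⟪g', g⟫ = (starRingEnd 𝕜) s := by rw [hs, inner_conj_symm]
    have hll : lam * (starRingEnd 𝕜) lam = 1 := by
      rw [RCLike.mul_conj, hlam1]; norm_num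
    have hinner_ng : ⟪n, g⟫ = (‖g‖ : 𝕜) ^ 2 - (‖s‖ : 𝕜) := by
      rw [hn, inner_sub_left, inner_smul_left, hconj_s, inner_self_eq_norm_sq_to_K,
        ← map_mul, hls, conj_ofReal]
    have hinner_nlg : ⟪n, lam • g'⟫ = (‖s‖ : 𝕜) - (‖g‖ : 𝕜) ^ 2 := by
      rw [inner_smul_right, hn, inner_sub_left, inner_smul_left, ← hs,
        inner_self_eq_norm_sq_to_K, ← hnorm]
      linear_combination hls - ((‖g‖ : 𝕜)) ^ 2 * hll
    have hinner_nn : (‖n‖ : 𝕜) ^ 2 = 2 * ((‖g‖ : 𝕜) ^ 2 - (‖s‖ : 𝕜)) := by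
      rw [← inner_self_eq_norm_sq_to_K (𝕜 := 𝕜) n]
      nth_rewrite 2 [hn]
      rw [inner_sub_right, hinner_ng, hinner_nlg]
      ring
    have hcoef : 2 * ⟪n, g⟫ / (‖n‖ : 𝕜) ^ 2 = 1 := by
      rw [hinner_ng, hinner_nn]
      have hne : (‖g‖ : 𝕜) ^ 2 - (‖s‖ : 𝕜) ≠ 0 := by
        intro h
        apply norm_ne_zero_iff.mpr hn0
        have h2 : (‖n‖ : 𝕜) ^ 2 = 0 := by rw [hinner_nn, h]; ring
        have := pow_eq_zero_iff (n := 2) (by norm_num) |>.mp h2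
        exact_mod_cast this
      field_simp
    have hrefl : reflIso (𝕜 := 𝕜) n hn0 g = lam • g' := by
      rw [reflIso_apply, hcoef, one_smul, hn]
      abel
    have hlamc : ‖(starRingEnd 𝕜) lam‖ = 1 := by rwa [RCLike.norm_conj]
    refine ⟨(phaseIso ((starRingEnd 𝕜) lam) hlamc).comp (reflIso n hn0),
      (reflIso n hn0).comp (phaseIso lam hlam1), ?_, ?_, fun x => ?_⟩
    · simp only [LinearIsometry.coe_comp, Function.comp_apply]
      rw [hrefl, phaseIso_apply, smul_smul, mul_comm, hll]
      norm_num
    · simp only [LinearIsometry.coe_comp, Function.comp_apply]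
      rw [phaseIso_apply, ← hrefl, reflIso_invol]
    · simp only [LinearIsometry.coe_comp, Function.comp_apply, phaseIso_apply]
      rw [reflIso_invol n hn0 (lam • x), smul_smul, mul_comm, hll, one_smul]

theorem pointwise_rep {σ : H → H → H → 𝕜} {g : H} (hg : g ≠ 0)
    (h1 : ∀ f₁ f₂ h : H, σ g (f₁ + f₂) h = σ g f₁ h + σ g f₂ h)
    (h2 : ∀ (c : 𝕜) (f h : H), σ g (c • f) h = c * σ g f h)
    (h3 : ∀ (f h₁ h₂ : H), σ g f (h₁ + h₂) = σ g f h₁ + σ g f h₂)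
    (h4 : ∀ (c : 𝕜) (f h : H), σ g f (c • h) = (starRingEnd 𝕜) c * σ g f h)
    (h5 : ∀ f h : H, σ g f h = (starRingEnd 𝕜) (σ g h f))
    (hinvg : ∀ T : H →ₗᵢ[𝕜] H, T g = g → ∀ f h : H, σ g (T f) (T h) = σ g f h) :
    ∃ a b : ℝ, ∀ f h : H, σ g f h =
      (a : 𝕜) * ⟪h, f⟫ + (b : 𝕜) * ⟪g, f⟫ * ⟪h, g⟫ := by
  classical
  have hgN : (‖g‖ : 𝕜) ≠ 0 := by simpa using norm_ne_zero_iff.mpr hg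
  have hzr : ∀ f : H, σ g f 0 = 0 := fun f => by
    have := h4 0 f 0; simpa using this
  have hnegr : ∀ f h : H, σ g f (-h) = -σ g f h := fun f h => by
    have := h4 (-1) f h; simpa using this
  have hsubr : ∀ f y z : H, σ g f (y - z) = σ g f y - σ g f z := fun f y z => by
    rw [sub_eq_add_neg, h3, hnegr, sub_eq_add_neg]
  have key : ∀ f y : H, ⟪y, g⟫ = 0 → ⟪y, f⟫ = 0 → σ g f y = 0 := by
    intro f y hyg hyf
    rcases eq_or_ne y 0 with rfl | hy0
    · exact hzr f
    · have hT := hinvg (reflIso y hy0) (reflIso_fix y hy0 g hyg) f y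
      rw [reflIso_fix y hy0 f hyf, reflIso_self y hy0, hnegr] at hT
      have h2' : (2 : 𝕜) * σ g f y = 0 := by linear_combination - hT
      exact (mul_eq_zero.mp h2').resolve_left two_ne_zero
  have key' : ∀ f y : H, ⟪y, g⟫ = 0 → ⟪y, f⟫ = 0 → σ g y f = 0 := by
    intro f y hyg hyf
    rw [h5, key f y hyg hyf, map_zero]
  have pair : ∀ x z : H, ⟪g, x⟫ = 0 → ⟪g, z⟫ = 0 → ⟪x, z⟫ = 0 →
      (‖z‖ : 𝕜) ^ 2 * σ g x x = (‖x‖ : 𝕜) ^ 2 * σ g z z := by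
    intro x z hgx hgz hxz
    have hxg : ⟪x, g⟫ = 0 := inner_eq_zero_symm.mp hgx
    have hzg : ⟪z, g⟫ = 0 := inner_eq_zero_symm.mp hgz
    have hzx : ⟪z, x⟫ = 0 := inner_eq_zero_symm.mp hxz
    have hqg : ⟪(‖z‖ : 𝕜) ^ 2 • x - (‖x‖ : 𝕜) ^ 2 • z, g⟫ = 0 := by
      rw [inner_sub_left, inner_smul_left, inner_smul_left, hxg, hzg]
      ring
    have hqp : ⟪(‖z‖ : 𝕜) ^ 2 • x - (‖x‖ : 𝕜) ^ 2 • z, x + z⟫ = 0 := by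
      rw [inner_sub_left, inner_smul_left, inner_smul_left, inner_add_right,
        inner_add_right, hxz, hzx, inner_self_eq_norm_sq_to_K, inner_self_eq_norm_sq_to_K]
      simp only [map_pow, conj_ofReal]
      ring
    have h0 := key (x + z) _ hqg hqp
    rw [hsubr, h4, h4, h1, h1, key x z hzg hzx, key' x z hzg hzx] at h0
    simp only [map_pow, conj_ofReal] at h0
    linear_combination h0
  have decomp : ∀ f : H, ∃ (c : 𝕜) (f' : H),
      f = c • g + f' ∧ ⟪g, f'⟫ = 0 ∧ ⟪g, f⟫ = c * (‖g‖ : 𝕜) ^ 2 := by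
    intro f
    refine ⟨⟪g, f⟫ / (‖g‖ : 𝕜) ^ 2, f - (⟪g, f⟫ / (‖g‖ : 𝕜) ^ 2) • g, by abel, ?_, ?_⟩
    · rw [inner_sub_right, inner_smul_right, inner_self_eq_norm_sq_to_K]
      field_simp
      ring
    · field_simp
  have hggr : σ g g g = ((re (σ g g g) : ℝ) : 𝕜) := (RCLike.conj_eq_iff_re.mp (h5 g g).symm).symm
  have hgy0 : ∀ y : H, ⟪g, y⟫ = 0 → σ g g y = 0 := fun y hy =>
    key g y (inner_eq_zero_symm.mp hy) (inner_eq_zero_symm.mp hy)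
  have hyg0 : ∀ y : H, ⟪g, y⟫ = 0 → σ g y g = 0 := fun y hy =>
    key' g y (inner_eq_zero_symm.mp hy) (inner_eq_zero_symm.mp hy)
  by_cases hu : ∃ u : H, ⟪g, u⟫ = 0 ∧ ‖u‖ = 1
  · -- there is a unit vector orthogonal to g
    obtain ⟨u, hgu, hu1⟩ := hu
    have huu : ⟪u, u⟫ = 1 := by rw [inner_self_eq_norm_sq_to_K, hu1]; norm_num
    set a : ℝ := re (σ g u u) with ha
    have hauu : σ g u u = (a : 𝕜) := (RCLike.conj_eq_iff_re.mp (h5 u u).symm).symm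
    have diag : ∀ x : H, ⟪g, x⟫ = 0 → σ g x x = (a : 𝕜) * ⟪x, x⟫ := by
      intro x hgx
      obtain ⟨c, hc⟩ : ∃ c : 𝕜, c = ⟪u, x⟫ := ⟨_, rfl⟩
      obtain ⟨z, hz⟩ : ∃ z : H, z = x - c • u := ⟨_, rfl⟩
      have hxdec : x = c • u + z := by rw [hz]; abel
      have hgz : ⟪g, z⟫ = 0 := by
        rw [hz, inner_sub_right, inner_smul_right, hgu, hgx]; ring
      have huz : ⟪u, z⟫ = 0 := by
        rw [hz, inner_sub_right, inner_smul_right, huu, hc]; ring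
      have hzu : ⟪z, u⟫ = 0 := inner_eq_zero_symm.mp huz
      have hzg : ⟪z, g⟫ = 0 := inner_eq_zero_symm.mp hgz
      have hpz := pair u z hgu hgz huz
      rw [hu1, hauu] at hpz
      have hzz : σ g z z = (a : 𝕜) * ⟪z, z⟫ := by
        rw [inner_self_eq_norm_sq_to_K]
        have : ((1 : ℝ) : 𝕜) ^ 2 = 1 := by norm_num
        rw [this, one_mul] at hpz
        linear_combination - hpz
      have hc1 : σ g u z = 0 := key u z hzg hzu
      have hc2 : σ g z u = 0 := key' u z hzg hzu
      rw [hxdec]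
      simp only [h1, h3, h2, h4, inner_add_left, inner_add_right, inner_smul_left,
        inner_smul_right, huu, huz, hzu, hc1, hc2, hauu, hzz]
      ring
    have offd : ∀ x y : H, ⟪g, x⟫ = 0 → ⟪g, y⟫ = 0 → σ g x y = (a : 𝕜) * ⟪y, x⟫ := by
      intro x y hgx hgy
      have e1 : σ g x y + σ g y x = (a : 𝕜) * (⟪y, x⟫ + ⟪x, y⟫) := by
        have hxy := diag (x + y) (by rw [inner_add_right, hgx, hgy]; ring)
        simp only [h1, h3, inner_add_left, inner_add_right] at hxy
        rw [diag x hgx, diag y hgy] at hxy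
        linear_combination hxy
      rcases RCLike.I_mul_I_ax (K := 𝕜) with hI0 | hI2
      · have hconj : ∀ z : 𝕜, (starRingEnd 𝕜) z = z := fun z => by
          rw [← re_add_im z, hI0]
          simp [conj_ofReal]
        have e2 : σ g y x = σ g x y := by rw [h5 x y, hconj]
        have e3 : ⟪x, y⟫ = (⟪y, x⟫ : 𝕜) := by rw [← inner_conj_symm, hconj]
        linear_combination (e1 - e2 + (a : 𝕜) * e3) / 2
      · have hIne : (I : 𝕜) ≠ 0 := by
          intro h; rw [h, mul_zero] at hI2; exact (by norm_num : (0:𝕜) ≠ -1) hI2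
        have hgy' : ⟪g, (I : 𝕜) • y⟫ = 0 := by rw [inner_smul_right, hgy, mul_zero]
        have e2 : σ g x ((I : 𝕜) • y) + σ g ((I : 𝕜) • y) x =
            (a : 𝕜) * (⟪(I : 𝕜) • y, x⟫ + ⟪x, (I : 𝕜) • y⟫) := by
          have hxy := diag (x + (I : 𝕜) • y) (by rw [inner_add_right, hgx, hgy']; ring)
          simp only [h1, h3, inner_add_left, inner_add_right] at hxy
          rw [diag x hgx, diag ((I : 𝕜) • y) hgy'] at hxy
          linear_combination hxy
        rw [h4, h2, inner_smul_left, inner_smul_right] at e2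
        have hcI : (starRingEnd 𝕜) (I : 𝕜) = -I := RCLike.conj_I
        have h20 : (2 : 𝕜) * I * (σ g x y - (a : 𝕜) * ⟪y, x⟫) = 0 := by
          linear_combination (I : 𝕜) * e1 - e2 + (σ g x y - (a : 𝕜) * ⟪y, x⟫) * hcI
        have := mul_eq_zero.mp h20
        rcases this with h' | h'
        · exact absurd h' (mul_ne_zero two_ne_zero hIne)
        · linear_combination h'
    -- assemble
    set r0 : ℝ := re (σ g g g) with hr0
    refine ⟨a, (r0 - a * ‖g‖ ^ 2) / ‖g‖ ^ 4, fun f h => ?_⟩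
    obtain ⟨cf, f', hfdec, hgf', hgf⟩ := decomp f
    obtain ⟨ch, h', hhdec, hgh', hgh⟩ := decomp h
    have hf'g : ⟪f', g⟫ = 0 := inner_eq_zero_symm.mp hgf'
    have hh'g : ⟪h', g⟫ = 0 := inner_eq_zero_symm.mp hgh'
    have c1 : σ g g h' = 0 := hgy0 h' hgh'
    have c2 : σ g f' g = 0 := hyg0 f' hgf'
    have c3 : σ g f' h' = (a : 𝕜) * ⟪h', f'⟫ := offd f' h' hgf' hgh'
    rw [hfdec, hhdec]
    simp only [h1, h3, h2, h4, inner_add_left, inner_add_right, inner_smul_left,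
      inner_smul_right, inner_self_eq_norm_sq_to_K, hgf', hgh', hf'g, hh'g, c1, c2, c3, hggr]
    push_cast
    field_simp
    ring
  · -- no unit vector orthogonal to g : every vector is a multiple of g
    push_neg at hu
    have horth : ∀ x : H, ⟪g, x⟫ = 0 → x = 0 := by
      intro x hx
      by_contra hx0
      have hnx : ‖x‖ ≠ 0 := norm_ne_zero_iff.mpr hx0
      refine hu (((‖x‖⁻¹ : ℝ) : 𝕜) • x) ?_ ?_
      · rw [inner_smul_right, hx, mul_zero]
      · rw [norm_smul, RCLike.norm_ofReal, abs_of_nonneg (by positivity)]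
        field_simp
    set r0 : ℝ := re (σ g g g) with hr0
    refine ⟨0, r0 / ‖g‖ ^ 4, fun f h => ?_⟩
    obtain ⟨cf, f', hfdec, hgf', hgf⟩ := decomp f
    obtain ⟨ch, h', hhdec, hgh', hgh⟩ := decomp h
    have hf0 : f' = 0 := horth f' hgf'
    have hh0 : h' = 0 := horth h' hgh'
    rw [hf0, add_zero] at hfdec
    rw [hh0, add_zero] at hhdec
    rw [hfdec, hhdec, h2, h4, hggr]
    simp only [inner_smul_left, inner_smul_right, inner_self_eq_norm_sq_to_K]
    push_cast
    field_simp
    ring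
end Aux

/-- a sesquilinear field `σ` on an isometry-invariant open set `G` with
`0 ∉ G` is isometry-invariant iff there are `φ ψ : (0,∞) → ℝ` with
`σ_g(f,h) = φ(‖g‖²)⟨f,h⟩ + ψ(‖g‖²)⟨f,g⟩⟨g,h⟩`. -/
theorem stmt5 {𝕜 H : Type*} [RCLike 𝕜] [NormedAddCommGroup H] [InnerProductSpace 𝕜 H]
    (G : Set H) (hG : IsInvariantOpen G) (h0G : (0 : H) ∉ G)
    (σ : H → H → H → 𝕜) (hσ : IsSesquiField 𝕜 G σ) :
    (∀ T : H →ₗᵢ[𝕜] H, ∀ g ∈ G, ∀ f h : H, σ (T g) (T f) (T h) = σ g f h) ↔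
      ∃ φ ψ : ℝ → ℝ, ∀ g ∈ G, ∀ f h : H,
        σ g f h = (φ (‖g‖ ^ 2) : 𝕜) * (inner 𝕜 h f : 𝕜) +
          (ψ (‖g‖ ^ 2) : 𝕜) * (inner 𝕜 g f : 𝕜) * (inner 𝕜 h g : 𝕜) := by
  constructor
  · intro hinv
    classical
    have main : ∀ g, g ∈ G → ∃ a b : ℝ, ∀ f h : H, σ g f h =
        (a : 𝕜) * (inner 𝕜 h f : 𝕜) + (b : 𝕜) * (inner 𝕜 g f : 𝕜) * (inner 𝕜 h g : 𝕜) := by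
      intro g hgG
      obtain ⟨hh1, hh2, hh3, hh4, hh5⟩ := hσ g hgG
      have hg0 : g ≠ 0 := fun h => h0G (h ▸ hgG)
      exact pointwise_rep hg0 hh1 hh2 hh3 hh4 hh5
        (fun T hTg f h => by nth_rewrite 1 [← hTg]; exact hinv T g hgG f h)
    choose a b hab using main
    refine ⟨fun t => if ht : ∃ g, g ∈ G ∧ ‖g‖ ^ 2 = t then a ht.choose ht.choose_spec.1 else 0,
            fun t => if ht : ∃ g, g ∈ G ∧ ‖g‖ ^ 2 = t then b ht.choose ht.choose_spec.1 else 0,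
            ?_⟩
    intro g hgG f h
    have ht : ∃ g', g' ∈ G ∧ ‖g'‖ ^ 2 = ‖g‖ ^ 2 := ⟨g, hgG, rfl⟩
    simp only [dif_pos ht]
    obtain ⟨hg0G, hnorm2⟩ := ht.choose_spec
    have hnorm : ‖ht.choose‖ = ‖g‖ := by
      have h1 : ‖ht.choose‖ = Real.sqrt (‖ht.choose‖ ^ 2) := (Real.sqrt_sq (norm_nonneg _)).symm
      rw [h1, hnorm2, Real.sqrt_sq (norm_nonneg _)]
    have hg00 : ht.choose ≠ 0 := fun h' => h0G (h' ▸ hg0G)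
    obtain ⟨T, S, hT, hS, hTS⟩ := exists_isometry_pair (𝕜 := 𝕜) ht.choose g hg00 hnorm
    have e0 : σ g f h = σ ht.choose (S f) (S h) := by
      conv_lhs => rw [← hT, ← hTS f, ← hTS h]
      exact hinv T ht.choose hg0G (S f) (S h)
    rw [e0, hab ht.choose hg0G (S f) (S h)]
    have i1 : (inner 𝕜 (S h) (S f) : 𝕜) = (inner 𝕜 h f : 𝕜) := S.inner_map_map h f
    have i2 : (inner 𝕜 ht.choose (S f) : 𝕜) = (inner 𝕜 g f : 𝕜) := by
      rw [← hS]; exact S.inner_map_map g f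
    have i3 : (inner 𝕜 (S h) ht.choose : 𝕜) = (inner 𝕜 h g : 𝕜) := by
      rw [← hS]; exact S.inner_map_map h g
    rw [i1, i2, i3]
  · rintro ⟨φ, ψ, hrep⟩ T g hgG f h
    obtain ⟨R, -, hGR⟩ := hG
    have hTg : T g ∈ G := by
      rw [hGR] at hgG ⊢
      simpa [T.norm_map] using hgG
    rw [hrep (T g) hTg (T f) (T h), hrep g hgG f h, T.norm_map,
      T.inner_map_map, T.inner_map_map, T.inner_map_map]
end

section
/- Let α > 0 with α ≠ 1, and let ρ be an isometry-invariant Finsler metric on H \ {0}. Then ρ is invariant with respect to the homothety x ↦ α·x (i.e., ρ_{αg}(αh) = ρ_g(h) for all nonzero g and all h) if and only if there exists a function ϑ : (0,∞) × [0, π/2] → ℝ satisfying ϑ(α·r, τ) = ϑ(r, τ) for all r > 0 and τ ∈ [0, π/2], such that ρ_g(h) = (‖h‖/‖g‖)·ϑ(‖g‖, ∠(g,h)) for every g ∈ H \ {0} and every h ∈ H \ {0}. -/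
open RCLike

/-- The acute angle `∠(g,h) = arccos(|⟨h,g⟩| / (‖h‖‖g‖))` between nonzero vectors. -/
noncomputable def acuteAngle (𝕜 : Type*) {H : Type*} [RCLike 𝕜] [NormedAddCommGroup H]
    [InnerProductSpace 𝕜 H] (g h : H) : ℝ :=
  Real.arccos (‖(inner 𝕜 g h : 𝕜)‖ / (‖h‖ * ‖g‖))

section Aux

variable {𝕜 H : Type*} [RCLike 𝕜] [NormedAddCommGroup H] [InnerProductSpace 𝕜 H]

local notation "⟪" x ", " y "⟫" => @inner 𝕜 _ _ x y

/-- Elementary rank-one perturbation isometry. -/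
lemma elem_iso (γ : 𝕜) (w : H) (hγ : 2 * re γ + ‖γ‖ ^ 2 * ‖w‖ ^ 2 = 0) :
    ∃ T : H →ₗᵢ[𝕜] H, ∀ x : H, T x = x + (γ * ⟪w, x⟫) • w := by
  refine ⟨⟨{ toFun := fun x => x + (γ * ⟪w, x⟫) • w
             map_add' := fun a b => by
               simp [inner_add_right, mul_add, add_smul]; abel
             map_smul' := fun c a => by
               simp [inner_smul_right, smul_add, smul_smul, mul_left_comm] }, fun x => ?_⟩,
    fun x => rfl⟩
  have h2 : ‖x + (γ * ⟪w, x⟫) • w‖ ^ 2 = ‖x‖ ^ 2 := by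
    rw [@norm_add_sq 𝕜]
    have e1 : ⟪x, (γ * ⟪w, x⟫) • w⟫ = γ * ((‖⟪w, x⟫‖ : 𝕜) ^ 2) := by
      rw [inner_smul_right, mul_assoc, ← inner_conj_symm w x, RCLike.conj_mul]
      rw [← inner_conj_symm x w]
      simp only [RCLike.norm_conj, mul_eq_mul_left_iff]
    have e2 : re ⟪x, (γ * ⟪w, x⟫) • w⟫ = re γ * ‖⟪w, x⟫‖ ^ 2 := by
      rw [e1, ← RCLike.ofReal_pow, RCLike.mul_re, RCLike.ofReal_re, RCLike.ofReal_im]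
      ring
    have e3 : ‖(γ * ⟪w, x⟫) • w‖ ^ 2 = ‖γ‖ ^ 2 * ‖⟪w, x⟫‖ ^ 2 * ‖w‖ ^ 2 := by
      rw [norm_smul, norm_mul]; ring
    rw [e2, e3]
    nlinarith [hγ, sq_nonneg ‖⟪w, x⟫‖]
  have := congrArg Real.sqrt h2
  simpa [Real.sqrt_sq (norm_nonneg _)] using this

/-- scalar multiplication by a unimodular `c` on the line spanned by `v`, identity
on its orthogonal complement -/
lemma scalar_iso (c : 𝕜) (hc : ‖c‖ = 1) (v : H) (hv : v ≠ 0) :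
    ∃ T : H →ₗᵢ[𝕜] H, T v = c • v ∧ ∀ x : H, ⟪v, x⟫ = 0 → T x = x := by
  have hvn : (‖v‖ : ℝ) ≠ 0 := norm_ne_zero_iff.mpr hv
  set e : H := ((‖v‖ : 𝕜))⁻¹ • v with he
  have hγ : 2 * re (c - 1) + ‖c - 1‖ ^ 2 * ‖e‖ ^ 2 = 0 := by
    have hne : ‖e‖ = 1 := by
      rw [he, norm_smul]
      simp [norm_inv, hvn]
    have h1 : ‖c - 1‖ ^ 2 = ‖c‖ ^ 2 - 2 * re c + 1 := by
      have := @norm_sub_sq 𝕜 𝕜 _ _ _ c 1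
      simpa using this
    rw [hne, h1, hc]
    have hre : re (c - 1) = re c - 1 := by rw [map_sub, RCLike.one_re]
    rw [hre]; ring
  obtain ⟨T, hT⟩ := elem_iso (c - 1) e hγ
  have hK : ((‖v‖ : ℝ) : 𝕜) ≠ 0 := RCLike.ofReal_ne_zero.mpr hvn
  have hev : ⟪e, v⟫ = (‖v‖ : 𝕜) := by
    rw [he, inner_smul_left, map_inv₀, RCLike.conj_ofReal, inner_self_eq_norm_sq_to_K,
      pow_two, ← mul_assoc, inv_mul_cancel₀ hK, one_mul]
  refine ⟨T, ?_, fun x hx => ?_⟩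
  · rw [hT, hev, he, smul_smul]
    have : (c - 1) * (‖v‖ : 𝕜) * (‖v‖ : 𝕜)⁻¹ = c - 1 := by
      rw [mul_assoc, mul_inv_cancel₀ hK, mul_one]
    rw [this, sub_smul, one_smul]
    abel
  · have : ⟪e, x⟫ = 0 := by rw [he, inner_smul_left, hx, mul_zero]
    rw [hT, this, mul_zero, zero_smul, add_zero]

/-- transitivity of the isometry group on spheres, fixing common orthogonal vectors -/
lemma sphere_iso (u v : H) (huv : ‖u‖ = ‖v‖) :
    ∃ T : H →ₗᵢ[𝕜] H, T u = v ∧ ∀ x : H, ⟪u, x⟫ = 0 → ⟪v, x⟫ = 0 → T x = x := by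
  rcases eq_or_ne u 0 with hu | hu
  · have hv : v = 0 := by
      rw [← norm_eq_zero, ← huv, hu, norm_zero]
    exact ⟨LinearIsometry.id, by simp [hu, hv], fun x _ _ => rfl⟩
  have hv : v ≠ 0 := by
    intro h; apply hu
    rw [← norm_eq_zero, huv, h, norm_zero]
  set c : 𝕜 := if ⟪u, v⟫ = 0 then 1 else (starRingEnd 𝕜) ⟪u, v⟫ / (‖⟪u, v⟫‖ : 𝕜) with hcdef
  have hc : ‖c‖ = 1 := by
    rw [hcdef]
    split_ifs with h
    · simp
    · rw [norm_div, RCLike.norm_conj]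
      simp [norm_ne_zero_iff.mpr h]
  have hreal : ⟪u, c • v⟫ = (‖⟪u, v⟫‖ : 𝕜) := by
    rw [inner_smul_right, hcdef]
    split_ifs with h
    · simp [h]
    · rw [div_mul_eq_mul_div, RCLike.conj_mul]
      rw [← RCLike.ofReal_pow]
      rw [sq]
      rw [RCLike.ofReal_mul]
      field_simp [norm_ne_zero_iff.mpr h]
  set v' : H := c • v with hv'def
  have hnv' : ‖v'‖ = ‖u‖ := by rw [hv'def, norm_smul, hc, one_mul, huv]
  -- second map: scalar (conj c) on line v
  obtain ⟨S, hSv, hSfix⟩ := scalar_iso ((starRingEnd 𝕜) c) (by rw [RCLike.norm_conj, hc]) v hv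
  have hSv' : S v' = v := by
    rw [hv'def, map_smul, hSv, smul_smul, RCLike.mul_conj, hc]
    norm_num
  rcases eq_or_ne u v' with huv' | huv'
  · refine ⟨S, by rw [huv']; exact hSv', fun x hx hx2 => hSfix x hx2⟩
  -- first map: reflection swapping u and v'
  · set w : H := u - v' with hwdef
    have hw : w ≠ 0 := sub_ne_zero.mpr huv'
    have hwn : (‖w‖ : ℝ) ≠ 0 := norm_ne_zero_iff.mpr hw
    set e : H := ((‖w‖ : 𝕜))⁻¹ • w with he
    have hne : ‖e‖ = 1 := by
      rw [he, norm_smul]; simp [norm_inv, hwn]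
    have hγ : 2 * re (-2 : 𝕜) + ‖(-2 : 𝕜)‖ ^ 2 * ‖e‖ ^ 2 = 0 := by
      rw [hne]; simp; norm_num
    obtain ⟨R, hR⟩ := elem_iso (-2 : 𝕜) e hγ
    have hkey : (2 : 𝕜) * ⟪w, u⟫ = ((‖w‖ : ℝ) ^ 2 : ℝ) := by
      have hvu : ⟪v', u⟫ = (‖⟪u, v⟫‖ : 𝕜) := by
        have h := congrArg (starRingEnd 𝕜) hreal
        rwa [inner_conj_symm, RCLike.conj_ofReal] at h
      have hww : ((‖w‖ : ℝ) ^ 2 : ℝ) = (re ⟪w, w⟫ : ℝ) := by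
        rw [← @inner_self_eq_norm_sq 𝕜]
      have hinner_ww : ⟪w, w⟫ = 2 * ((‖u‖ : ℝ) ^ 2 : ℝ) - 2 * (‖⟪u, v⟫‖ : 𝕜) := by
        have hu2 : ⟪u, u⟫ = ((‖u‖ : 𝕜)) ^ 2 := inner_self_eq_norm_sq_to_K u
        have hv2 : ⟪v', v'⟫ = ((‖u‖ : 𝕜)) ^ 2 := by
          rw [inner_self_eq_norm_sq_to_K, hnv']
        rw [hwdef, inner_sub_sub_self, hreal, hvu, hu2, hv2]
        push_cast
        ring
      have hwu : ⟪w, u⟫ = ((‖u‖ : ℝ) ^ 2 : ℝ) - (‖⟪u, v⟫‖ : 𝕜) := by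
        rw [hwdef, inner_sub_left, hvu, inner_self_eq_norm_sq_to_K]
        push_cast; ring
      rw [hwu, hww]
      rw [hinner_ww]
      have : re ((2 : 𝕜) * ((‖u‖:ℝ)^2 : ℝ) - 2 * ((‖⟪u,v⟫‖:ℝ) : 𝕜)) = 2 * (‖u‖:ℝ)^2 - 2 * ‖⟪u,v⟫‖ := by
        simp [RCLike.ofReal_pow]
      rw [this]
      push_cast
      ring
    have hRu : R u = v' := by
      rw [hR]
      have heu : ⟪e, u⟫ = (‖w‖ : 𝕜)⁻¹ * ⟪w, u⟫ := by
        rw [he, inner_smul_left, map_inv₀, RCLike.conj_ofReal]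
      rw [heu, he, smul_smul]
      have hcoef : (-2 : 𝕜) * ((‖w‖ : 𝕜)⁻¹ * ⟪w, u⟫) * (‖w‖ : 𝕜)⁻¹ = -1 := by
        have h2 : ⟪w, u⟫ = ((‖w‖ : ℝ)^2 : ℝ) / 2 := by
          field_simp at hkey ⊢
          linear_combination hkey
        rw [h2]
        have hW : ((‖w‖^2 : ℝ) : 𝕜) = (‖w‖ : 𝕜) * (‖w‖ : 𝕜) := by push_cast; ring
        rw [hW]
        have hK : ((‖w‖ : ℝ) : 𝕜) ≠ 0 := RCLike.ofReal_ne_zero.mpr hwn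
        field_simp
      rw [hcoef, hwdef]
      simp
    refine ⟨S.comp R, ?_, fun x hx hx2 => ?_⟩
    · show S (R u) = v
      rw [hRu, hSv']
    · have hex : ⟪e, x⟫ = 0 := by
        rw [he, inner_smul_left, hwdef, inner_sub_left, hx, hv'def, inner_smul_left, hx2]
        simp
      have hRx : R x = x := by rw [hR, hex, mul_zero, zero_smul, add_zero]
      show S (R x) = x
      rw [hRx, hSfix x hx2]

/-- transitivity on pairs with equal norms and equal inner products -/
lemma pair_iso (g g' h h' : H) (hgg : ‖g‖ = ‖g'‖) (hhh : ‖h‖ = ‖h'‖)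
    (hin : ⟪g, h⟫ = ⟪g', h'⟫) : ∃ T : H →ₗᵢ[𝕜] H, T g = g' ∧ T h = h' := by
  obtain ⟨T₁, hT₁, _⟩ := sphere_iso (𝕜 := 𝕜) g g' hgg
  set h₁ : H := T₁ h with hh₁
  have hih : ⟪g', h₁⟫ = ⟪g', h'⟫ := by
    rw [hh₁, ← hT₁, T₁.inner_map_map, hin, hT₁]
  have hnh : ‖h₁‖ = ‖h'‖ := by rw [hh₁, T₁.norm_map, hhh]
  rcases eq_or_ne g' 0 with hg' | hg'
  · have hg : g = 0 := by rw [← norm_eq_zero, hgg, hg', norm_zero]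
    obtain ⟨T, hT, _⟩ := sphere_iso (𝕜 := 𝕜) h h' hhh
    exact ⟨T, by rw [hg, hg', map_zero], hT⟩
  · have hgn : (‖g'‖ : ℝ) ≠ 0 := norm_ne_zero_iff.mpr hg'
    have hgK : ((‖g'‖ : ℝ) : 𝕜) ≠ 0 := RCLike.ofReal_ne_zero.mpr hgn
    set k : 𝕜 := ⟪g', h'⟫ / ((‖g'‖ : 𝕜) ^ 2) with hk
    set w₁ : H := h₁ - k • g' with hw₁
    set w₂ : H := h' - k • g' with hw₂
    have horth₁ : ⟪g', w₁⟫ = 0 := by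
      rw [hw₁, inner_sub_right, inner_smul_right, inner_self_eq_norm_sq_to_K, hih, hk]
      field_simp
      simp
    have horth₂ : ⟪g', w₂⟫ = 0 := by
      rw [hw₂, inner_sub_right, inner_smul_right, inner_self_eq_norm_sq_to_K, hk]
      field_simp
      simp
    have hnw : ‖w₁‖ = ‖w₂‖ := by
      have e₁ : ‖h₁‖ ^ 2 = ‖k • g'‖ ^ 2 + ‖w₁‖ ^ 2 := by
        have : h₁ = k • g' + w₁ := by rw [hw₁]; abel
        rw [this]
        have hsz : ⟪k • g', w₁⟫ = 0 := by rw [inner_smul_left, horth₁, mul_zero]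
        have := norm_add_sq_eq_norm_sq_add_norm_sq_of_inner_eq_zero _ _ hsz
        rw [pow_two, pow_two, pow_two]
        exact this
      have e₂ : ‖h'‖ ^ 2 = ‖k • g'‖ ^ 2 + ‖w₂‖ ^ 2 := by
        have : h' = k • g' + w₂ := by rw [hw₂]; abel
        rw [this]
        have hsz : ⟪k • g', w₂⟫ = 0 := by rw [inner_smul_left, horth₂, mul_zero]
        have := norm_add_sq_eq_norm_sq_add_norm_sq_of_inner_eq_zero _ _ hsz
        rw [pow_two, pow_two, pow_two]
        exact this
      have : ‖w₁‖ ^ 2 = ‖w₂‖ ^ 2 := by rw [hnh] at e₁; linarith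
      have := congrArg Real.sqrt this
      simpa [Real.sqrt_sq (norm_nonneg _)] using this
    obtain ⟨T₂, hT₂, hfix₂⟩ := sphere_iso (𝕜 := 𝕜) w₁ w₂ hnw
    have hg'fix : T₂ g' = g' := by
      refine hfix₂ g' ?_ ?_
      · have hcg := congrArg (starRingEnd 𝕜) horth₁
        rwa [inner_conj_symm, map_zero] at hcg
      · have hcg := congrArg (starRingEnd 𝕜) horth₂
        rwa [inner_conj_symm, map_zero] at hcg
    refine ⟨T₂.comp T₁, ?_, ?_⟩
    · show T₂ (T₁ g) = g'
      rw [hT₁, hg'fix]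
    · show T₂ (T₁ h) = h'
      have : T₁ h = k • g' + w₁ := by rw [← hh₁, hw₁]; abel
      rw [this, map_add, map_smul, hg'fix, hT₂, hw₂]
      abel

lemma acuteAngle_smul_left (a : 𝕜) (ha : a ≠ 0) (g h : H) :
    acuteAngle 𝕜 (a • g) h = acuteAngle 𝕜 g h := by
  unfold acuteAngle
  congr 1
  rw [inner_smul_left, norm_mul, RCLike.norm_conj, norm_smul]
  have hd : ‖h‖ * (‖a‖ * ‖g‖) = ‖a‖ * (‖h‖ * ‖g‖) := by ring
  rw [hd, mul_div_mul_left _ _ (norm_ne_zero_iff.mpr ha)]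

lemma acuteAngle_smul_right (a : 𝕜) (ha : a ≠ 0) (g h : H) :
    acuteAngle 𝕜 g (a • h) = acuteAngle 𝕜 g h := by
  unfold acuteAngle
  congr 1
  rw [inner_smul_right, norm_mul, norm_smul]
  have hd : ‖a‖ * ‖h‖ * ‖g‖ = ‖a‖ * (‖h‖ * ‖g‖) := by ring
  rw [hd, mul_div_mul_left _ _ (norm_ne_zero_iff.mpr ha)]

lemma acuteAngle_mem (g h : H) : acuteAngle 𝕜 g h ∈ Set.Icc (0:ℝ) (Real.pi / 2) := by
  refine ⟨Real.arccos_nonneg _, Real.arccos_le_pi_div_two.2 ?_⟩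
  positivity

/-- key invariance: `ρ` depends only on the norms and the acute angle -/
lemma rho_congr (ρ : H → H → ℝ)
    (hFinsler : ∀ g : H, g ≠ 0 → ∀ h : H, ∀ r : 𝕜, ρ g (r • h) = ‖r‖ * ρ g h)
    (hinv : ∀ T : H →ₗᵢ[𝕜] H, ∀ g : H, g ≠ 0 → ∀ h : H, ρ (T g) (T h) = ρ g h)
    {g h g' h' : H} (hg : g ≠ 0) (hg' : g' ≠ 0)
    (h1 : ‖g‖ = ‖g'‖) (h2 : ‖h‖ = ‖h'‖)
    (h3 : acuteAngle 𝕜 g h = acuteAngle 𝕜 g' h') : ρ g h = ρ g' h' := by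
  rcases eq_or_ne h 0 with hh | hh
  · have hh' : h' = 0 := by rw [← norm_eq_zero, ← h2, hh, norm_zero]
    have z1 : ρ g 0 = 0 := by
      have := hFinsler g hg 0 0
      simpa using this
    have z2 : ρ g' 0 = 0 := by
      have := hFinsler g' hg' 0 0
      simpa using this
    rw [hh, hh', z1, z2]
  have hh' : h' ≠ 0 := by
    intro hz; apply hh; rw [← norm_eq_zero, h2, hz, norm_zero]
  have hgp : (0:ℝ) < ‖h‖ * ‖g‖ :=
    mul_pos (norm_pos_iff.mpr hh) (norm_pos_iff.mpr hg)
  have hgp' : (0:ℝ) < ‖h'‖ * ‖g'‖ :=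
    mul_pos (norm_pos_iff.mpr hh') (norm_pos_iff.mpr hg')
  have hmem : ‖⟪g, h⟫‖ / (‖h‖ * ‖g‖) ∈ Set.Icc (-1:ℝ) 1 := by
    constructor
    · have : (0:ℝ) ≤ ‖⟪g, h⟫‖ / (‖h‖ * ‖g‖) := by positivity
      linarith
    · rw [div_le_one hgp]
      calc ‖⟪g, h⟫‖ ≤ ‖g‖ * ‖h‖ := norm_inner_le_norm g h
        _ = ‖h‖ * ‖g‖ := by ring
  have hmem' : ‖⟪g', h'⟫‖ / (‖h'‖ * ‖g'‖) ∈ Set.Icc (-1:ℝ) 1 := by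
    constructor
    · have : (0:ℝ) ≤ ‖⟪g', h'⟫‖ / (‖h'‖ * ‖g'‖) := by positivity
      linarith
    · rw [div_le_one hgp']
      calc ‖⟪g', h'⟫‖ ≤ ‖g'‖ * ‖h'‖ := norm_inner_le_norm g' h'
        _ = ‖h'‖ * ‖g'‖ := by ring
  have hX : ‖⟪g, h⟫‖ / (‖h‖ * ‖g‖) = ‖⟪g', h'⟫‖ / (‖h'‖ * ‖g'‖) :=
    Real.arccos_injOn hmem hmem' h3
  have hni : ‖⟪g, h⟫‖ = ‖⟪g', h'⟫‖ := by
    rw [h1, h2] at hX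
    field_simp at hX
    exact hX
  set c : 𝕜 := if ⟪g', h'⟫ = 0 then 1 else ⟪g, h⟫ / ⟪g', h'⟫ with hcdef
  have hc : ‖c‖ = 1 := by
    rw [hcdef]
    split_ifs with hz
    · simp
    · rw [norm_div, hni, div_self (norm_ne_zero_iff.mpr hz)]
  have hinner : ⟪g, h⟫ = ⟪g', c • h'⟫ := by
    rw [inner_smul_right, hcdef]
    split_ifs with hz
    · rw [hz, mul_zero, ← norm_eq_zero, hni, hz, norm_zero]
    · rw [div_mul_cancel₀ _ hz]
  have hnorm : ‖h‖ = ‖c • h'‖ := by rw [norm_smul, hc, one_mul, h2]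
  obtain ⟨T, hTg, hTh⟩ := pair_iso g g' h (c • h') h1 hnorm hinner
  calc ρ g h = ρ (T g) (T h) := (hinv T g hg h).symm
    _ = ρ g' (c • h') := by rw [hTg, hTh]
    _ = ‖c‖ * ρ g' h' := hFinsler g' hg' h' c
    _ = ρ g' h' := by rw [hc, one_mul]

end Aux

/-- an isometry-invariant Finsler metric `ρ` on `H \ {0}` is invariant
with respect to the homothety `x ↦ α x` (`α > 0`, `α ≠ 1`) iff there is
`ϑ : (0,∞) × [0,π/2] → ℝ` with `ϑ(αr,τ) = ϑ(r,τ)` such that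
`ρ_g(h) = (‖h‖/‖g‖) ϑ(‖g‖, ∠(g,h))` for all nonzero `g, h`. -/
theorem stmt7 {𝕜 H : Type*} [RCLike 𝕜] [NormedAddCommGroup H] [InnerProductSpace 𝕜 H]
    (α : ℝ) (hα : 0 < α) (hα1 : α ≠ 1)
    (ρ : H → H → ℝ)
    (hFinsler : ∀ g : H, g ≠ 0 → ∀ h : H, ∀ r : 𝕜, ρ g (r • h) = ‖r‖ * ρ g h)
    (hinv : ∀ T : H →ₗᵢ[𝕜] H, ∀ g : H, g ≠ 0 → ∀ h : H, ρ (T g) (T h) = ρ g h) :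
    (∀ g : H, g ≠ 0 → ∀ h : H, ρ ((α : 𝕜) • g) ((α : 𝕜) • h) = ρ g h) ↔
      ∃ ϑ : ℝ → ℝ → ℝ,
        (∀ r > (0 : ℝ), ∀ τ ∈ Set.Icc (0 : ℝ) (Real.pi / 2), ϑ (α * r) τ = ϑ r τ) ∧
        (∀ g h : H, g ≠ 0 → h ≠ 0 →
          ρ g h = ‖h‖ / ‖g‖ * ϑ ‖g‖ (acuteAngle 𝕜 g h)) := by
  classical
  have hαK : ((α : ℝ) : 𝕜) ≠ 0 := RCLike.ofReal_ne_zero.mpr hα.ne'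
  have hαn : ‖((α : ℝ) : 𝕜)‖ = α := by
    rw [RCLike.norm_ofReal, abs_of_pos hα]
  constructor
  · intro hom
    set P : ℝ → ℝ → Prop := fun r τ => ∃ p : H × H,
      p.1 ≠ 0 ∧ p.2 ≠ 0 ∧ ‖p.1‖ = r ∧ ‖p.2‖ = 1 ∧ acuteAngle 𝕜 p.1 p.2 = τ with hP
    refine ⟨fun r τ => if hp : P r τ then r * ρ hp.choose.1 hp.choose.2 else 0, ?_, ?_⟩
    · -- periodicity
      have hwd : ∀ (r τ : ℝ) (g h : H), g ≠ 0 → h ≠ 0 → ‖g‖ = r → ‖h‖ = 1 →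
          acuteAngle 𝕜 g h = τ →
          (if hp : P r τ then r * ρ hp.choose.1 hp.choose.2 else 0) = r * ρ g h := by
        intro r τ g h hg hh e1 e2 e3
        have hp : P r τ := ⟨(g, h), hg, hh, e1, e2, e3⟩
        rw [dif_pos hp]
        obtain ⟨q1, q2, q3, q4, q5⟩ := hp.choose_spec
        congr 1
        exact rho_congr ρ hFinsler hinv q1 hg (by rw [q3, e1]) (by rw [q4, e2])
          (by rw [q5, e3])
      intro r hr τ _
      by_cases hp : P r τ
      · obtain ⟨⟨g, h⟩, hg, hh, e1, e2, e3⟩ := hp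
        have hga : ((α : ℝ) : 𝕜) • g ≠ 0 := smul_ne_zero hαK hg
        have hna : ‖((α : ℝ) : 𝕜) • g‖ = α * r := by rw [norm_smul, hαn, e1]
        have h4 : acuteAngle 𝕜 (((α : ℝ) : 𝕜) • g) h = τ := by
          rw [acuteAngle_smul_left _ hαK, e3]
        beta_reduce
        rw [hwd (α * r) τ (((α : ℝ) : 𝕜) • g) h hga hh hna e2 h4,
          hwd r τ g h hg hh e1 e2 e3]
        have k1 : ρ (((α : ℝ) : 𝕜) • g) (((α : ℝ) : 𝕜) • h) = ρ g h := hom g hg h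
        have k2 : ρ (((α : ℝ) : 𝕜) • g) (((α : ℝ) : 𝕜) • h)
            = α * ρ (((α : ℝ) : 𝕜) • g) h := by
          rw [hFinsler _ hga h _, hαn]
        have k3 : α * ρ (((α : ℝ) : 𝕜) • g) h = ρ g h := by rw [← k2, k1]
        nlinarith [k3]
      · have hp' : ¬ P (α * r) τ := by
          rintro ⟨⟨g, h⟩, hg, hh, e1, e2, e3⟩
          apply hp
          refine ⟨((((α : ℝ) : 𝕜))⁻¹ • g, h), smul_ne_zero (inv_ne_zero hαK) hg, hh, ?_, e2, ?_⟩
          · rw [norm_smul, norm_inv, hαn, e1]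
            field_simp
          · rw [acuteAngle_smul_left _ (inv_ne_zero hαK), e3]
        beta_reduce
        rw [dif_neg hp, dif_neg hp']
    · -- representation
      intro g h hg hh
      have hhn : (‖h‖ : ℝ) ≠ 0 := norm_ne_zero_iff.mpr hh
      have hgn : (‖g‖ : ℝ) ≠ 0 := norm_ne_zero_iff.mpr hg
      have hhK : ((‖h‖ : ℝ) : 𝕜) ≠ 0 := RCLike.ofReal_ne_zero.mpr hhn
      set h₀ : H := (((‖h‖ : ℝ) : 𝕜))⁻¹ • h with hh₀
      have hh₀ne : h₀ ≠ 0 := smul_ne_zero (inv_ne_zero hhK) hh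
      have hh₀n : ‖h₀‖ = 1 := by
        rw [hh₀, norm_smul, norm_inv, RCLike.norm_ofReal, abs_of_nonneg (norm_nonneg h)]
        field_simp
      have hang : acuteAngle 𝕜 g h₀ = acuteAngle 𝕜 g h := by
        rw [hh₀, acuteAngle_smul_right _ (inv_ne_zero hhK)]
      have hp : P ‖g‖ (acuteAngle 𝕜 g h) := ⟨(g, h₀), hg, hh₀ne, rfl, hh₀n, hang⟩
      beta_reduce
      rw [dif_pos hp]
      obtain ⟨q1, q2, q3, q4, q5⟩ := hp.choose_spec
      have hval : ρ hp.choose.1 hp.choose.2 = ρ g h₀ :=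
        rho_congr ρ hFinsler hinv q1 hg q3 (by rw [q4, hh₀n]) (by rw [q5, hang])
      have hsc : ρ g h = ‖h‖ * ρ g h₀ := by
        have : (((‖h‖ : ℝ) : 𝕜)) • h₀ = h := by
          rw [hh₀, smul_smul, mul_inv_cancel₀ hhK, one_smul]
        conv_lhs => rw [← this]
        rw [hFinsler g hg h₀ _, RCLike.norm_ofReal, abs_of_nonneg (norm_nonneg h)]
      rw [hval, hsc]
      field_simp
  · -- reverse direction
    rintro ⟨ϑ, hper, hrep⟩ g hg h
    have hga : ((α : ℝ) : 𝕜) • g ≠ 0 := smul_ne_zero hαK hg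
    rcases eq_or_ne h 0 with hh | hh
    · have z1 : ρ g 0 = 0 := by have := hFinsler g hg 0 0; simpa using this
      have z2 : ρ (((α : ℝ) : 𝕜) • g) 0 = 0 := by
        have := hFinsler _ hga 0 0; simpa using this
      rw [hh, smul_zero, z1, z2]
    · have hha : ((α : ℝ) : 𝕜) • h ≠ 0 := smul_ne_zero hαK hh
      rw [hrep _ _ hga hha, hrep _ _ hg hh]
      have e1 : ‖((α : ℝ) : 𝕜) • h‖ / ‖((α : ℝ) : 𝕜) • g‖ = ‖h‖ / ‖g‖ := by
        rw [norm_smul, norm_smul, hαn]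
        rw [mul_div_mul_left _ _ hα.ne']
      have e2 : acuteAngle 𝕜 (((α : ℝ) : 𝕜) • g) (((α : ℝ) : 𝕜) • h) = acuteAngle 𝕜 g h := by
        rw [acuteAngle_smul_left _ hαK, acuteAngle_smul_right _ hαK]
      have e3 : ‖((α : ℝ) : 𝕜) • g‖ = α * ‖g‖ := by rw [norm_smul, hαn]
      rw [e1, e2, e3, hper ‖g‖ (norm_pos_iff.mpr hg) _ (acuteAngle_mem g h)]
end

section
/- Let ρ be a Finsler metric on H \ {0}. Then ρ is invariant with respect to every congruence of H (i.e., ρ_{Tg}(Th) = ρ_g(h) for every linear map T that is a nonzero scalar multiple of an isometry, and all nonzero g and all h) if and only if there exists a function ϑ : [0, π/2] → ℝ such that ρ_g(h) = (‖h‖/‖g‖)·ϑ(∠(g,h)) for all nonzero g, h ∈ H. -/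
open Module

set_option maxHeartbeats 1000000

section Aux

variable {𝕜 H : Type*} [RCLike 𝕜] [NormedAddCommGroup H] [InnerProductSpace 𝕜 H]

local notation "⟪" x ", " y "⟫" => @inner 𝕜 _ _ x y

/-- Any orthonormal family maps to any other orthonormal family of the same (finite) size
by some linear isometry of the whole space. -/
lemma exists_isometry_map {n : ℕ} {v w : Fin n → H}
    (hv : Orthonormal 𝕜 v) (hw : Orthonormal 𝕜 w) :
    ∃ T : H →ₗᵢ[𝕜] H, ∀ i, T (v i) = w i := by
  classical
  set V : Submodule 𝕜 H := Submodule.span 𝕜 (Set.range v ∪ Set.range w) with hV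
  have hfin : (Set.range v ∪ Set.range w).Finite :=
    (Set.finite_range v).union (Set.finite_range w)
  haveI : FiniteDimensional 𝕜 V := FiniteDimensional.span_of_finite 𝕜 hfin
  haveI : CompleteSpace V := FiniteDimensional.complete 𝕜 V
  have hvV : ∀ i, v i ∈ V := fun i =>
    Submodule.subset_span (Set.mem_union_left _ ⟨i, rfl⟩)
  have hwV : ∀ i, w i ∈ V := fun i =>
    Submodule.subset_span (Set.mem_union_right _ ⟨i, rfl⟩)
  set v' : Fin n → V := fun i => ⟨v i, hvV i⟩ with hv'
  set w' : Fin n → V := fun i => ⟨w i, hwV i⟩ with hw'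
  have hv'o : Orthonormal 𝕜 v' := by
    rw [orthonormal_iff_ite] at hv ⊢
    intro i j; simpa [Submodule.coe_inner] using hv i j
  have hw'o : Orthonormal 𝕜 w' := by
    rw [orthonormal_iff_ite] at hw ⊢
    intro i j; simpa [Submodule.coe_inner] using hw i j
  set d := finrank 𝕜 V with hd
  have hnd : n ≤ d := by
    simpa using hv'o.linearIndependent.fintype_card_le_finrank
  -- extend to orthonormal bases
  have key : ∀ (u' : Fin n → V), Orthonormal 𝕜 u' →
      ∃ b : OrthonormalBasis (Fin d) 𝕜 V, ∀ i : Fin n, b (Fin.castLE hnd i) = u' i := by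
    intro u' hu'
    set s : Set (Fin d) := {i | (i : ℕ) < n} with hs
    set u : Fin d → V := fun i => if h : (i : ℕ) < n then u' ⟨i, h⟩ else 0 with hu
    have hrestrict : Orthonormal 𝕜 (s.restrict u) := by
      rw [orthonormal_iff_ite] at hu' ⊢
      rintro ⟨i, hi⟩ ⟨j, hj⟩
      have hi' : (i : ℕ) < n := hi
      have hj' : (j : ℕ) < n := hj
      have := hu' ⟨i, hi'⟩ ⟨j, hj'⟩
      simp only [Set.restrict_apply, hu, dif_pos hi', dif_pos hj']
      change inner 𝕜 (u i) (u j) = _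
      simp only [hu, dif_pos hi', dif_pos hj']
      rw [this]
      congr 1
      simp [Subtype.ext_iff, Fin.ext_iff]
  
    obtain ⟨b, hb⟩ := hrestrict.exists_orthonormalBasis_extension_of_card_eq (by simp [hd])
    refine ⟨b, fun i => ?_⟩
    have : (Fin.castLE hnd i : Fin d) ∈ s := by simpa [hs] using i.isLt
    rw [hb _ this]
    simp [hu]
  obtain ⟨b, hbv⟩ := key v' hv'o
  obtain ⟨b', hbw⟩ := key w' hw'o
  set U : V ≃ₗᵢ[𝕜] V := b.repr.trans b'.repr.symm with hU
  have hUmap : ∀ i, U (v' i) = w' i := by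
    intro i
    rw [hU, ← hbv i, ← hbw i]
    simp [LinearIsometryEquiv.trans_apply]
  -- build the global isometry
  set P := V.orthogonalProjection with hP
  set Tfun : H → H := fun x => (U (P x) : H) + (x - (P x : H)) with hT
  have hadd : ∀ x y, Tfun (x + y) = Tfun x + Tfun y := by
    intro x y; simp only [hT, map_add]; push_cast; abel
  have hsmul : ∀ (c : 𝕜) x, Tfun (c • x) = c • Tfun x := by
    intro c x; simp only [hT, map_smul]; push_cast; rw [smul_add, smul_sub]
  have hnorm : ∀ x, ‖Tfun x‖ = ‖x‖ := by
    intro x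
    have hmem : x - (P x : H) ∈ Vᗮ := Submodule.sub_starProjection_mem_orthogonal x
    have h1 : ⟪(U (P x) : H), x - (P x : H)⟫ = 0 :=
      (Submodule.mem_orthogonal V _).1 hmem _ (U (P x)).2
    have h2 : ⟪((P x : V) : H), x - (P x : H)⟫ = 0 :=
      (Submodule.mem_orthogonal V _).1 hmem _ (P x).2
    have e1 : ‖Tfun x‖ * ‖Tfun x‖ = ‖(U (P x) : H)‖ * ‖(U (P x) : H)‖ + ‖x - (P x : H)‖ * ‖x - (P x : H)‖ :=
      norm_add_sq_eq_norm_sq_add_norm_sq_of_inner_eq_zero _ _ h1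
    have e2 : ‖x‖ * ‖x‖ = ‖((P x : V) : H)‖ * ‖((P x : V) : H)‖ + ‖x - (P x : H)‖ * ‖x - (P x : H)‖ := by
      have := norm_add_sq_eq_norm_sq_add_norm_sq_of_inner_eq_zero _ _ h2
      simpa using this
    have e3 : ‖(U (P x) : H)‖ = ‖((P x : V) : H)‖ := by
      rw [show ‖(U (P x) : H)‖ = ‖U (P x)‖ from rfl, U.norm_map]; rfl
    have hsq : ‖Tfun x‖ * ‖Tfun x‖ = ‖x‖ * ‖x‖ := by rw [e1, e2, e3]
    exact (mul_self_inj (norm_nonneg _) (norm_nonneg _)).1 hsq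
  refine ⟨⟨{ toFun := Tfun, map_add' := hadd, map_smul' := hsmul }, hnorm⟩, fun i => ?_⟩
  show Tfun (v i) = w i
  have hPv : (P (v i) : H) = v i := Submodule.starProjection_eq_self_iff.2 (hvV i)
  have hPv' : P (v i) = v' i := Subtype.ext hPv
  simp only [hT, hPv', hUmap i, hPv]
  simp [hw', hv']


lemma norm_sub_smul_sq' (t : ℝ) (ht0 : 0 ≤ t) (x y : H) (hx : ‖x‖ = 1) (hy : ‖y‖ = 1)
    (hxy : ⟪x, y⟫ = (t : 𝕜)) : ‖y - (t : 𝕜) • x‖ ^ 2 = 1 - t ^ 2 := by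
  have h1 : ⟪y, (t : 𝕜) • x⟫ = (t : 𝕜) * ⟪y, x⟫ := inner_smul_right _ _ _
  have h2 : ⟪y, x⟫ = (t : 𝕜) := by
    rw [← inner_conj_symm, hxy, RCLike.conj_ofReal]
  have h3 : RCLike.re ⟪y, (t : 𝕜) • x⟫ = t * t := by
    rw [h1, h2, ← RCLike.ofReal_mul, RCLike.ofReal_re]
  have h4 : ‖(t : 𝕜) • x‖ = t := by
    rw [norm_smul, RCLike.norm_ofReal, abs_of_nonneg ht0, hx, mul_one]
  have h5 := norm_sub_sq (𝕜 := 𝕜) y ((t : 𝕜) • x)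
  rw [h5, h3, h4, hy]
  ring

lemma orthonormal_pair' (x f : H) (hx : ‖x‖ = 1) (hf : ‖f‖ = 1) (hxf : ⟪x, f⟫ = 0) :
    Orthonormal 𝕜 ![x, f] := by
  have hfx : ⟪f, x⟫ = 0 := by rw [← inner_conj_symm, hxf, map_zero]
  have hxx : ⟪x, x⟫ = 1 := by
    rw [inner_self_eq_norm_sq_to_K, hx]; norm_num
  have hff : ⟪f, f⟫ = 1 := by
    rw [inner_self_eq_norm_sq_to_K, hf]; norm_num
  rw [orthonormal_iff_ite]
  intro i j
  fin_cases i <;> fin_cases j <;>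
    simp [hxf, hfx, hxx, hff, hx, hf]

lemma exists_isometry_pair_s8 (t : ℝ) (ht0 : 0 ≤ t) (x y x' y' : H)
    (hx : ‖x‖ = 1) (hy : ‖y‖ = 1) (hx' : ‖x'‖ = 1) (hy' : ‖y'‖ = 1)
    (hxy : ⟪x, y⟫ = (t : 𝕜)) (hxy' : ⟪x', y'⟫ = (t : 𝕜)) :
    ∃ T : H →ₗᵢ[𝕜] H, T x = x' ∧ T y = y' := by
  have hsingle : ∀ z : H, ‖z‖ = 1 → Orthonormal 𝕜 ![z] := by
    intro z hz
    rw [orthonormal_iff_ite]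
    intro i j
    fin_cases i <;> fin_cases j <;>
      simp [inner_self_eq_norm_sq_to_K, hz]
  by_cases hty : y = (t : 𝕜) • x
  · -- then t = 1 and y = x, y' = x'
    have ht1 : t = 1 := by
      have : ‖y‖ = t := by rw [hty, norm_smul, RCLike.norm_ofReal, abs_of_nonneg ht0, hx, mul_one]
      rw [hy] at this; linarith
    have hyx : y = x := by rw [hty, ht1]; simp
    have hyx' : y' = x' := by
      have h0 : ‖y' - (t : 𝕜) • x'‖ ^ 2 = 0 := by
        rw [norm_sub_smul_sq' t ht0 x' y' hx' hy' hxy', ht1]; ring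
      have h1 : y' - (t : 𝕜) • x' = 0 := by
        rw [← norm_eq_zero]; nlinarith [norm_nonneg (y' - (t : 𝕜) • x')]
      have := sub_eq_zero.1 h1
      rw [this, ht1]; simp
    obtain ⟨T, hT⟩ := exists_isometry_map (hsingle x hx) (hsingle x' hx')
    have hTx : T x = x' := by simpa using hT 0
    exact ⟨T, hTx, by rw [hyx, hyx', hTx]⟩
  · have hm : ‖y - (t : 𝕜) • x‖ ^ 2 = 1 - t ^ 2 := norm_sub_smul_sq' t ht0 x y hx hy hxy
    have hm' : ‖y' - (t : 𝕜) • x'‖ ^ 2 = 1 - t ^ 2 := norm_sub_smul_sq' t ht0 x' y' hx' hy' hxy'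
    have hne : y - (t : 𝕜) • x ≠ 0 := sub_ne_zero.2 hty
    have hpos : (0 : ℝ) < 1 - t ^ 2 := by
      rw [← hm]
      have h0 : 0 < ‖y - (t : 𝕜) • x‖ := norm_pos_iff.2 hne
      positivity
    set s : ℝ := Real.sqrt (1 - t ^ 2) with hs
    have hspos : 0 < s := Real.sqrt_pos.2 hpos
    have hnsy : ‖y - (t : 𝕜) • x‖ = s := by
      rw [hs, ← hm, Real.sqrt_sq (norm_nonneg _)]
    have hnsy' : ‖y' - (t : 𝕜) • x'‖ = s := by
      rw [hs, ← hm', Real.sqrt_sq (norm_nonneg _)]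
    set f : H := ((s⁻¹ : ℝ) : 𝕜) • (y - (t : 𝕜) • x) with hf
    set f' : H := ((s⁻¹ : ℝ) : 𝕜) • (y' - (t : 𝕜) • x') with hf'
    have hnf : ‖f‖ = 1 := by
      rw [hf, norm_smul, RCLike.norm_ofReal, abs_of_nonneg (by positivity), hnsy,
        inv_mul_cancel₀ hspos.ne']
    have hnf' : ‖f'‖ = 1 := by
      rw [hf', norm_smul, RCLike.norm_ofReal, abs_of_nonneg (by positivity), hnsy',
        inv_mul_cancel₀ hspos.ne']
    have hxx : ⟪x, x⟫ = 1 := by rw [inner_self_eq_norm_sq_to_K, hx]; norm_num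
    have hx'x' : ⟪x', x'⟫ = 1 := by rw [inner_self_eq_norm_sq_to_K, hx']; norm_num
    have hof : ⟪x, f⟫ = 0 := by
      rw [hf, inner_smul_right, inner_sub_right, inner_smul_right, hxy, hxx]
      ring
    have hof' : ⟪x', f'⟫ = 0 := by
      rw [hf', inner_smul_right, inner_sub_right, inner_smul_right, hxy', hx'x']
      ring
    obtain ⟨T, hT⟩ := exists_isometry_map (orthonormal_pair' x f hx hnf hof)
      (orthonormal_pair' x' f' hx' hnf' hof')
    have hTx : T x = x' := by simpa using hT 0
    have hTf : T f = f' := by simpa using hT 1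
    refine ⟨T, hTx, ?_⟩
    have hyd : y = (t : 𝕜) • x + ((s : ℝ) : 𝕜) • f := by
      rw [hf, smul_smul, ← RCLike.ofReal_mul, mul_inv_cancel₀ hspos.ne']
      simp
    have hyd' : y' = (t : 𝕜) • x' + ((s : ℝ) : 𝕜) • f' := by
      rw [hf', smul_smul, ← RCLike.ofReal_mul, mul_inv_cancel₀ hspos.ne']
      simp
    rw [hyd, map_add, map_smul, map_smul, hTx, hTf, ← hyd']

end Aux

/-- a Finsler metric `ρ` on `H \ {0}` is invariant with respect to every
congruence (nonzero scalar multiple of an isometry) iff there is `ϑ : [0,π/2] → ℝ`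
such that `ρ_g(h) = (‖h‖/‖g‖) ϑ(∠(g,h))` for all nonzero `g, h`. -/
theorem stmt8 {𝕜 H : Type*} [RCLike 𝕜] [NormedAddCommGroup H] [InnerProductSpace 𝕜 H]
    (ρ : H → H → ℝ)
    (hFinsler : ∀ g : H, g ≠ 0 → ∀ h : H, ∀ r : 𝕜, ρ g (r • h) = ‖r‖ * ρ g h) :
    (∀ c : 𝕜, c ≠ 0 → ∀ T : H →ₗᵢ[𝕜] H, ∀ g : H, g ≠ 0 → ∀ h : H,
        ρ (c • T g) (c • T h) = ρ g h) ↔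
      ∃ ϑ : ℝ → ℝ, ∀ g h : H, g ≠ 0 → h ≠ 0 →
        ρ g h = ‖h‖ / ‖g‖ * ϑ (acuteAngle 𝕜 g h) := by
  classical
  have hzero : ∀ g : H, g ≠ 0 → ρ g 0 = 0 := by
    intro g hg
    have := hFinsler g hg 0 0
    simpa using this
  constructor
  · intro hInv
    -- scaling invariance via T = id
    have hscale : ∀ (c : 𝕜), c ≠ 0 → ∀ g : H, g ≠ 0 → ∀ h : H,
        ρ (c • g) (c • h) = ρ g h := by
      intro c hc g hg h
      simpa using hInv c hc (LinearIsometry.id : H →ₗᵢ[𝕜] H) g hg h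
    -- normalization
    have hnormalize : ∀ g h : H, g ≠ 0 → h ≠ 0 →
        ρ g h = ‖h‖ / ‖g‖ * ρ (((‖g‖⁻¹ : ℝ) : 𝕜) • g) (((‖h‖⁻¹ : ℝ) : 𝕜) • h) := by
      intro g h hg hh
      have hng : ‖g‖ ≠ 0 := norm_ne_zero_iff.2 hg
      have hnh : ‖h‖ ≠ 0 := norm_ne_zero_iff.2 hh
      set c : 𝕜 := ((‖g‖⁻¹ : ℝ) : 𝕜) with hc
      have hcne : c ≠ 0 := by
        simp [hc, RCLike.ofReal_eq_zero, hng]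
      have h1 : ρ (c • g) (c • h) = ρ g h := hscale c hcne g hg h
      have hcg : c • g ≠ 0 := smul_ne_zero hcne hg
      have h2 : c • h = ((‖h‖ / ‖g‖ : ℝ) : 𝕜) • (((‖h‖⁻¹ : ℝ) : 𝕜) • h) := by
        have hsc : (‖h‖ / ‖g‖) * ‖h‖⁻¹ = ‖g‖⁻¹ := by field_simp
        rw [smul_smul, ← RCLike.ofReal_mul, hsc]
      have h3 := hFinsler (c • g) hcg (((‖h‖⁻¹ : ℝ) : 𝕜) • h) ((‖h‖ / ‖g‖ : ℝ) : 𝕜)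
      rw [← h1, h2, h3, RCLike.norm_ofReal, abs_of_nonneg (by positivity)]
    -- unit vectors
    have hunit : ∀ g : H, g ≠ 0 → ‖(((‖g‖⁻¹ : ℝ) : 𝕜) • g)‖ = 1 := by
      intro g hg
      have hng : ‖g‖ ≠ 0 := norm_ne_zero_iff.2 hg
      rw [norm_smul, RCLike.norm_ofReal, abs_of_nonneg (by positivity),
        inv_mul_cancel₀ hng]
    -- angle of normalized pair
    have hangle : ∀ g h : H, g ≠ 0 → h ≠ 0 →
        acuteAngle 𝕜 (((‖g‖⁻¹ : ℝ) : 𝕜) • g) (((‖h‖⁻¹ : ℝ) : 𝕜) • h) = acuteAngle 𝕜 g h := by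
      intro g h hg hh
      have hng : ‖g‖ ≠ 0 := norm_ne_zero_iff.2 hg
      have hnh : ‖h‖ ≠ 0 := norm_ne_zero_iff.2 hh
      unfold acuteAngle
      congr 1
      rw [inner_smul_left, inner_smul_right, hunit g hg, hunit h hh]
      rw [norm_mul, norm_mul, RCLike.norm_conj, RCLike.norm_ofReal, RCLike.norm_ofReal,
        abs_of_nonneg (by positivity : (0:ℝ) ≤ ‖g‖⁻¹),
        abs_of_nonneg (by positivity : (0:ℝ) ≤ ‖h‖⁻¹)]
      rw [div_eq_div_iff (by norm_num : (1:ℝ)*1 ≠ 0) (mul_ne_zero hnh hng)]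
      rw [show ‖g‖⁻¹ * (‖h‖⁻¹ * ‖(inner 𝕜 g h : 𝕜)‖) * (‖h‖ * ‖g‖)
          = (‖g‖ * ‖g‖⁻¹) * (‖h‖ * ‖h‖⁻¹) * ‖(inner 𝕜 g h : 𝕜)‖ by ring,
        mul_inv_cancel₀ hng, mul_inv_cancel₀ hnh]
      ring
    -- key lemma : only the angle matters for unit vectors
    have hKey : ∀ g h g' h' : H, ‖g‖ = 1 → ‖h‖ = 1 → ‖g'‖ = 1 → ‖h'‖ = 1 →
        ‖(inner 𝕜 g h : 𝕜)‖ = ‖(inner 𝕜 g' h' : 𝕜)‖ → ρ g h = ρ g' h' := by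
      intro g h g' h' hg hh hg' hh' hip
      -- phase normalization
      have phase : ∀ g₀ h₀ : H, ‖g₀‖ = 1 → ‖h₀‖ = 1 →
          ∃ h₂ : H, ‖h₂‖ = 1 ∧ ρ g₀ h₂ = ρ g₀ h₀ ∧
            (inner 𝕜 g₀ h₂ : 𝕜) = ((‖(inner 𝕜 g₀ h₀ : 𝕜)‖ : ℝ) : 𝕜) := by
        intro g₀ h₀ hg₀ hh₀
        have hg₀ne : g₀ ≠ 0 := norm_ne_zero_iff.1 (by rw [hg₀]; norm_num)
        set a : 𝕜 := inner 𝕜 g₀ h₀ with ha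
        by_cases h0 : a = 0
        · exact ⟨h₀, hh₀, rfl, by rw [← ha, h0]; simp⟩
        · set lam : 𝕜 := ((‖a‖ : ℝ) : 𝕜) / a with hlam
          have hnl : ‖lam‖ = 1 := by
            rw [hlam, norm_div, RCLike.norm_ofReal, abs_of_nonneg (norm_nonneg _),
              div_self (norm_ne_zero_iff.2 h0)]
          refine ⟨lam • h₀, ?_, ?_, ?_⟩
          · rw [norm_smul, hnl, hh₀, one_mul]
          · rw [hFinsler g₀ hg₀ne h₀ lam, hnl, one_mul]
          · rw [inner_smul_right, ← ha, hlam]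
            field_simp
      obtain ⟨h₂, hh₂, hρ₂, hi₂⟩ := phase g h hg hh
      obtain ⟨h₂', hh₂', hρ₂', hi₂'⟩ := phase g' h' hg' hh'
      set t : ℝ := ‖(inner 𝕜 g h : 𝕜)‖ with hht
      have ht0 : 0 ≤ t := norm_nonneg _
      have hi₂'' : (inner 𝕜 g' h₂' : 𝕜) = (t : 𝕜) := by rw [hi₂', ← hip]
      obtain ⟨T, hTg, hTh⟩ := exists_isometry_pair_s8 t ht0 g h₂ g' h₂' hg hh₂ hg' hh₂' hi₂ hi₂''
      have hgne : g ≠ 0 := norm_ne_zero_iff.1 (by rw [hg]; norm_num)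
      have := hInv 1 one_ne_zero T g hgne h₂
      rw [one_smul, one_smul, hTg, hTh] at this
      rw [← hρ₂, ← hρ₂', ← this]
    -- define ϑ
    set ϑ : ℝ → ℝ := fun θ =>
      if hp : ∃ p : H × H, ‖p.1‖ = 1 ∧ ‖p.2‖ = 1 ∧ acuteAngle 𝕜 p.1 p.2 = θ then
        ρ hp.choose.1 hp.choose.2 else 0 with hϑ
    refine ⟨ϑ, fun g h hg hh => ?_⟩
    set g₁ : H := ((‖g‖⁻¹ : ℝ) : 𝕜) • g with hg₁
    set h₁ : H := ((‖h‖⁻¹ : ℝ) : 𝕜) • h with hh₁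
    have hg₁u : ‖g₁‖ = 1 := hunit g hg
    have hh₁u : ‖h₁‖ = 1 := hunit h hh
    have hang : acuteAngle 𝕜 g₁ h₁ = acuteAngle 𝕜 g h := hangle g h hg hh
    have hp : ∃ p : H × H, ‖p.1‖ = 1 ∧ ‖p.2‖ = 1 ∧ acuteAngle 𝕜 p.1 p.2 = acuteAngle 𝕜 g h :=
      ⟨(g₁, h₁), hg₁u, hh₁u, hang⟩
    have hϑval : ϑ (acuteAngle 𝕜 g h) = ρ hp.choose.1 hp.choose.2 := by
      rw [hϑ]; simp only [dif_pos hp]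
    obtain ⟨hpu1, hpu2, hpang⟩ := hp.choose_spec
    -- angle equality gives inner norm equality
    have hipe : ‖(inner 𝕜 g₁ h₁ : 𝕜)‖ = ‖(inner 𝕜 hp.choose.1 hp.choose.2 : 𝕜)‖ := by
      have b1 : ∀ x y : H, ‖x‖ = 1 → ‖y‖ = 1 →
          acuteAngle 𝕜 x y = Real.arccos ‖(inner 𝕜 x y : 𝕜)‖ := by
        intro x y hx hy
        unfold acuteAngle
        rw [hx, hy]; norm_num
      have e1 : Real.arccos ‖(inner 𝕜 g₁ h₁ : 𝕜)‖ =
          Real.arccos ‖(inner 𝕜 hp.choose.1 hp.choose.2 : 𝕜)‖ := by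
        rw [← b1 _ _ hg₁u hh₁u, ← b1 _ _ hpu1 hpu2, hang, hpang]
      have bd : ∀ x y : H, ‖x‖ = 1 → ‖y‖ = 1 → ‖(inner 𝕜 x y : 𝕜)‖ ≤ 1 := by
        intro x y hx hy
        have := norm_inner_le_norm (𝕜 := 𝕜) x y
        rwa [hx, hy, mul_one] at this
      exact Real.arccos_inj (by linarith [norm_nonneg ((inner 𝕜 g₁ h₁ : 𝕜))])
        (bd _ _ hg₁u hh₁u) (by linarith [norm_nonneg ((inner 𝕜 hp.choose.1 hp.choose.2 : 𝕜))])
        (bd _ _ hpu1 hpu2) |>.1 e1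
    rw [hnormalize g h hg hh, hϑval, hKey g₁ h₁ hp.choose.1 hp.choose.2 hg₁u hh₁u hpu1 hpu2 hipe]
  · rintro ⟨ϑ, hϑ⟩ c hc T g hg h
    have hTne : ∀ x : H, x ≠ 0 → T x ≠ 0 := by
      intro x hx h0
      apply hx
      have := T.norm_map x
      rw [h0, norm_zero] at this
      exact norm_eq_zero.1 this.symm
    have hTg : T g ≠ 0 := hTne g hg
    by_cases hh : h = 0
    · rw [hh, map_zero, smul_zero, hzero _ (smul_ne_zero hc hTg), hzero g hg]
    · have hTh : T h ≠ 0 := hTne h hh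
      have hcTg : c • T g ≠ 0 := smul_ne_zero hc hTg
      have hcTh : c • T h ≠ 0 := smul_ne_zero hc hTh
      have hcp : (0:ℝ) < ‖c‖ := norm_pos_iff.2 hc
      have hgp : (0:ℝ) < ‖g‖ := norm_pos_iff.2 hg
      have hhp : (0:ℝ) < ‖h‖ := norm_pos_iff.2 hh
      rw [hϑ _ _ hcTg hcTh, hϑ g h hg hh]
      have hnr : ‖c • T h‖ / ‖c • T g‖ = ‖h‖ / ‖g‖ := by
        rw [norm_smul, norm_smul, T.norm_map, T.norm_map,
          mul_div_mul_left _ _ hcp.ne']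
      have hangle2 : acuteAngle 𝕜 (c • T g) (c • T h) = acuteAngle 𝕜 g h := by
        unfold acuteAngle
        congr 1
        rw [inner_smul_left, inner_smul_right, T.inner_map_map, norm_mul, norm_mul,
          RCLike.norm_conj, norm_smul, norm_smul, T.norm_map, T.norm_map]
        rw [div_eq_div_iff (by positivity) (by positivity)]
        ring
      rw [hnr, hangle2]
end

section
/- Let ρ be an isometry-invariant Finsler metric on H \ {0} such that for each fixed h ∈ H the map g ↦ ρ_g(h) is continuous on H \ {0}. Suppose ρ is invariant with respect to the homotheties x ↦ α·x and x ↦ β·x, where α, β > 0, ln α ≠ 0, ln β ≠ 0, and (ln α)/(ln β) is irrational. Then ρ is invariant with respect to every congruence of H; in particular, there exists a function ϑ : [0, π/2] → ℝ such that ρ_g(h) = (‖h‖/‖g‖)·ϑ(∠(g,h)) for all nonzero g, h ∈ H. -/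
open Submodule

open Submodule

section helpers

variable {𝕜 H : Type*} [RCLike 𝕜] [NormedAddCommGroup H] [InnerProductSpace 𝕜 H]

local notation "⟪" x ", " y "⟫" => @inner 𝕜 _ _ x y

lemma refl_sub' {x y : H} (hn : ‖x‖ = ‖y‖) (hc : ⟪x, y⟫ = ⟪y, x⟫) :
    reflection (𝕜 ∙ (x - y))ᗮ x = y := by
  set R : H ≃ₗᵢ[𝕜] H := reflection (𝕜 ∙ (x - y))ᗮ
  suffices h : R x + R x = y + y by
    apply smul_right_injective H (by norm_num : (2 : 𝕜) ≠ 0)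
    simpa [two_smul] using h
  have h₁ : R (x - y) = -(x - y) := reflection_orthogonalComplement_singleton_eq_neg (x - y)
  have h₂ : R (x + y) = x + y := by
    apply reflection_mem_subspace_eq_self
    rw [Submodule.mem_orthogonal_singleton_iff_inner_left]
    rw [inner_add_left, inner_sub_right, inner_sub_right,
      inner_self_eq_norm_sq_to_K, inner_self_eq_norm_sq_to_K, hn, hc]
    ring
  convert congr_arg₂ (· + ·) h₂ h₁ using 1
  · simp [R]
  · abel

/-- Scalar multiplication by a unit scalar, as a linear isometry. -/
noncomputable def smulIsom (u : 𝕜) (hu : ‖u‖ = 1) : H →ₗᵢ[𝕜] H where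
  toLinearMap := u • LinearMap.id
  norm_map' x := by simp [norm_smul, hu]

@[simp] lemma smulIsom_apply (u : 𝕜) (hu : ‖u‖ = 1) (x : H) : smulIsom u hu x = u • x := rfl

/-- The map which is identity on `𝕜 e` and multiplication by a unit `u` on its orthogonal
complement, as a linear isometry. -/
noncomputable def phaseRot (e : H) (he : ‖e‖ = 1) (u : 𝕜) (hu : ‖u‖ = 1) : H →ₗᵢ[𝕜] H where
  toLinearMap :=
  { toFun := fun x => ⟪e, x⟫ • e + u • (x - ⟪e, x⟫ • e)
    map_add' := fun x y => by
      simp only [inner_add_right, add_smul, smul_add, smul_sub]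
      abel
    map_smul' := fun c x => by
      simp only [inner_smul_right, RingHom.id_apply, smul_smul, smul_sub, smul_add]
      module }
  norm_map' x := by
    have hee : ⟪e, e⟫ = 1 := by
      rw [inner_self_eq_norm_sq_to_K, he]; norm_num
    have horth : ⟪(⟪e, x⟫ • e : H), u • (x - ⟪e, x⟫ • e)⟫ = 0 := by
      rw [inner_smul_right, inner_smul_left, inner_sub_right, inner_smul_right, hee, mul_one]
      ring
    have horth' : ⟪(⟪e, x⟫ • e : H), (x - ⟪e, x⟫ • e : H)⟫ = 0 := by
      rw [inner_smul_left, inner_sub_right, inner_smul_right, hee, mul_one]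
      ring
    have h1 := norm_add_sq_eq_norm_sq_add_norm_sq_of_inner_eq_zero _ _ horth
    have h2 := norm_add_sq_eq_norm_sq_add_norm_sq_of_inner_eq_zero _ _ horth'
    have hx : (⟪e, x⟫ • e : H) + (x - ⟪e, x⟫ • e) = x := by abel
    rw [hx] at h2
    have hus : ‖u • (x - ⟪e, x⟫ • e)‖ = ‖x - ⟪e, x⟫ • e‖ := by rw [norm_smul, hu, one_mul]
    rw [hus] at h1
    have key : ‖(⟪e, x⟫ • e : H) + u • (x - ⟪e, x⟫ • e)‖ * ‖(⟪e, x⟫ • e : H) + u • (x - ⟪e, x⟫ • e)‖ = ‖x‖ * ‖x‖ := by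
      rw [h1, h2]
    exact (mul_self_inj (norm_nonneg _) (norm_nonneg _)).mp key

lemma phaseRot_apply (e : H) (he : ‖e‖ = 1) (u : 𝕜) (hu : ‖u‖ = 1) (x : H) :
    phaseRot e he u hu x = ⟪e, x⟫ • e + u • (x - ⟪e, x⟫ • e) := rfl

/-- Choose a unit phase making an inner product equal to its norm (nonneg real). -/
lemma exists_phase_right (g h : H) :
    ∃ u : 𝕜, ‖u‖ = 1 ∧ ⟪g, u • h⟫ = (‖⟪g, h⟫‖ : 𝕜) := by
  by_cases hz : ⟪g, h⟫ = 0
  · exact ⟨1, by simp, by simp [inner_smul_right, hz]⟩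
  · refine ⟨(‖⟪g, h⟫‖ : 𝕜) / ⟪g, h⟫, ?_, ?_⟩
    · rw [norm_div, RCLike.norm_ofReal, abs_norm, div_self (norm_ne_zero_iff.mpr hz)]
    · rw [inner_smul_right, div_mul_cancel₀ _ hz]

lemma exists_phase_left (g h : H) :
    ∃ w : 𝕜, ‖w‖ = 1 ∧ ⟪w • g, h⟫ = (‖⟪g, h⟫‖ : 𝕜) := by
  obtain ⟨u, hu, h1⟩ := exists_phase_right (𝕜 := 𝕜) h g
  refine ⟨u, hu, ?_⟩
  rw [← inner_conj_symm, h1, ← inner_conj_symm g h]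
  simp [norm_inner_symm h g]

/-- Key geometric lemma: two pairs of unit vectors with equal real inner products are
related by a linear isometry of the whole space. -/
lemma exists_isom_pair {g h g' h' : H} (t : ℝ)
    (hg : ‖g‖ = 1) (hh : ‖h‖ = 1) (hg' : ‖g'‖ = 1) (hh' : ‖h'‖ = 1)
    (hgh : ⟪g, h⟫ = (t : 𝕜)) (hgh' : ⟪g', h'⟫ = (t : 𝕜)) :
    ∃ T : H →ₗᵢ[𝕜] H, T g = g' ∧ T h = h' := by
  obtain ⟨w, hw, hwg⟩ := exists_phase_left (𝕜 := 𝕜) g g'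
  set g₁ : H := w • g with hg₁def
  set h₁ : H := w • h with hh₁def
  have hg₁ : ‖g₁‖ = 1 := by rw [hg₁def, norm_smul, hw, hg, one_mul]
  have hh₁ : ‖h₁‖ = 1 := by rw [hh₁def, norm_smul, hw, hh, one_mul]
  have hww : (starRingEnd 𝕜) w * w = 1 := by
    rw [RCLike.conj_mul, hw]; norm_num
  have hinner₁ : ⟪g₁, h₁⟫ = (t : 𝕜) := by
    rw [hg₁def, hh₁def, inner_smul_left, inner_smul_right, ← mul_assoc, hww, one_mul, hgh]
  have hselfc : ⟪g₁, g'⟫ = ⟪g', g₁⟫ := by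
    have h2 : ⟪g', g₁⟫ = (starRingEnd 𝕜) ⟪g₁, g'⟫ := (inner_conj_symm _ _).symm
    rw [h2, hwg]
    simp
  set R₁ : H ≃ₗᵢ[𝕜] H := reflection (𝕜 ∙ (g₁ - g'))ᗮ with hR₁def
  have hR₁g : R₁ g₁ = g' := refl_sub' (hg₁.trans hg'.symm) hselfc
  set h₂ : H := R₁ h₁ with hh₂def
  have hh₂ : ‖h₂‖ = 1 := by rw [hh₂def, R₁.norm_map, hh₁]
  have hinner₂ : ⟪g', h₂⟫ = (t : 𝕜) := by
    rw [← hR₁g, hh₂def, LinearIsometryEquiv.inner_map_map, hinner₁]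
  set p : H := h₂ - (t : 𝕜) • g' with hpdef
  set p' : H := h' - (t : 𝕜) • g' with hp'def
  have hg'g' : ⟪g', g'⟫ = 1 := by rw [inner_self_eq_norm_sq_to_K, hg']; norm_num
  have hg'p : ⟪g', p⟫ = 0 := by
    rw [hpdef, inner_sub_right, inner_smul_right, hinner₂, hg'g', mul_one, sub_self]
  have hg'p' : ⟪g', p'⟫ = 0 := by
    rw [hp'def, inner_sub_right, inner_smul_right, hgh', hg'g', mul_one, sub_self]
  have hpg' : ⟪p, g'⟫ = 0 := by
    rw [← inner_conj_symm, hg'p, map_zero]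
  have hp'g' : ⟪p', g'⟫ = 0 := by
    rw [← inner_conj_symm, hg'p', map_zero]
  have hnormsq : ∀ (x : H), ‖x‖ = 1 → ⟪g', x⟫ = (t : 𝕜) → ‖x - (t : 𝕜) • g'‖ ^ 2 = 1 - t ^ 2 := by
    intro x hx hgx
    have hxg' : ⟪x, g'⟫ = (t : 𝕜) := by
      have h3 := inner_conj_symm (𝕜 := 𝕜) x g'
      rw [hgx] at h3
      rw [← h3, RCLike.conj_ofReal]
    have hxg : ⟪x, (t : 𝕜) • g'⟫ = (t : 𝕜) * (t : 𝕜) := by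
      rw [inner_smul_right, hxg']
    rw [norm_sub_sq (𝕜 := 𝕜) x ((t : 𝕜) • g'), hx, hxg, norm_smul, hg']
    simp [RCLike.norm_ofReal]
    ring
  have hpn : ‖p‖ = ‖p'‖ := by
    have e1 := hnormsq h₂ hh₂ hinner₂
    have e2 := hnormsq h' hh' hgh'
    rw [← hpdef] at e1; rw [← hp'def] at e2
    exact (sq_eq_sq₀ (norm_nonneg _) (norm_nonneg _)).mp (e1.trans e2.symm)
  obtain ⟨u₂, hu₂, hu₂p⟩ := exists_phase_left (𝕜 := 𝕜) p p'
  set q : H := u₂ • p with hqdef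
  have hq : ‖q‖ = ‖p'‖ := by rw [hqdef, norm_smul, hu₂, one_mul, hpn]
  have hqc : ⟪q, p'⟫ = ⟪p', q⟫ := by
    have h2 : ⟪p', q⟫ = (starRingEnd 𝕜) ⟪q, p'⟫ := (inner_conj_symm _ _).symm
    rw [h2, hqdef, hu₂p]
    simp
  set R₂ : H ≃ₗᵢ[𝕜] H := reflection (𝕜 ∙ (q - p'))ᗮ with hR₂def
  have hR₂q : R₂ q = p' := refl_sub' hq hqc
  have hg'K : g' ∈ (𝕜 ∙ (q - p'))ᗮ := by
    rw [Submodule.mem_orthogonal_singleton_iff_inner_right]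
    rw [inner_sub_left, hqdef, inner_smul_left, hpg', hp'g', mul_zero, sub_zero]
  have hR₂g' : R₂ g' = g' := reflection_mem_subspace_eq_self hg'K
  set U : H →ₗᵢ[𝕜] H := phaseRot g' hg' u₂ hu₂ with hUdef
  have hUg' : U g' = g' := by
    rw [hUdef, phaseRot_apply, hg'g', one_smul, sub_self, smul_zero, add_zero]
  have hUh₂ : U h₂ = (t : 𝕜) • g' + q := by
    rw [hUdef, phaseRot_apply, hinner₂, hqdef, hpdef]
  refine ⟨R₂.toLinearIsometry.comp (U.comp (R₁.toLinearIsometry.comp (smulIsom w hw))), ?_, ?_⟩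
  · show R₂ (U (R₁ (w • g))) = g'
    rw [← hg₁def, hR₁g, hUg', hR₂g']
  · show R₂ (U (R₁ (w • h))) = h'
    rw [← hh₁def, ← hh₂def, hUh₂, map_add, LinearIsometryEquiv.map_smul, hR₂g', hR₂q,
      hp'def]
    abel

lemma angle_inner_eq {x y x' y' : H} (hx : ‖x‖ = 1) (hy : ‖y‖ = 1) (hx' : ‖x'‖ = 1)
    (hy' : ‖y'‖ = 1)
    (h : Real.arccos (‖⟪x, y⟫‖ / (‖y‖ * ‖x‖)) = Real.arccos (‖⟪x', y'⟫‖ / (‖y'‖ * ‖x'‖))) :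
    ‖⟪x, y⟫‖ = ‖⟪x', y'⟫‖ := by
  rw [hx, hy, hx', hy', mul_one, div_one, div_one] at h
  have b1 : ‖⟪x, y⟫‖ ≤ 1 := by simpa [hx, hy] using norm_inner_le_norm (𝕜 := 𝕜) x y
  have b2 : ‖⟪x', y'⟫‖ ≤ 1 := by simpa [hx', hy'] using norm_inner_le_norm (𝕜 := 𝕜) x' y'
  exact Real.arccos_injOn ⟨by linarith [norm_nonneg (⟪x, y⟫ : 𝕜)], b1⟩
    ⟨by linarith [norm_nonneg (⟪x', y'⟫ : 𝕜)], b2⟩ h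

end helpers
/-- if an isometry-invariant Finsler metric `ρ` on `H \ {0}`, continuous in
its first variable, is invariant with respect to homotheties with coefficients `α, β > 0`
where `ln α ≠ 0 ≠ ln β` and `ln α / ln β` is irrational, then `ρ` is invariant with
respect to every congruence; in particular there is `ϑ : [0,π/2] → ℝ` with
`ρ_g(h) = (‖h‖/‖g‖) ϑ(∠(g,h))` for all nonzero `g, h`. -/
theorem stmt9 {𝕜 H : Type*} [RCLike 𝕜] [NormedAddCommGroup H] [InnerProductSpace 𝕜 H]
    (ρ : H → H → ℝ)
    (hFinsler : ∀ g : H, g ≠ 0 → ∀ h : H, ∀ r : 𝕜, ρ g (r • h) = ‖r‖ * ρ g h)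
    (hinv : ∀ T : H →ₗᵢ[𝕜] H, ∀ g : H, g ≠ 0 → ∀ h : H, ρ (T g) (T h) = ρ g h)
    (hcont : ∀ h : H, ContinuousOn (fun g : H => ρ g h) {x : H | x ≠ 0})
    (α β : ℝ) (hα : 0 < α) (hβ : 0 < β)
    (hlnα : Real.log α ≠ 0) (hlnβ : Real.log β ≠ 0)
    (hirr : Irrational (Real.log α / Real.log β))
    (hinvα : ∀ g : H, g ≠ 0 → ∀ h : H, ρ ((α : 𝕜) • g) ((α : 𝕜) • h) = ρ g h)
    (hinvβ : ∀ g : H, g ≠ 0 → ∀ h : H, ρ ((β : 𝕜) • g) ((β : 𝕜) • h) = ρ g h) :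
    (∀ c : 𝕜, c ≠ 0 → ∀ T : H →ₗᵢ[𝕜] H, ∀ g : H, g ≠ 0 → ∀ h : H,
        ρ (c • T g) (c • T h) = ρ g h) ∧
      ∃ ϑ : ℝ → ℝ, ∀ g h : H, g ≠ 0 → h ≠ 0 →
        ρ g h = ‖h‖ / ‖g‖ * ϑ (acuteAngle 𝕜 g h) := by

  classical
  have hexp_ne : ∀ s : ℝ, ((Real.exp s : ℝ) : 𝕜) ≠ 0 :=
    fun s => RCLike.ofReal_ne_zero.mpr (Real.exp_ne_zero s)
  -- Step 1: invariance under positive real homotheties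
  have key1 : ∀ t : ℝ, 0 < t → ∀ g : H, g ≠ 0 → ∀ h : H,
      ρ ((t : 𝕜) • g) ((t : 𝕜) • h) = ρ g h := by
    intro t ht g hg h
    set f : ℝ → ℝ := fun s => Real.exp s * ρ (((Real.exp s : ℝ) : 𝕜) • g) h with hfdef
    have hne : ∀ s : ℝ, ((Real.exp s : ℝ) : 𝕜) • g ≠ 0 := fun s => smul_ne_zero (hexp_ne s) hg
    have hcf : Continuous f := by
      apply Real.continuous_exp.mul
      have h1 : Continuous fun s : ℝ => (((Real.exp s : ℝ) : 𝕜) • g) :=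
        (RCLike.continuous_ofReal.comp Real.continuous_exp).smul continuous_const
      apply (hcont h).comp_continuous h1
      intro s
      exact hne s
    have hstep : ∀ γ : ℝ, 0 < γ →
        (∀ g : H, g ≠ 0 → ∀ h : H, ρ ((γ : 𝕜) • g) ((γ : 𝕜) • h) = ρ g h) →
        ∀ s : ℝ, f (s + Real.log γ) = f s := by
      intro γ hγ hinvγ s
      have e1 : Real.exp (s + Real.log γ) = γ * Real.exp s := by
        rw [Real.exp_add, Real.exp_log hγ]; ring
      have e2 : ((Real.exp (s + Real.log γ) : ℝ) : 𝕜) • g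
          = (γ : 𝕜) • (((Real.exp s : ℝ) : 𝕜) • g) := by
        rw [e1, smul_smul]
        push_cast
        ring_nf
      have e3 : ρ ((γ : 𝕜) • (((Real.exp s : ℝ) : 𝕜) • g)) ((γ : 𝕜) • h)
          = ρ (((Real.exp s : ℝ) : 𝕜) • g) h := hinvγ _ (hne s) h
      have hγne : (γ : 𝕜) ≠ 0 := RCLike.ofReal_ne_zero.mpr (ne_of_gt hγ)
      have e4 : ρ ((γ : 𝕜) • (((Real.exp s : ℝ) : 𝕜) • g)) ((γ : 𝕜) • h)
          = γ * ρ ((γ : 𝕜) • (((Real.exp s : ℝ) : 𝕜) • g)) h := by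
        rw [hFinsler _ (smul_ne_zero hγne (hne s)) h (γ : 𝕜), RCLike.norm_ofReal,
          abs_of_pos hγ]
      have e5 : ρ ((γ : 𝕜) • (((Real.exp s : ℝ) : 𝕜) • g)) h
          = γ⁻¹ * ρ (((Real.exp s : ℝ) : 𝕜) • g) h := by
        field_simp
        rw [mul_comm, ← e4, e3]
      show Real.exp (s + Real.log γ) * ρ (((Real.exp (s + Real.log γ) : ℝ) : 𝕜) • g) h
          = Real.exp s * ρ (((Real.exp s : ℝ) : 𝕜) • g) h
      rw [e2, e5, e1]
      field_simp
    set S : AddSubgroup ℝ := AddSubgroup.closure {Real.log α, Real.log β} with hSdef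
    have hSf : ∀ d ∈ S, ∀ s : ℝ, f (s + d) = f s := by
      intro d hd
      induction hd using AddSubgroup.closure_induction with
      | mem x hx =>
        rcases hx with hx | hx
        · subst hx; exact hstep α hα hinvα
        · rw [Set.mem_singleton_iff] at hx; subst hx; exact hstep β hβ hinvβ
      | zero => intro s; simp
      | add x y _ _ px py => intro s; rw [← add_assoc, py, px]
      | neg x _ px => intro s; have := px (s + -x); simpa using this.symm
    have hdense : Dense (S : Set ℝ) := by
      rcases S.dense_or_cyclic with hd | ⟨a, ha⟩
      · exact hd
      · exfalso
        have hαS : Real.log α ∈ S := AddSubgroup.subset_closure (by simp)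
        have hβS : Real.log β ∈ S := AddSubgroup.subset_closure (by simp)
        rw [ha, AddSubgroup.mem_closure_singleton] at hαS hβS
        obtain ⟨m, hm⟩ := hαS
        obtain ⟨n, hn⟩ := hβS
        rw [zsmul_eq_mul] at hm hn
        have ha0 : a ≠ 0 := by
          intro h0; rw [h0, mul_zero] at hn; exact hlnβ hn.symm
        have hn0 : (n : ℝ) ≠ 0 := by
          intro h0; rw [h0, zero_mul] at hn; exact hlnβ hn.symm
        apply hirr
        refine ⟨(m : ℚ) / (n : ℚ), ?_⟩
        rw [← hm, ← hn]
        push_cast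
        field_simp
    have hconst : ∀ s : ℝ, f s = f 0 := by
      have heq : Set.EqOn f (fun _ => f 0) (S : Set ℝ) := by
        intro d hd
        have := hSf d hd 0
        simpa using this
      have := Continuous.ext_on hdense hcf continuous_const heq
      intro s; exact congrFun this s
    have hlog := hconst (Real.log t)
    rw [hfdef] at hlog
    simp only [Real.exp_log ht, Real.exp_zero, RCLike.ofReal_one, one_smul, one_mul] at hlog
    have htne : (t : 𝕜) ≠ 0 := RCLike.ofReal_ne_zero.mpr (ne_of_gt ht)
    rw [hFinsler _ (smul_ne_zero htne hg) h (t : 𝕜), RCLike.norm_ofReal, abs_of_pos ht]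
    exact hlog
  -- Step 2: part A
  have partA : ∀ c : 𝕜, c ≠ 0 → ∀ T : H →ₗᵢ[𝕜] H, ∀ g : H, g ≠ 0 → ∀ h : H,
      ρ (c • T g) (c • T h) = ρ g h := by
    intro c hc T g hg h
    have ht : (0 : ℝ) < ‖c‖ := norm_pos_iff.mpr hc
    set u : 𝕜 := (‖c‖ : 𝕜)⁻¹ * c with hudef
    have hcne : ((‖c‖ : ℝ) : 𝕜) ≠ 0 := RCLike.ofReal_ne_zero.mpr (ne_of_gt ht)
    have hu : ‖u‖ = 1 := by
      rw [hudef, norm_mul, norm_inv, RCLike.norm_ofReal, abs_norm]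
      field_simp
    have hdecomp : ∀ x : H, c • x = (‖c‖ : 𝕜) • (u • x) := by
      intro x
      rw [smul_smul, hudef, ← mul_assoc, mul_inv_cancel₀ hcne, one_mul]
    have hTg : T g ≠ 0 := by
      intro h0
      apply hg
      have : ‖T g‖ = 0 := by rw [h0, norm_zero]
      rw [T.norm_map] at this
      exact norm_eq_zero.mp this
    have hune : u ≠ 0 := by
      intro h0; rw [h0, norm_zero] at hu; norm_num at hu
    have hug : u • T g ≠ 0 := smul_ne_zero hune hTg
    rw [hdecomp, hdecomp, key1 ‖c‖ ht _ hug]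
    exact hinv ((smulIsom u hu).comp T) g hg h
  refine ⟨partA, ?_⟩
  -- Step 3: the key lemma, well-definedness
  have key2 : ∀ g h g' h' : H, ‖g‖ = 1 → ‖h‖ = 1 → ‖g'‖ = 1 → ‖h'‖ = 1 →
      ‖(inner 𝕜 g h : 𝕜)‖ = ‖(inner 𝕜 g' h' : 𝕜)‖ → ρ g h = ρ g' h' := by
    intro g h g' h' hg hh hg' hh' heq
    obtain ⟨u, hu, hup⟩ := exists_phase_right (𝕜 := 𝕜) g h
    obtain ⟨u', hu', hup'⟩ := exists_phase_right (𝕜 := 𝕜) g' h'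
    have hgne : g ≠ 0 := by intro h0; rw [h0, norm_zero] at hg; norm_num at hg
    have hgne' : g' ≠ 0 := by intro h0; rw [h0, norm_zero] at hg'; norm_num at hg'
    have h1 : ρ g (u • h) = ρ g h := by rw [hFinsler g hgne h u, hu, one_mul]
    have h1' : ρ g' (u' • h') = ρ g' h' := by rw [hFinsler g' hgne' h' u', hu', one_mul]
    have huh : ‖u • h‖ = 1 := by rw [norm_smul, hu, hh, one_mul]
    have huh' : ‖u' • h'‖ = 1 := by rw [norm_smul, hu', hh', one_mul]
    have hinner' : (inner 𝕜 g' (u' • h') : 𝕜) = ((‖(inner 𝕜 g h : 𝕜)‖ : ℝ) : 𝕜) := by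
      rw [hup', ← heq]
    obtain ⟨T, hTg, hTh⟩ := exists_isom_pair (𝕜 := 𝕜) ‖(inner 𝕜 g h : 𝕜)‖ hg huh hg' huh'
      hup hinner'
    calc ρ g h = ρ g (u • h) := h1.symm
      _ = ρ (T g) (T (u • h)) := (hinv T g hgne _).symm
      _ = ρ g' (u' • h') := by rw [hTg, hTh]
      _ = ρ g' h' := h1'
  -- Step 4: construct ϑ
  set P : ℝ → Prop := fun θ => ∃ p : H × H, ‖p.1‖ = 1 ∧ ‖p.2‖ = 1 ∧ acuteAngle 𝕜 p.1 p.2 = θ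
    with hPdef
  refine ⟨fun θ => if hθ : P θ then ρ (Classical.choose hθ).1 (Classical.choose hθ).2 else 0, ?_⟩
  intro g h hg hh
  have hgpos : (0 : ℝ) < ‖g‖ := norm_pos_iff.mpr hg
  have hhpos : (0 : ℝ) < ‖h‖ := norm_pos_iff.mpr hh
  set gh : H := (‖g‖ : 𝕜)⁻¹ • g with hghdef
  set hh' : H := (‖h‖ : 𝕜)⁻¹ • h with hhhdef
  have hgn : ‖gh‖ = 1 := by
    rw [hghdef, norm_smul, norm_inv, RCLike.norm_ofReal, abs_norm]
    field_simp
  have hhn : ‖hh'‖ = 1 := by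
    rw [hhhdef, norm_smul, norm_inv, RCLike.norm_ofReal, abs_norm]
    field_simp
  have hinner_scale : ‖(inner 𝕜 gh hh' : 𝕜)‖ = ‖(inner 𝕜 g h : 𝕜)‖ / (‖h‖ * ‖g‖) := by
    rw [hghdef, hhhdef, inner_smul_left, inner_smul_right, norm_mul, norm_mul,
      RCLike.norm_conj, norm_inv, norm_inv, RCLike.norm_ofReal, RCLike.norm_ofReal,
      abs_norm, abs_norm]
    rw [div_eq_mul_inv, mul_inv]
    ring
  have hangle : acuteAngle 𝕜 gh hh' = acuteAngle 𝕜 g h := by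
    unfold acuteAngle
    rw [hgn, hhn, mul_one, div_one, hinner_scale]
  have hP : P (acuteAngle 𝕜 g h) := ⟨(gh, hh'), hgn, hhn, hangle⟩
  simp only [dif_pos hP]
  obtain ⟨hp1, hp2, hp3⟩ := Classical.choose_spec hP
  have hinner_eq : ‖(inner 𝕜 (Classical.choose hP).1 (Classical.choose hP).2 : 𝕜)‖
      = ‖(inner 𝕜 gh hh' : 𝕜)‖ := by
    apply angle_inner_eq hp1 hp2 hgn hhn
    show acuteAngle 𝕜 (Classical.choose hP).1 (Classical.choose hP).2 = acuteAngle 𝕜 gh hh'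
    rw [hp3, hangle]
  have hchoose : ρ (Classical.choose hP).1 (Classical.choose hP).2 = ρ gh hh' :=
    key2 _ _ _ _ hp1 hp2 hgn hhn hinner_eq
  rw [hchoose]
  -- relate ρ g h to ρ gh hh'
  have hgK : ((‖g‖ : ℝ) : 𝕜) ≠ 0 := RCLike.ofReal_ne_zero.mpr (ne_of_gt hgpos)
  have hhK : ((‖h‖ : ℝ) : 𝕜) ≠ 0 := RCLike.ofReal_ne_zero.mpr (ne_of_gt hhpos)
  have hsg : (‖g‖ : 𝕜) • gh = g := by
    rw [hghdef, smul_smul, mul_inv_cancel₀ hgK, one_smul]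
  have hsh : (‖h‖ : 𝕜) • hh' = h := by
    rw [hhhdef, smul_smul, mul_inv_cancel₀ hhK, one_smul]
  have e1 : ρ g h = ‖h‖ * ρ g hh' := by
    conv_lhs => rw [← hsh]
    rw [hFinsler g hg hh' (‖h‖ : 𝕜), RCLike.norm_ofReal, abs_norm]
  have hghne : gh ≠ 0 := by intro h0; rw [h0, norm_zero] at hgn; norm_num at hgn
  have e2 : ρ gh hh' = ‖g‖ * ρ g hh' := by
    have h3 := key1 ‖g‖ hgpos gh hghne hh'
    rw [hsg] at h3
    rw [← h3, hFinsler g hg hh' (‖g‖ : 𝕜), RCLike.norm_ofReal, abs_norm]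
  rw [e1, e2]
  field_simp
end

section
/- Let σ be a sesquilinear field on G = H \ {0}. Then σ is invariant with respect to every congruence of H (i.e., σ_{Tg}(Tf,Th) = σ_g(f,h) for every linear map T that is a nonzero scalar multiple of an isometry, all nonzero g, and all f, h ∈ H) if and only if there exist a, b ∈ ℝ such that σ_g(f,h) = (a/‖g‖²)·⟨f,h⟩ + (b/‖g‖⁴)·⟨f,g⟩·⟨g,h⟩ for every nonzero g ∈ H and all f, h ∈ H. -/
/-- a sesquilinear field `σ` on `H \ {0}` is invariant with respect to
every congruence (nonzero scalar multiple of an isometry) iff there are `a, b ∈ ℝ`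
such that `σ_g(f,h) = (a/‖g‖²)⟨f,h⟩ + (b/‖g‖⁴)⟨f,g⟩⟨g,h⟩` for every nonzero `g` and
all `f, h`. -/
theorem stmt10 {𝕜 H : Type*} [RCLike 𝕜] [NormedAddCommGroup H] [InnerProductSpace 𝕜 H]
    (σ : H → H → H → 𝕜) (hσ : IsSesquiField 𝕜 {x : H | x ≠ 0} σ) :
    (∀ c : 𝕜, c ≠ 0 → ∀ T : H →ₗᵢ[𝕜] H, ∀ g : H, g ≠ 0 → ∀ f h : H,
        σ (c • T g) (c • T f) (c • T h) = σ g f h) ↔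
      ∃ a b : ℝ, ∀ g : H, g ≠ 0 → ∀ f h : H,
        σ g f h = ((a / ‖g‖ ^ 2 : ℝ) : 𝕜) * (inner 𝕜 h f : 𝕜) +
          ((b / ‖g‖ ^ 4 : ℝ) : 𝕜) * (inner 𝕜 g f : 𝕜) * (inner 𝕜 h g : 𝕜) := by
  constructor
  · -- Forward direction
    intro hinv
    by_cases hH : ∀ x : H, x = 0
    · exact ⟨0, 0, fun g hg => absurd (hH g) hg⟩
    push_neg at hH
    obtain ⟨e₀, he₀⟩ := hH
    have he₀n : ‖e₀‖ ≠ 0 := norm_ne_zero_iff.mpr he₀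
    set e : H := ((‖e₀‖ : 𝕜))⁻¹ • e₀ with he_def
    have he1 : ‖e‖ = 1 := by
      rw [he_def, norm_smul, norm_inv, RCLike.norm_ofReal, abs_of_nonneg (norm_nonneg _)]
      field_simp
    have he0 : e ≠ 0 := by
      intro h; rw [h] at he1; simp at he1
    -- basic lemmas
    have hzero : ∀ g : H, g ≠ 0 → ∀ y, σ g 0 y = 0 := by
      intro g hg y
      have := (hσ g hg).2.1 0 0 y
      simpa using this
    have csym : ∀ g : H, g ≠ 0 → ∀ f h, σ g f h = starRingEnd 𝕜 (σ g h f) :=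
      fun g hg => (hσ g hg).2.2.2.2
    -- scaling of the base point
    have hS1 : ∀ (c : 𝕜), c ≠ 0 → ∀ g : H, g ≠ 0 → ∀ f h,
        σ (c • g) f h = (((‖c‖ : 𝕜)) ^ 2)⁻¹ * σ g f h := by
      intro c hc g hg f h
      have hcg : c • g ≠ 0 := smul_ne_zero hc hg
      have h1 := hinv c hc (LinearIsometryEquiv.refl 𝕜 H).toLinearIsometry g hg f h
      simp at h1
      rw [(hσ _ hcg).2.1, (hσ _ hcg).2.2.2.1] at h1
      have hne : (((‖c‖ : 𝕜)) ^ 2) ≠ 0 := by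
        simp [norm_ne_zero_iff.mpr hc]
      have h2 : ((‖c‖ : 𝕜)) ^ 2 * σ (c • g) f h = σ g f h := by
        rw [← RCLike.mul_conj]
        linear_combination h1
      rw [← h2, inv_mul_cancel_left₀ hne]
    have hS1' : ∀ (c : 𝕜), ‖c‖ = 1 → ∀ g : H, g ≠ 0 → ∀ f h,
        σ (c • g) f h = σ g f h := by
      intro c hc g hg f h
      have hc0 : c ≠ 0 := by intro h; rw [h] at hc; simp at hc
      rw [hS1 c hc0 g hg f h, hc]; simp
    -- invariance under isometric equivalences
    have hS2 : ∀ (R : H ≃ₗᵢ[𝕜] H) (g : H), g ≠ 0 → ∀ f h,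
        σ (R g) (R f) (R h) = σ g f h := by
      intro R g hg f h
      have := hinv 1 one_ne_zero R.toLinearIsometry g hg f h
      simpa using this
    -- existence of a suitable Submodule.reflection
    have hrefl : ∀ u v : H, u ≠ 0 → ‖u‖ = ‖v‖ →
        ∃ (lam : 𝕜) (R : H ≃ₗᵢ[𝕜] H), ‖lam‖ = 1 ∧ R u = lam • v ∧
          ∀ z : H, (inner 𝕜 u z : 𝕜) = 0 → (inner 𝕜 v z : 𝕜) = 0 → R z = -z := by
      intro u v hu huv
      set t : 𝕜 := inner 𝕜 v u with ht_def
      set lam : 𝕜 := if t = 0 then 1 else t / ((‖t‖ : 𝕜)) with hlam_def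
      have hlam1 : ‖lam‖ = 1 := by
        rw [hlam_def]; split_ifs with h
        · simp
        · rw [norm_div, RCLike.norm_ofReal, abs_of_nonneg (norm_nonneg _)]
          field_simp [norm_ne_zero_iff.mpr h]
      have hkey : (inner 𝕜 (lam • v) u : 𝕜) = ((‖t‖ : 𝕜)) := by
        rw [inner_smul_left, ← ht_def, hlam_def]
        split_ifs with h
        · simp [h]
        · have htn : ((‖t‖ : 𝕜)) ≠ 0 := by
            simp [norm_ne_zero_iff.mpr h]
          rw [map_div₀, RCLike.conj_ofReal]
          field_simp
          rw [RCLike.conj_mul]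
      have hkey2 : (inner 𝕜 u (lam • v) : 𝕜) = ((‖t‖ : 𝕜)) := by
        rw [← inner_conj_symm, hkey, RCLike.conj_ofReal]
      by_cases hw : u + lam • v = 0
      · refine ⟨lam, LinearIsometryEquiv.neg 𝕜, hlam1, ?_, fun z _ _ => by simp⟩
        have hlv : lam • v = -u := by
          rw [eq_neg_iff_add_eq_zero, add_comm]; exact hw
        simp [hlv]
      · set w : H := u + lam • v with hw_def
        refine ⟨lam, Submodule.reflection (𝕜 ∙ w), hlam1, ?_, ?_⟩
        · have hRw : Submodule.reflection (𝕜 ∙ w) w = w :=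
            Submodule.reflection_mem_subspace_eq_self (Submodule.mem_span_singleton_self w)
          have hperp : u - lam • v ∈ (𝕜 ∙ w)ᗮ := by
            rw [Submodule.mem_orthogonal_singleton_iff_inner_right]
            rw [hw_def, inner_sub_right, inner_add_left, inner_add_left, hkey, hkey2,
              inner_self_eq_norm_sq_to_K, inner_self_eq_norm_sq_to_K, norm_smul, hlam1,
              one_mul, ← huv]
            ring
          have hRperp : Submodule.reflection (𝕜 ∙ w) (u - lam • v) = -(u - lam • v) :=
            Submodule.reflection_mem_subspace_orthogonalComplement_eq_neg hperp
          have hu_eq : u = (2⁻¹ : 𝕜) • w + (2⁻¹ : 𝕜) • (u - lam • v) := by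
            rw [hw_def]; module
          have hfin : (2⁻¹ : 𝕜) • w + (2⁻¹ : 𝕜) • (-(u - lam • v)) = lam • v := by
            rw [hw_def]; module
          calc Submodule.reflection (𝕜 ∙ w) u
              = (2⁻¹ : 𝕜) • Submodule.reflection (𝕜 ∙ w) w
                + (2⁻¹ : 𝕜) • Submodule.reflection (𝕜 ∙ w) (u - lam • v) := by
                conv_lhs => rw [hu_eq]
                simp
            _ = lam • v := by rw [hRw, hRperp, hfin]
        · intro z hz1 hz2
          apply Submodule.reflection_mem_subspace_orthogonalComplement_eq_neg
          rw [Submodule.mem_orthogonal_singleton_iff_inner_right, hw_def, inner_add_left,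
            inner_smul_left, hz1, hz2]
          ring
    -- the diagonal value β
    set β : 𝕜 := σ e e e with hβ_def
    have hβc : starRingEnd 𝕜 β = β := (csym e he0 e e).symm
    -- Fact A : σ g g g = β for every unit g
    have hfactA : ∀ g : H, ‖g‖ = 1 → σ g g g = β := by
      intro g hg1
      have hg0 : g ≠ 0 := by intro h; rw [h] at hg1; simp at hg1
      obtain ⟨lam, R, hl1, hRu, hRz⟩ := hrefl e g he0 (by rw [he1, hg1])
      have h1 := hS2 R e he0 e e
      rw [hRu, hS1' lam hl1 g hg0] at h1
      rw [(hσ g hg0).2.1, (hσ g hg0).2.2.2.1, ← mul_assoc, RCLike.mul_conj, hl1] at h1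
      simpa using h1
    -- Fact C : σ g f g = 0 when f ⊥ g
    have hfactC : ∀ g : H, g ≠ 0 → ∀ f, (inner 𝕜 g f : 𝕜) = 0 → σ g f g = 0 := by
      intro g hg f hgf
      have hRg : Submodule.reflection (𝕜 ∙ g) g = g :=
        Submodule.reflection_mem_subspace_eq_self (Submodule.mem_span_singleton_self g)
      have hRf : Submodule.reflection (𝕜 ∙ g) f = -f :=
        Submodule.reflection_mem_subspace_orthogonalComplement_eq_neg
          (Submodule.mem_orthogonal_singleton_iff_inner_right.mpr hgf)
      have h1 := hS2 (Submodule.reflection (𝕜 ∙ g)) g hg f g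
      rw [hRg, hRf] at h1
      have h2 : σ g (-f) g = -σ g f g := by
        have := (hσ g hg).2.1 (-1) f g
        simpa using this
      rw [h2] at h1
      linear_combination - h1 / 2
    -- Fact D : σ g x y = 0 when x,y ⊥ g and x ⊥ y, x ≠ 0
    have hfactD : ∀ g : H, g ≠ 0 → ∀ x y : H, x ≠ 0 → (inner 𝕜 g x : 𝕜) = 0 →
        (inner 𝕜 g y : 𝕜) = 0 → (inner 𝕜 x y : 𝕜) = 0 → σ g x y = 0 := by
      intro g hg x y hx hgx hgy hxy
      have hRx : Submodule.reflection (𝕜 ∙ x) x = x :=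
        Submodule.reflection_mem_subspace_eq_self (Submodule.mem_span_singleton_self x)
      have hRg : Submodule.reflection (𝕜 ∙ x) g = -g :=
        Submodule.reflection_mem_subspace_orthogonalComplement_eq_neg
          (Submodule.mem_orthogonal_singleton_iff_inner_right.mpr (inner_eq_zero_symm.mp hgx))
      have hRy : Submodule.reflection (𝕜 ∙ x) y = -y :=
        Submodule.reflection_mem_subspace_orthogonalComplement_eq_neg
          (Submodule.mem_orthogonal_singleton_iff_inner_right.mpr hxy)
      have h1 := hS2 (Submodule.reflection (𝕜 ∙ x)) g hg x y
      rw [hRg, hRx, hRy] at h1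
      have hgneg : (-g : H) ≠ 0 := neg_ne_zero.mpr hg
      have e1 : σ (-g) x (-y) = -σ (-g) x y := by
        have := (hσ (-g) hgneg).2.2.2.1 (-1) x y
        simpa using this
      have e2 : σ (-g) x y = σ g x y := by
        have := hS1' (-1) (by simp) g hg x y
        simpa using this
      rw [e1, e2] at h1
      linear_combination - h1 / 2
    -- the coefficient α on the orthogonal complement
    obtain ⟨α, hαc, hperpform⟩ : ∃ α : 𝕜, starRingEnd 𝕜 α = α ∧
        ∀ g : H, ‖g‖ = 1 → ∀ x y : H, (inner 𝕜 g x : 𝕜) = 0 → (inner 𝕜 g y : 𝕜) = 0 →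
          σ g x y = α * (inner 𝕜 y x : 𝕜) := by
      by_cases hdim : ∃ u : H, ‖u‖ = 1 ∧ (inner 𝕜 e u : 𝕜) = 0
      · obtain ⟨u, hu1, heu⟩ := hdim
        have hu0 : u ≠ 0 := by intro h; rw [h] at hu1; simp at hu1
        refine ⟨σ e u u, (csym e he0 u u).symm, ?_⟩
        -- diagonal lemma for unit perpendicular vectors
        have hdiag : ∀ g : H, ‖g‖ = 1 → ∀ x : H, ‖x‖ = 1 → (inner 𝕜 g x : 𝕜) = 0 →
            σ g x x = σ e u u := by
          intro g hg1 x hx1 hgx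
          have hg0 : g ≠ 0 := by intro h; rw [h] at hg1; simp at hg1
          obtain ⟨lam, R, hl1, hRe, hRz⟩ := hrefl e g he0 (by rw [he1, hg1])
          have htrans : ∀ f h, σ g (R f) (R h) = σ e f h := by
            intro f h
            have h1 := hS2 R e he0 f h
            rwa [hRe, hS1' lam hl1 g hg0] at h1
          set x' : H := R.symm x with hx'_def
          have hRx' : R x' = x := R.apply_symm_apply x
          have hx'1 : ‖x'‖ = 1 := by rw [hx'_def, LinearIsometryEquiv.norm_map]; exact hx1
          have hex' : (inner 𝕜 e x' : 𝕜) = 0 := by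
            have h0 : (inner 𝕜 (R e) (R x') : 𝕜) = inner 𝕜 e x' := R.inner_map_map e x'
            rw [hRe, hRx', inner_smul_left, hgx, mul_zero] at h0
            exact h0.symm
          have step1 : σ g x x = σ e x' x' := by rw [← hRx', htrans]
          obtain ⟨mu, R₂, hm1, hRu2, hRz2⟩ := hrefl u x' hu0 (by rw [hu1, hx'1])
          have hR₂e : R₂ e = -e :=
            hRz2 e (inner_eq_zero_symm.mp heu) (inner_eq_zero_symm.mp hex')
          have h2 := hS2 R₂ e he0 u u
          rw [hR₂e, hRu2] at h2
          have hne : (-e : H) ≠ 0 := neg_ne_zero.mpr he0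
          rw [(hσ _ hne).2.1, (hσ _ hne).2.2.2.1, ← mul_assoc, RCLike.mul_conj, hm1] at h2
          have h3 : σ (-e) x' x' = σ e x' x' := by
            have := hS1' (-1) (by simp) e he0 x' x'
            simpa using this
          rw [h3] at h2
          simp only [RCLike.ofReal_one, one_pow, one_mul] at h2
          rw [step1, h2]
        intro g hg1 x y hgx hgy
        have hg0 : g ≠ 0 := by intro h; rw [h] at hg1; simp at hg1
        by_cases hx : x = 0
        · rw [hx, hzero g hg0 y]
          simp
        · have hxn : ‖x‖ ≠ 0 := norm_ne_zero_iff.mpr hx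
          have hxn' : ((‖x‖ : 𝕜)) ≠ 0 := by simp [hxn]
          have hx2 : (((‖x‖ : 𝕜)) ^ 2) ≠ 0 := pow_ne_zero 2 hxn'
          set p : 𝕜 := (inner 𝕜 x y : 𝕜) / ((‖x‖ : 𝕜)) ^ 2 with hp_def
          have hxy' : (inner 𝕜 x (y - p • x) : 𝕜) = 0 := by
            rw [inner_sub_right, inner_smul_right, inner_self_eq_norm_sq_to_K, hp_def]
            field_simp
            ring
          have hgy' : (inner 𝕜 g (y - p • x) : 𝕜) = 0 := by
            rw [inner_sub_right, inner_smul_right, hgx, hgy]; ring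
          have hsplit : σ g x y = starRingEnd 𝕜 p * σ g x x + σ g x (y - p • x) := by
            conv_lhs => rw [show y = p • x + (y - p • x) by abel]
            rw [(hσ g hg0).2.2.1, (hσ g hg0).2.2.2.1]
          have hdiagx : σ g x x = σ e u u * ((‖x‖ : 𝕜)) ^ 2 := by
            have hxh1 : ‖((‖x‖ : 𝕜))⁻¹ • x‖ = 1 := by
              rw [norm_smul, norm_inv, RCLike.norm_ofReal, abs_of_nonneg (norm_nonneg x)]
              field_simp
            have hgxh : (inner 𝕜 g (((‖x‖ : 𝕜))⁻¹ • x) : 𝕜) = 0 := by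
              rw [inner_smul_right, hgx, mul_zero]
            have hd := hdiag g hg1 _ hxh1 hgxh
            have hx_eq : x = ((‖x‖ : 𝕜)) • (((‖x‖ : 𝕜))⁻¹ • x) := by
              rw [smul_smul, mul_inv_cancel₀ hxn', one_smul]
            have e1 : σ g x x = ((‖x‖ : 𝕜)) * (starRingEnd 𝕜 ((‖x‖ : 𝕜)) *
                σ g (((‖x‖ : 𝕜))⁻¹ • x) (((‖x‖ : 𝕜))⁻¹ • x)) := by
              conv_lhs => rw [hx_eq]
              rw [(hσ g hg0).2.1, (hσ g hg0).2.2.2.1]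
            rw [e1, hd, RCLike.conj_ofReal]
            ring
          rw [hsplit, hdiagx, hfactD g hg0 x _ hx hgx hgy' hxy']
          have hyx : (inner 𝕜 y x : 𝕜) = starRingEnd 𝕜 (inner 𝕜 x y : 𝕜) :=
            (inner_conj_symm y x).symm
          rw [hyx, hp_def, map_div₀, map_pow, RCLike.conj_ofReal]
          field_simp
          ring
      · -- one-dimensional case
        push_neg at hdim
        have hperp0 : ∀ z : H, (inner 𝕜 e z : 𝕜) = 0 → z = 0 := by
          intro z hz
          by_contra hz0
          have hzn : ‖z‖ ≠ 0 := norm_ne_zero_iff.mpr hz0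
          refine hdim (((‖z‖ : 𝕜))⁻¹ • z) ?_ ?_
          · rw [norm_smul, norm_inv, RCLike.norm_ofReal, abs_of_nonneg (norm_nonneg z)]
            field_simp
          · rw [inner_smul_right, hz, mul_zero]
        have hspan : ∀ z : H, z = (inner 𝕜 e z : 𝕜) • e := by
          intro z
          have h := hperp0 (z - (inner 𝕜 e z : 𝕜) • e) (by
            rw [inner_sub_right, inner_smul_right, inner_self_eq_norm_sq_to_K, he1]
            push_cast
            ring)
          exact sub_eq_zero.mp h
        refine ⟨0, by simp, ?_⟩
        intro g hg1 x y hgx hgy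
        have hg0 : g ≠ 0 := by intro h; rw [h] at hg1; simp at hg1
        have hx0 : x = 0 := by
          have hx_span := hspan x
          rw [hx_span, inner_smul_right] at hgx
          rcases mul_eq_zero.mp hgx with h | h
          · rw [hx_span, h, zero_smul]
          · exfalso
            apply hg0
            have hge : (inner 𝕜 e g : 𝕜) = 0 := by
              rw [← inner_conj_symm, h, map_zero]
            rw [hspan g, hge, zero_smul]
        rw [hx0, hzero g hg0 y]
        simp
    -- main formula for unit vectors
    have hunit : ∀ g : H, ‖g‖ = 1 → ∀ f h : H,
        σ g f h = α * (inner 𝕜 h f : 𝕜) + (β - α) * (inner 𝕜 g f : 𝕜) * (inner 𝕜 h g : 𝕜) := by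
      intro g hg1 f h
      have hg0 : g ≠ 0 := by intro hh; rw [hh] at hg1; simp at hg1
      have hgg : (inner 𝕜 g g : 𝕜) = 1 := by
        rw [inner_self_eq_norm_sq_to_K, hg1]; norm_num
      set p : 𝕜 := (inner 𝕜 g f : 𝕜) with hp_def
      set q : 𝕜 := (inner 𝕜 g h : 𝕜) with hq_def
      have hgf' : (inner 𝕜 g (f - p • g) : 𝕜) = 0 := by
        rw [inner_sub_right, inner_smul_right, hgg, ← hp_def]; ring
      have hgh' : (inner 𝕜 g (h - q • g) : 𝕜) = 0 := by
        rw [inner_sub_right, inner_smul_right, hgg, ← hq_def]; ring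
      have hC1 : σ g (f - p • g) g = 0 := hfactC g hg0 _ hgf'
      have hC2 : σ g g (h - q • g) = 0 := by
        rw [csym g hg0, hfactC g hg0 _ hgh', map_zero]
      have hhg : (inner 𝕜 h g : 𝕜) = starRingEnd 𝕜 q := by
        rw [hq_def, inner_conj_symm]
      have hip : (inner 𝕜 (h - q • g) (f - p • g) : 𝕜)
          = (inner 𝕜 h f : 𝕜) - p * starRingEnd 𝕜 q := by
        simp only [inner_sub_left, inner_sub_right, inner_smul_left, inner_smul_right, hgg]
        rw [hhg, ← hp_def]
        ring
      have hperp' : σ g (f - p • g) (h - q • g)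
          = α * ((inner 𝕜 h f : 𝕜) - p * starRingEnd 𝕜 q) := by
        rw [hperpform g hg1 _ _ hgf' hgh', hip]
      obtain ⟨L1, L2, L3, L4, L5⟩ := hσ g hg0
      have hdecf : f = p • g + (f - p • g) := by abel
      have hdech : h = q • g + (h - q • g) := by abel
      conv_lhs => rw [hdecf, hdech]
      simp only [L1, L2, L3, L4]
      rw [hfactA g hg1, hC1, hC2, hperp', hhg]
      ring
    -- assemble the answer
    refine ⟨RCLike.re α, RCLike.re (β - α), ?_⟩
    have hαr : ((RCLike.re α : ℝ) : 𝕜) = α := RCLike.conj_eq_iff_re.mp hαc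
    have hβαr : ((RCLike.re (β - α) : ℝ) : 𝕜) = β - α :=
      RCLike.conj_eq_iff_re.mp (by rw [map_sub, hβc, hαc])
    intro g hg f h
    have hgn : ‖g‖ ≠ 0 := norm_ne_zero_iff.mpr hg
    have hgn' : ((‖g‖ : 𝕜)) ≠ 0 := by simp [hgn]
    set gh : H := ((‖g‖ : 𝕜))⁻¹ • g with hgh_def
    have hgh1 : ‖gh‖ = 1 := by
      rw [hgh_def, norm_smul, norm_inv, RCLike.norm_ofReal, abs_of_nonneg (norm_nonneg g)]
      field_simp
    have hgh0 : gh ≠ 0 := by intro hh; rw [hh] at hgh1; simp at hgh1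
    have hg_eq : g = ((‖g‖ : 𝕜)) • gh := by
      rw [hgh_def, smul_smul, mul_inv_cancel₀ hgn', one_smul]
    have h1 : σ g f h = (((‖g‖ : 𝕜)) ^ 2)⁻¹ * σ gh f h := by
      conv_lhs => rw [hg_eq]
      rw [hS1 _ hgn' gh hgh0 f h, RCLike.norm_ofReal, abs_of_nonneg (norm_nonneg g)]
    have h2 := hunit gh hgh1 f h
    have hinn1 : (inner 𝕜 gh f : 𝕜) = ((‖g‖ : 𝕜))⁻¹ * (inner 𝕜 g f : 𝕜) := by
      rw [hgh_def, inner_smul_left, map_inv₀, RCLike.conj_ofReal]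
    have hinn2 : (inner 𝕜 h gh : 𝕜) = ((‖g‖ : 𝕜))⁻¹ * (inner 𝕜 h g : 𝕜) := by
      rw [hgh_def, inner_smul_right]
    rw [h1, h2, hinn1, hinn2, ← hβαr, ← hαr]
    push_cast
    field_simp
  · -- Backward direction
    rintro ⟨a, b, hab⟩ c hc T g hg f h
    have hTg0 : T g ≠ 0 := by
      rw [← norm_ne_zero_iff, T.norm_map]
      exact norm_ne_zero_iff.mpr hg
    have hcTg : c • T g ≠ 0 := smul_ne_zero hc hTg0
    rw [hab _ hcTg, hab g hg]
    have hn : ‖c • T g‖ = ‖c‖ * ‖g‖ := by rw [norm_smul, T.norm_map]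
    have hi1 : (inner 𝕜 (c • T h) (c • T f) : 𝕜) = ((‖c‖ : 𝕜)) ^ 2 * (inner 𝕜 h f : 𝕜) := by
      rw [inner_smul_left, inner_smul_right, T.inner_map_map, ← mul_assoc, RCLike.conj_mul]
    have hi2 : (inner 𝕜 (c • T g) (c • T f) : 𝕜) = ((‖c‖ : 𝕜)) ^ 2 * (inner 𝕜 g f : 𝕜) := by
      rw [inner_smul_left, inner_smul_right, T.inner_map_map, ← mul_assoc, RCLike.conj_mul]
    have hi3 : (inner 𝕜 (c • T h) (c • T g) : 𝕜) = ((‖c‖ : 𝕜)) ^ 2 * (inner 𝕜 h g : 𝕜) := by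
      rw [inner_smul_left, inner_smul_right, T.inner_map_map, ← mul_assoc, RCLike.conj_mul]
    rw [hn, hi1, hi2, hi3]
    have hcn : ((‖c‖ : 𝕜)) ≠ 0 := by simp [norm_ne_zero_iff.mpr hc]
    have hgn : ((‖g‖ : 𝕜)) ≠ 0 := by simp [norm_ne_zero_iff.mpr hg]
    push_cast
    field_simp
end

section
/- Let G ⊆ H be an isometry-invariant open set and let ρ be an isometry-invariant Finsler metric on G which is not identically zero. Then every symmetry of ρ is injective: if T : H → H is a linear map with T(G) ⊆ G and ρ_{Tg}(Th) = ρ_g(h) for all g ∈ G and h ∈ H, then T is injective. -/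
open scoped InnerProductSpace

/-- A reflection variant of `reflection_sub` valid over `RCLike` fields, given the
inner product of the two vectors is symmetric. -/
lemma my_reflection_sub {𝕜 H : Type*} [RCLike 𝕜] [NormedAddCommGroup H]
    [InnerProductSpace 𝕜 H] {v w : H} (h : ‖v‖ = ‖w‖)
    (hsym : (⟪v, w⟫_𝕜) = ⟪w, v⟫_𝕜) : Submodule.reflection (𝕜 ∙ (v - w))ᗮ v = w := by
  set R : H ≃ₗᵢ[𝕜] H := Submodule.reflection (𝕜 ∙ (v - w))ᗮ
  suffices R v + R v = w + w by
    apply smul_right_injective H (by norm_num : (2 : 𝕜) ≠ 0)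
    simpa [two_smul] using this
  have h₁ : R (v - w) = -(v - w) := Submodule.reflection_orthogonalComplement_singleton_eq_neg (v - w)
  have h₂ : R (v + w) = v + w := by
    apply Submodule.reflection_mem_subspace_eq_self
    rw [Submodule.mem_orthogonal_singleton_iff_inner_left]
    rw [inner_sub_right, inner_add_left, inner_add_left]
    have hv : (⟪v, v⟫_𝕜) = ⟪w, w⟫_𝕜 := by
      rw [inner_self_eq_norm_sq_to_K, inner_self_eq_norm_sq_to_K, h]
    rw [hv, hsym]; ring
  convert congr_arg₂ (· + ·) h₂ h₁ using 1
  · rw [← map_add, ← map_add]; exact congrArg R (by abel)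
  · abel

/-- Any two vectors of equal norm are related by a linear isometry. -/
lemma exists_isometry_map_eq {𝕜 H : Type*} [RCLike 𝕜] [NormedAddCommGroup H]
    [InnerProductSpace 𝕜 H] {v w : H} (h : ‖v‖ = ‖w‖) :
    ∃ S : H →ₗᵢ[𝕜] H, S v = w := by
  set a : 𝕜 := ⟪v, w⟫_𝕜 with ha
  set θ : 𝕜 := if a = 0 then 1 else a / (‖a‖ : 𝕜) with hθdef
  have hθ : ‖θ‖ = 1 := by
    by_cases h0 : a = 0
    · simp [hθdef, h0]
    · simp [hθdef, h0, norm_div, RCLike.norm_ofReal, abs_of_nonneg (norm_nonneg a),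
        div_self (norm_ne_zero_iff.mpr h0)]
  set Sθ : H →ₗᵢ[𝕜] H := ⟨θ • LinearMap.id, fun x => by
    simp [norm_smul, hθ]⟩ with hSθ
  have hSθv : Sθ v = θ • v := rfl
  have hnorm : ‖θ • v‖ = ‖w‖ := by rw [norm_smul, hθ, one_mul, h]
  have hsym : (⟪θ • v, w⟫_𝕜) = ⟪w, θ • v⟫_𝕜 := by
    rw [inner_smul_left, inner_smul_right, ← ha, ← inner_conj_symm w v, ← ha]
    by_cases h0 : a = 0
    · simp [h0]
    · rw [hθdef, if_neg h0]
      rw [map_div₀, RCLike.conj_ofReal]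
      rw [div_mul_eq_mul_div, div_mul_eq_mul_div, RCLike.conj_mul, mul_comm a _, RCLike.conj_mul]
  refine ⟨(Submodule.reflection (𝕜 ∙ (θ • v - w))ᗮ).toLinearIsometry.comp Sθ, ?_⟩
  exact my_reflection_sub hnorm hsym


/-- if `ρ` is a non-zero isometry-invariant Finsler metric on an
isometry-invariant open set `G`, then every symmetry of `ρ` is injective. -/
theorem stmt12 {𝕜 H : Type*} [RCLike 𝕜] [NormedAddCommGroup H] [InnerProductSpace 𝕜 H]
    (G : Set H) (hG : IsInvariantOpen G)
    (ρ : H → H → ℝ)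
    (hFinsler : ∀ g ∈ G, ∀ h : H, ∀ r : 𝕜, ρ g (r • h) = ‖r‖ * ρ g h)
    (hinv : ∀ S : H →ₗᵢ[𝕜] H, ∀ g ∈ G, ∀ h : H, ρ (S g) (S h) = ρ g h)
    (hne : ∃ g ∈ G, ∃ h : H, ρ g h ≠ 0)
    (T : H →ₗ[𝕜] H) (hTG : T '' G ⊆ G)
    (hT : ∀ g ∈ G, ∀ h : H, ρ (T g) (T h) = ρ g h) :
    Function.Injective T := by
  rw [← LinearMap.ker_eq_bot, Submodule.eq_bot_iff]
  intro x hx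
  by_contra hx0
  rw [LinearMap.mem_ker] at hx
  obtain ⟨g, hg, h, hρ⟩ := hne
  -- ρ g 0 = 0, so h ≠ 0
  have hzero : ∀ g' ∈ G, ρ g' 0 = 0 := by
    intro g' hg'
    have := hFinsler g' hg' 0 (0 : 𝕜)
    simpa using this
  have hh0 : h ≠ 0 := by
    rintro rfl
    exact hρ (hzero g hg)
  -- scale x to have the norm of h
  set c : 𝕜 := ((‖h‖ / ‖x‖ : ℝ) : 𝕜) with hc
  have hxn : ‖x‖ ≠ 0 := norm_ne_zero_iff.mpr hx0
  have hcn : ‖c‖ = ‖h‖ / ‖x‖ := by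
    rw [hc, RCLike.norm_ofReal, abs_of_nonneg (by positivity)]
  have hc0 : c ≠ 0 := by
    intro h0
    rw [h0] at hcn
    simp only [norm_zero] at hcn
    exact hh0 (norm_eq_zero.mp (by field_simp at hcn; linarith [hcn.symm]))
  have hnorm : ‖h‖ = ‖c • x‖ := by
    rw [norm_smul, hcn, div_mul_cancel₀ _ hxn]
  obtain ⟨S, hS⟩ := exists_isometry_map_eq (𝕜 := 𝕜) hnorm
  -- S g ∈ G since G is norm-determined
  obtain ⟨R, -, hGR⟩ := hG
  have hSg : S g ∈ G := by
    rw [hGR] at hg ⊢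
    simpa [S.norm_map] using hg
  -- ρ (S g) x ≠ 0
  have h1 : ρ (S g) (c • x) = ρ g h := by rw [← hS]; exact hinv S g hg h
  have h2 : ρ (S g) (c • x) = ‖c‖ * ρ (S g) x := hFinsler (S g) hSg x c
  have h3 : ρ (S g) x ≠ 0 := by
    intro h0
    rw [h2, h0, mul_zero] at h1
    exact hρ h1.symm
  -- but ρ (S g) x = ρ (T (S g)) (T x) = ρ (T (S g)) 0 = 0
  have h4 : ρ (T (S g)) (T x) = ρ (S g) x := hT (S g) hSg x
  rw [hx, hzero (T (S g)) (hTG ⟨S g, hSg, rfl⟩)] at h4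
  exact h3 h4.symm
end

section
/- Let N be a seminorm on ℝ² satisfying N(−p, q) = N(p, q) for all p, q ∈ ℝ. Then at least one of the following holds: (1) N is a norm (N(p,q) = 0 implies (p,q) = (0,0)); (2) there exists a ≥ 0 such that N(p,q) = a·|p| for all p, q ∈ ℝ; (3) there exists b ≥ 0 such that N(p,q) = b·|q| for all p, q ∈ ℝ. -/
/-- Remark `dg`: if `N` is a seminorm on `ℝ²` with `N(−p,q) = N(p,q)`,
then `N` is a norm, or `N(p,q) = a|p|` for some `a ≥ 0`, or `N(p,q) = b|q|` for some
`b ≥ 0`. -/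
theorem stmt19 (N : Seminorm ℝ (ℝ × ℝ))
    (hsym : ∀ p q : ℝ, N (-p, q) = N (p, q)) :
    (∀ p q : ℝ, N (p, q) = 0 → p = 0 ∧ q = 0) ∨
      (∃ a : ℝ, 0 ≤ a ∧ ∀ p q : ℝ, N (p, q) = a * |p|) ∨
      (∃ b : ℝ, 0 ≤ b ∧ ∀ p q : ℝ, N (p, q) = b * |q|) := by
  by_cases hnorm : ∀ p q : ℝ, N (p, q) = 0 → p = 0 ∧ q = 0
  · exact Or.inl hnorm
  push_neg at hnorm
  obtain ⟨p, q, h0, hne⟩ := hnorm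
  -- scaling lemma
  have hscale : ∀ x : ℝ × ℝ, ∀ c : ℝ, N x = 0 → N (c • x) = 0 := by
    intro x c hx
    rw [map_smul_eq_mul, hx, mul_zero]
  have hx0 : ∀ p' : ℝ, N (1, 0) = 0 → N (p', 0) = 0 := by
    intro p' h1
    have := hscale (1, 0) p' h1
    simpa using this
  have hy0 : ∀ q' : ℝ, N (0, 1) = 0 → N (0, q') = 0 := by
    intro q' h1
    have := hscale (0, 1) q' h1
    simpa using this
  have hneg : N (p, -q) = 0 := by
    have h1 : N (-p, -q) = N (p, -q) := hsym p (-q)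
    have h2 : N (-p, -q) = N (p, q) := by
      have : ((-p, -q) : ℝ × ℝ) = -(p, q) := by simp [Prod.ext_iff]
      rw [this, map_neg_eq_map]
    rw [← h1, h2, h0]
  have hnegp : N (-p, q) = 0 := by rw [hsym, h0]
  by_cases hp : p = 0
  · -- then q ≠ 0, N(0,q)=0, so N(0,1)=0
    have hq : q ≠ 0 := hne hp
    have h0q : N (0, q) = 0 := hp ▸ h0
    have h01 : N (0, 1) = 0 := by
      have := hscale (0, q) q⁻¹ h0q
      simpa [hq, Prod.smul_mk, inv_mul_cancel₀] using this
    refine Or.inr (Or.inl ⟨N (1, 0), apply_nonneg N _, fun p' q' => ?_⟩)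
    have hque : N (0, q') = 0 := hy0 q' h01
    have h1 : N (p', q') ≤ N (p', 0) := by
      have := map_add_le_add N (p', 0) (0, q')
      simpa [hque] using this
    have h2 : N (p', 0) ≤ N (p', q') := by
      have := map_add_le_add N (p', q') (0, -q')
      have hnq : N ((0 : ℝ), -q') = 0 := hy0 (-q') h01
      simpa [hnq] using this
    have heq : N (p', q') = N (p', 0) := le_antisymm h1 h2
    rw [heq]
    have : ((p', 0) : ℝ × ℝ) = p' • ((1 : ℝ), (0 : ℝ)) := by simp
    rw [this, map_smul_eq_mul, Real.norm_eq_abs, mul_comm]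
  · -- p ≠ 0 : (2p, 0) = (p,q)+(p,-q) has N = 0, so N(1,0)=0
    have h2p : N (2 * p, 0) = 0 := by
      have hle := map_add_le_add N (p, q) (p, -q)
      have hsum : ((p, q) : ℝ × ℝ) + (p, -q) = (2 * p, 0) := by
        simp [Prod.ext_iff]; ring
      rw [hsum, h0, hneg, add_zero] at hle
      exact le_antisymm hle (apply_nonneg N _)
    have h10 : N (1, 0) = 0 := by
      have h := hscale (2 * p, 0) (2 * p)⁻¹ h2p
      have h2p' : (2 * p) ≠ 0 := mul_ne_zero two_ne_zero hp
      have heq : ((2 * p)⁻¹ • ((2 * p, 0) : ℝ × ℝ)) = (1, 0) := by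
        rw [Prod.smul_mk, smul_eq_mul, smul_eq_mul, inv_mul_cancel₀ h2p', mul_zero]
      rwa [heq] at h
    refine Or.inr (Or.inr ⟨N (0, 1), apply_nonneg N _, fun p' q' => ?_⟩)
    have hpe : N (p', 0) = 0 := hx0 p' h10
    have h1 : N (p', q') ≤ N (0, q') := by
      have := map_add_le_add N (p', 0) (0, q')
      simpa [hpe] using this
    have h2 : N (0, q') ≤ N (p', q') := by
      have := map_add_le_add N (p', q') (-p', 0)
      have hnp : N ((-p' : ℝ), (0 : ℝ)) = 0 := hx0 (-p') h10
      simpa [hnp] using this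
    have heq : N (p', q') = N (0, q') := le_antisymm h1 h2
    rw [heq]
    have : ((0, q') : ℝ × ℝ) = q' • ((0 : ℝ), (1 : ℝ)) := by simp
    rw [this, map_smul_eq_mul, Real.norm_eq_abs, mul_comm]
end
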